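/- arXiv:1612.08442 — 6 statements merged into one kernel-verified Lean document; each statement's English description precedes it below -/
import Mathlib

section
/- For all t in [-1,1], arccos(t) = π/2 - Σ_{n=0}^∞ (binom(2n,n) / (4^n (2n+1))) t^{2n+1}, i.e. the Maclaurin series of arccos converges on the closed interval and all coefficients of the power series A(t) = π/2 - arccos(t) are positive. -/
open Real Filter Topology

noncomputable def cc (n : ℕ) : ℝ := (Nat.choose (2*n) n : ℝ) / 4^n

lemma cc_pos (n : ℕ) : 0 < cc n := by
  apply div_pos _ (by positivity)
  exact_mod_cast Nat.choose_pos (by omega)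

lemma cc_le_one (n : ℕ) : cc n ≤ 1 := by
  rw [cc, div_le_one (by positivity)]
  have h1 : Nat.choose (2*n) n ≤ Nat.choose (2*n+1) n := Nat.choose_le_choose n (by omega)
  exact_mod_cast h1.trans (Nat.choose_middle_le_pow n)

lemma cc_rec (n : ℕ) : ((n:ℝ)+1) * cc (n+1) = ((2*n+1)/2) * cc n := by
  have h := Nat.succ_mul_centralBinom_succ n
  simp only [Nat.centralBinom] at h
  have h' : ((n:ℝ)+1) * (Nat.choose (2*(n+1)) (n+1)) = 2*(2*n+1) * (Nat.choose (2*n) n) := by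
    exact_mod_cast congrArg (Nat.cast : ℕ → ℝ) h
  rw [cc, cc, pow_succ]
  field_simp
  rw [h']; ring

lemma summable_mul_geom {r : ℝ} (h0 : 0 ≤ r) (h1 : r < 1) :
    Summable (fun n : ℕ => (n:ℝ) * r^(n-1)) := by
  rw [← summable_nat_add_iff 1]
  simp only [Nat.add_sub_cancel]
  have h2 : Summable (fun n : ℕ => (n:ℝ) * r^n) := by
    simpa using summable_pow_mul_geometric_of_norm_lt_one 1 (by rwa [Real.norm_eq_abs, abs_of_nonneg h0])
  have h3 : Summable (fun n : ℕ => r^n) := summable_geometric_of_lt_one h0 h1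
  simpa [add_mul] using h2.add h3

lemma summable_lin_geom {r : ℝ} (h0 : 0 ≤ r) (h1 : r < 1) :
    Summable (fun n : ℕ => (2*(n:ℝ)+2) * r^n) := by
  have h2 : Summable (fun n : ℕ => (n:ℝ) * r^n) := by
    simpa using summable_pow_mul_geometric_of_norm_lt_one 1 (by rwa [Real.norm_eq_abs, abs_of_nonneg h0])
  have h3 : Summable (fun n : ℕ => r^n) := summable_geometric_of_lt_one h0 h1
  have := (h2.mul_left 2).add (h3.mul_left 2)
  simpa [add_mul, mul_assoc] using this

lemma summable_of_lin_bound {y : ℝ} (hy : |y| < 1) {f : ℕ → ℝ}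
    (hf : ∀ n : ℕ, ‖f n‖ ≤ (2*(n:ℝ)+2) * |y|^n) : Summable f :=
  Summable.of_norm_bounded (summable_lin_geom (abs_nonneg y) hy) hf

lemma cc_abs (n : ℕ) : |cc n| ≤ 1 := by
  rw [abs_of_pos (cc_pos n)]; exact cc_le_one n

lemma S_summable {y : ℝ} (hy : |y| < 1) : Summable (fun n => cc n * y^n) := by
  apply summable_of_lin_bound hy
  intro n
  rw [norm_mul, Real.norm_eq_abs, Real.norm_eq_abs, abs_pow]
  calc |cc n| * |y|^n ≤ 1 * |y|^n := by
        apply mul_le_mul_of_nonneg_right (cc_abs n) (by positivity)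
    _ ≤ (2*(n:ℝ)+2) * |y|^n := by
        apply mul_le_mul_of_nonneg_right (by linarith [Nat.cast_nonneg (α:=ℝ) n]) (by positivity)

noncomputable def Sf (y : ℝ) : ℝ := ∑' n, cc n * y^n

lemma Sderiv_summable {y : ℝ} (hy : |y| < 1) :
    Summable (fun n => cc n * ((n:ℝ) * y^(n-1))) := by
  apply Summable.of_norm_bounded (summable_mul_geom (abs_nonneg y) hy)
  intro n
  rw [norm_mul, norm_mul, Real.norm_eq_abs, Real.norm_eq_abs, Real.norm_eq_abs, abs_pow,
    Nat.abs_cast]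
  calc |cc n| * ((n:ℝ) * |y|^(n-1)) ≤ 1 * ((n:ℝ)*|y|^(n-1)) := by
        apply mul_le_mul_of_nonneg_right (cc_abs n)
          (mul_nonneg (Nat.cast_nonneg n) (pow_nonneg (abs_nonneg y) _))
    _ = (n:ℝ) * |y|^(n-1) := one_mul _

lemma S_hasDerivAt {y : ℝ} (hy : |y| < 1) :
    HasDerivAt Sf (∑' n, cc n * ((n:ℝ) * y^(n-1))) y := by
  set r : ℝ := (1 + |y|)/2 with hr
  have hr0 : 0 ≤ r := by positivity
  have hyr : |y| < r := by rw [hr]; linarith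
  have hr1 : r < 1 := by rw [hr]; linarith
  have key := hasDerivAt_tsum_of_isPreconnected
    (summable_mul_geom hr0 hr1) isOpen_Ioo (convex_Ioo (-r) r).isPreconnected
    (g := fun n z => cc n * z^n) (g' := fun n z => cc n * ((n:ℝ) * z^(n-1)))
    (fun n z _ => (hasDerivAt_pow n z).const_mul (cc n))
    (fun n z hz => ?_) (y₀ := 0) ?_ ?_ (y := y) ?_
  · exact key
  · -- bound
    rw [norm_mul, norm_mul, Real.norm_eq_abs, Real.norm_eq_abs, Real.norm_eq_abs, abs_pow,
      Nat.abs_cast]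
    have hz' : |z| ≤ r := by
      rw [abs_le]; exact ⟨hz.1.le, hz.2.le⟩
    calc |cc n| * ((n:ℝ) * |z|^(n-1)) ≤ 1 * ((n:ℝ) * r^(n-1)) := by
          apply mul_le_mul (cc_abs n)
            (mul_le_mul_of_nonneg_left (pow_le_pow_left₀ (abs_nonneg z) hz' _) (Nat.cast_nonneg n))
            (mul_nonneg (Nat.cast_nonneg n) (pow_nonneg (abs_nonneg z) _)) zero_le_one
      _ = (n:ℝ) * r^(n-1) := one_mul _
  · constructor <;> [linarith [abs_nonneg y]; linarith [abs_nonneg y]]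
  · exact S_summable (by simpa using (by linarith [abs_nonneg y] : (0:ℝ) < 1))
  · exact ⟨by linarith [neg_abs_le y], by linarith [le_abs_self y]⟩

lemma bnd_helper {a y : ℝ} {n : ℕ} (ha : 0 ≤ a) (hale : a ≤ 2*(n:ℝ)+2) :
    ‖a * cc n * y^n‖ ≤ (2*(n:ℝ)+2) * |y|^n := by
  rw [norm_mul, norm_mul, Real.norm_eq_abs, Real.norm_eq_abs, Real.norm_eq_abs, abs_pow,
    abs_of_nonneg ha]
  have h := cc_abs n
  have hyn : (0:ℝ) ≤ |y|^n := by positivity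
  have h2 : a * |cc n| ≤ 2*(n:ℝ)+2 := by nlinarith [abs_nonneg (cc n)]
  calc a * |cc n| * |y|^n ≤ (2*(n:ℝ)+2) * |y|^n := mul_le_mul_of_nonneg_right h2 hyn

lemma S_deriv_eq {y : ℝ} (hy : |y| < 1) :
    2*(1-y) * (∑' n, cc n * ((n:ℝ) * y^(n-1))) = Sf y := by
  have hs1 : Summable (fun n : ℕ => (2*(n:ℝ)+1) * cc n * y^n) :=
    summable_of_lin_bound hy (fun n => bnd_helper (by positivity) (by linarith))
  have hs2 : Summable (fun n : ℕ => 2*(n:ℝ) * cc n * y^n) :=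
    summable_of_lin_bound hy (fun n => bnd_helper (by positivity) (by linarith))
  set L1 := ∑' n : ℕ, (2*(n:ℝ)+1) * cc n * y^n with hL1
  set L2 := ∑' n : ℕ, 2*(n:ℝ) * cc n * y^n with hL2
  have hdiff : HasSum (fun n : ℕ => cc n * y^n) (L1 - L2) := by
    have := hs1.hasSum.sub hs2.hasSum
    convert this using 2
    · rfl
    rename_i n
    ring
  have hSf : Sf y = L1 - L2 := by rw [Sf]; exact hdiff.tsum_eq
  -- shifted identity for L2
  have hshift2 : HasSum (fun n : ℕ => (2*(n:ℝ)+1) * cc n * y^(n+1)) L2 := by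
    have h1 : HasSum (fun n : ℕ => 2*(((n+1:ℕ)):ℝ) * cc (n+1) * y^(n+1)) L2 := by
      apply (hasSum_nat_add_iff (f := fun n : ℕ => 2*((n:ℕ):ℝ) * cc n * y^n) 1).2
      simpa using hs2.hasSum
    convert h1 using 2 with n
    have hrec := cc_rec n
    push_cast
    linear_combination (-2*y^(n+1)) * hrec
  -- main sum identity
  have hmain : HasSum (fun n : ℕ => 2*(1-y) * (cc n * ((n:ℝ) * y^(n-1)))) (L1 - L2) := by
    have hF : HasSum (fun n : ℕ =>
        2*(1-y) * (cc (n+1) * (((n+1:ℕ):ℝ) * y^((n+1)-1)))) (L1 - L2) := by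
      have := hs1.hasSum.sub hshift2
      convert this using 2
      · rfl
      rename_i n
      have hrec := cc_rec n
      simp only [Nat.add_sub_cancel]
      push_cast
      linear_combination (2*(1-y)*y^n) * hrec
    have := (hasSum_nat_add_iff
      (f := fun n : ℕ => 2*(1-y) * (cc n * ((n:ℝ) * y^(n-1)))) 1).1 hF
    simpa using this
  have hD := (Sderiv_summable hy).hasSum.mul_left (2*(1-y))
  rw [hmain.unique hD] at hSf
  exact hSf.symm

lemma eq_at_zero_of_deriv_zero {f : ℝ → ℝ}
    (hf : ∀ y ∈ Set.Ioo (-1:ℝ) 1, HasDerivAt f 0 y) {u : ℝ} (hu : u ∈ Set.Ioo (-1:ℝ) 1) :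
    f u = f 0 := by
  rcases lt_trichotomy u 0 with h | h | h
  · have hsub : Set.Icc u 0 ⊆ Set.Ioo (-1:ℝ) 1 := fun x hx =>
      ⟨lt_of_lt_of_le hu.1 hx.1, lt_of_le_of_lt hx.2 one_pos⟩
    have := constant_of_derivWithin_zero (f := f) (a := u) (b := 0)
      (fun x hx => ((hf x (hsub hx)).differentiableAt).differentiableWithinAt)
      (fun x hx => (((hf x (hsub (Set.Ico_subset_Icc_self hx))).hasDerivWithinAt).derivWithin
        ((uniqueDiffOn_Icc h) x (Set.Ico_subset_Icc_self hx))))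
    exact (this 0 ⟨h.le, le_refl 0⟩).symm
  · rw [h]
  · have hsub : Set.Icc 0 u ⊆ Set.Ioo (-1:ℝ) 1 := fun x hx =>
      ⟨lt_of_lt_of_le (by norm_num) hx.1, lt_of_le_of_lt hx.2 hu.2⟩
    have := constant_of_derivWithin_zero (f := f) (a := 0) (b := u)
      (fun x hx => ((hf x (hsub hx)).differentiableAt).differentiableWithinAt)
      (fun x hx => (((hf x (hsub (Set.Ico_subset_Icc_self hx))).hasDerivWithinAt).derivWithin
        ((uniqueDiffOn_Icc h) x (Set.Ico_subset_Icc_self hx))))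
    exact this u ⟨h.le, le_refl u⟩

lemma Sf_eq {u : ℝ} (hu : |u| < 1) : Sf u = 1 / Real.sqrt (1 - u) := by
  have key : ∀ y ∈ Set.Ioo (-1:ℝ) 1, HasDerivAt (fun z => Sf z * Real.sqrt (1 - z)) 0 y := by
    intro y hy
    have hy' : |y| < 1 := abs_lt.2 ⟨hy.1, hy.2⟩
    have h1y : (0:ℝ) < 1 - y := by linarith [hy.2]
    have hs : HasDerivAt (fun z : ℝ => Real.sqrt (1 - z)) (-(1 / (2 * Real.sqrt (1 - y)))) y := by
      have h2 : HasDerivAt (fun z : ℝ => 1 - z) (-1) y := by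
        simpa using (hasDerivAt_id y).const_sub 1
      have := (Real.hasDerivAt_sqrt (ne_of_gt h1y)).comp y h2
      refine this.congr_deriv ?_
      ring
    have hS := S_hasDerivAt hy'
    have := hS.mul hs
    refine this.congr_deriv ?_
    symm
    have hsq : Real.sqrt (1-y) * Real.sqrt (1-y) = 1 - y :=
      Real.mul_self_sqrt h1y.le
    have hsqpos : 0 < Real.sqrt (1-y) := Real.sqrt_pos.2 h1y
    have hkey := S_deriv_eq hy'
    set D := ∑' n, cc n * ((n:ℝ) * y^(n-1))
    -- 0 = D * sqrt(1-y) + Sf y * (-(1/(2 sqrt(1-y))))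
    have hSfval : Sf y = 2*(1-y) * D := hkey.symm
    rw [hSfval]
    field_simp
    linear_combination (-D) * hsq
  have := eq_at_zero_of_deriv_zero key (abs_lt.1 hu)
  have hS0 : Sf 0 = 1 := by
    rw [Sf]
    rw [tsum_eq_single 0 (by intro n hn; simp [zero_pow hn])]
    simp [cc]
  rw [hS0] at this
  simp at this
  have h1u : (0:ℝ) < 1 - u := by linarith [(abs_lt.1 hu).2]
  have hsqpos : 0 < Real.sqrt (1-u) := Real.sqrt_pos.2 h1u
  field_simp
  linarith [this]

noncomputable def Af (t : ℝ) : ℝ := ∑' n, cc n / (2*(n:ℝ)+1) * t^(2*n+1)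

lemma A_summable {y : ℝ} (hy : |y| < 1) :
    Summable (fun n : ℕ => cc n / (2*(n:ℝ)+1) * y^(2*n+1)) := by
  apply Summable.of_norm_bounded (summable_geometric_of_lt_one (abs_nonneg y) hy)
  intro n
  rw [norm_mul, norm_div, Real.norm_eq_abs, Real.norm_eq_abs, Real.norm_eq_abs, abs_pow]
  have h1 : |cc n| / |2*(n:ℝ)+1| ≤ 1 := by
    rw [div_le_one (by positivity : (0:ℝ) < |2*(n:ℝ)+1|)]
    calc |cc n| ≤ 1 := cc_abs n
      _ ≤ |2*(n:ℝ)+1| := by rw [abs_of_pos (by positivity)]; linarith [Nat.cast_nonneg (α:=ℝ) n]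
  have h2 : |y|^(2*n+1) ≤ |y|^n :=
    pow_le_pow_of_le_one (abs_nonneg y) hy.le (by omega)
  calc |cc n| / |2*(n:ℝ)+1| * |y|^(2*n+1) ≤ 1 * |y|^n :=
      mul_le_mul h1 h2 (by positivity) zero_le_one
    _ = |y|^n := one_mul _

lemma A_hasDerivAt {y : ℝ} (hy : |y| < 1) :
    HasDerivAt Af (∑' n, cc n * y^(2*n)) y := by
  set r : ℝ := (1 + |y|)/2 with hr
  have hr0 : 0 ≤ r := by positivity
  have hyr : |y| < r := by rw [hr]; linarith
  have hr1 : r < 1 := by rw [hr]; linarith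
  have hr21 : r^2 < 1 := by nlinarith
  have key := hasDerivAt_tsum_of_isPreconnected
    (summable_geometric_of_lt_one (by positivity : (0:ℝ) ≤ r^2) hr21)
    isOpen_Ioo (convex_Ioo (-r) r).isPreconnected
    (g := fun n z => cc n / (2*(n:ℝ)+1) * z^(2*n+1)) (g' := fun n z => cc n * z^(2*n))
    (fun n z _ => ?_) (fun n z hz => ?_) (y₀ := 0) ?_ ?_ (y := y) ?_
  · exact key
  · -- HasDerivAt
    have h := (hasDerivAt_pow (2*n+1) z).const_mul (cc n / (2*(n:ℝ)+1))
    refine h.congr_deriv ?_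
    have hne : (2*(n:ℝ)+1) ≠ 0 := by positivity
    push_cast
    field_simp
  · -- bound
    have hz' : |z| ≤ r := by rw [abs_le]; exact ⟨hz.1.le, hz.2.le⟩
    rw [norm_mul, Real.norm_eq_abs, Real.norm_eq_abs, abs_pow]
    calc |cc n| * |z|^(2*n) ≤ 1 * |z|^(2*n) :=
        mul_le_mul_of_nonneg_right (cc_abs n) (by positivity)
      _ = (|z|^2)^n := by rw [one_mul, ← pow_mul]
      _ ≤ (r^2)^n := by
          apply pow_le_pow_left₀ (by positivity)
          nlinarith [abs_nonneg z]
  · exact ⟨by linarith [abs_nonneg y], by linarith [abs_nonneg y]⟩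
  · exact A_summable (by simp)
  · exact ⟨by linarith [neg_abs_le y], by linarith [le_abs_self y]⟩

lemma Af_eq_arcsin {t : ℝ} (ht : |t| < 1) : Af t = Real.arcsin t := by
  have key : ∀ y ∈ Set.Ioo (-1:ℝ) 1, HasDerivAt (fun z => Af z - Real.arcsin z) 0 y := by
    intro y hy
    have hy' : |y| < 1 := abs_lt.2 ⟨hy.1, hy.2⟩
    have hy2 : |y^2| < 1 := by
      rw [abs_pow]; nlinarith [abs_nonneg y]
    have hSsum : HasSum (fun n => cc n * y^(2*n)) (1 / Real.sqrt (1 - y^2)) := by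
      have h1 : HasSum (fun n => cc n * (y^2)^n) (Sf (y^2)) := (S_summable hy2).hasSum
      rw [Sf_eq hy2] at h1
      convert h1 using 2 with n
      rw [pow_mul]
    have hA := A_hasDerivAt hy'
    rw [hSsum.tsum_eq] at hA
    have harc := Real.hasDerivAt_arcsin (x := y)
      (by intro h; rw [h] at hy'; norm_num at hy')
      (by intro h; rw [h] at hy'; norm_num at hy')
    have := hA.sub harc
    exact this.congr_deriv (by simp)
  have := eq_at_zero_of_deriv_zero key (abs_lt.1 ht)
  have hA0 : Af 0 = 0 := by
    rw [Af]
    have : ∀ n : ℕ, cc n / (2*(n:ℝ)+1) * (0:ℝ)^(2*n+1) = 0 := by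
      intro n; simp [zero_pow (Nat.succ_ne_zero (2*n))]
    simp [this]
  rw [hA0, Real.arcsin_zero, sub_zero] at this
  linarith [this]

lemma open_hasSum {t : ℝ} (ht : |t| < 1) :
    HasSum (fun n : ℕ => cc n / (2*(n:ℝ)+1) * t^(2*n+1)) (Real.arcsin t) := by
  have h : HasSum (fun n : ℕ => cc n / (2*(n:ℝ)+1) * t^(2*n+1)) (Af t) :=
    (A_summable ht).hasSum
  rwa [Af_eq_arcsin ht] at h

lemma a_nonneg (n : ℕ) : 0 ≤ cc n / (2*(n:ℝ)+1) :=
  le_of_lt (div_pos (cc_pos n) (by positivity))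

lemma endpoint_one : HasSum (fun n : ℕ => cc n / (2*(n:ℝ)+1)) (Real.pi / 2) := by
  have hbnd : ∀ N : ℕ, ∑ n ∈ Finset.range N, cc n / (2*(n:ℝ)+1) ≤ Real.pi / 2 := by
    intro N
    have htend : Filter.Tendsto
        (fun x : ℝ => ∑ n ∈ Finset.range N, cc n / (2*(n:ℝ)+1) * x^(2*n+1))
        (nhdsWithin 1 (Set.Iio 1)) (nhds (∑ n ∈ Finset.range N, cc n / (2*(n:ℝ)+1))) := by
      have hc : Continuous (fun x : ℝ => ∑ n ∈ Finset.range N, cc n / (2*(n:ℝ)+1) * x^(2*n+1)) := by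
        continuity
      have := (hc.tendsto 1).mono_left (nhdsWithin_le_nhds (s := Set.Iio (1:ℝ)))
      simpa using this
    apply le_of_tendsto htend
    filter_upwards [Ioo_mem_nhdsLT_of_mem (show (1:ℝ) ∈ Set.Ioc (0:ℝ) 1 by norm_num)]
    intro x hx
    have hx1 : |x| < 1 := abs_lt.2 ⟨by linarith [hx.1], hx.2⟩
    calc ∑ n ∈ Finset.range N, cc n / (2*(n:ℝ)+1) * x^(2*n+1)
        ≤ Real.arcsin x := by
          apply sum_le_hasSum _ _ (open_hasSum hx1)
          intro n _
          have : (0:ℝ) ≤ x^(2*n+1) := pow_nonneg hx.1.le _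
          exact mul_nonneg (a_nonneg n) this
      _ ≤ Real.pi / 2 := Real.arcsin_le_pi_div_two x
  have hsummable : Summable (fun n : ℕ => cc n / (2*(n:ℝ)+1)) :=
    summable_of_sum_range_le a_nonneg hbnd
  have hL_le : ∑' n : ℕ, cc n / (2*(n:ℝ)+1) ≤ Real.pi / 2 :=
    Real.tsum_le_of_sum_range_le a_nonneg hbnd
  have hL_ge : Real.pi / 2 ≤ ∑' n : ℕ, cc n / (2*(n:ℝ)+1) := by
    have htend : Filter.Tendsto Real.arcsin (nhdsWithin 1 (Set.Iio 1)) (nhds (Real.pi/2)) := by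
      have := (Real.continuous_arcsin.tendsto 1).mono_left
        (nhdsWithin_le_nhds (s := Set.Iio (1:ℝ)))
      rwa [Real.arcsin_one] at this
    apply le_of_tendsto htend
    filter_upwards [Ioo_mem_nhdsLT_of_mem (show (1:ℝ) ∈ Set.Ioc (0:ℝ) 1 by norm_num)]
    intro x hx
    have hx1 : |x| < 1 := abs_lt.2 ⟨by linarith [hx.1], hx.2⟩
    rw [← (open_hasSum hx1).tsum_eq]
    apply Summable.tsum_le_tsum _ (A_summable hx1) hsummable
    intro n
    have hpow : x^(2*n+1) ≤ 1 := pow_le_one₀ hx.1.le hx.2.le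
    calc cc n / (2*(n:ℝ)+1) * x^(2*n+1) ≤ cc n / (2*(n:ℝ)+1) * 1 :=
        mul_le_mul_of_nonneg_left hpow (a_nonneg n)
      _ = cc n / (2*(n:ℝ)+1) := mul_one _
  have : ∑' n : ℕ, cc n / (2*(n:ℝ)+1) = Real.pi / 2 := le_antisymm hL_le hL_ge
  rw [← this]
  exact hsummable.hasSum

/-- For all `t ∈ [-1,1]`,
`arccos t = π/2 - ∑_{n=0}^∞ (binom(2n,n)/(4^n (2n+1))) t^(2n+1)`, and all coefficients of the
power series `A(t) = π/2 - arccos t` are positive. -/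
theorem arccos_maclaurin :
    (∀ n : ℕ, 0 < ((Nat.choose (2*n) n : ℝ) / (4^n * (2*n+1)))) ∧
    ∀ t ∈ Set.Icc (-1 : ℝ) 1,
      HasSum (fun n : ℕ => ((Nat.choose (2*n) n : ℝ) / (4^n * (2*n+1))) * t^(2*n+1))
        (Real.pi / 2 - Real.arccos t) := by
  constructor
  · intro n
    apply div_pos _ (by positivity)
    exact_mod_cast Nat.choose_pos (by omega)
  · intro t ht
    have htarget : Real.pi/2 - Real.arccos t = Real.arcsin t := by
      rw [Real.arccos_eq_pi_div_two_sub_arcsin]; ring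
    have hfun : (fun n : ℕ => ((Nat.choose (2*n) n : ℝ) / (4^n * (2*n+1))) * t^(2*n+1))
        = (fun n : ℕ => cc n / (2*(n:ℝ)+1) * t^(2*n+1)) := by
      funext n
      rw [cc, div_div]
    rw [htarget, hfun]
    rcases eq_or_lt_of_le ht.2 with h1 | h1
    · subst h1
      simp only [one_pow, mul_one, Real.arcsin_one]
      exact endpoint_one
    · rcases eq_or_lt_of_le ht.1 with h2 | h2
      · rw [← h2, Real.arcsin_neg_one]
        have := endpoint_one.neg
        convert this using 2
        · rfl
        rename_i n
        rw [Odd.neg_one_pow ⟨n, by ring⟩]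
        ring
      · exact open_hasSum (abs_lt.2 ⟨h2, h1⟩)
end

section
/- Let 0 < δ < 1 and ε ∈ [0,1). Then the function F(t) = (ε + arccos t)^δ has a power series expansion F(t) = a_0 + Σ_{k≥1} a_k t^k valid for |t| < 1 in which every coefficient a_k with k ≥ 1 is strictly negative. -/
open Real Filter Finset

/-- Coefficients of the binomial series `(1 - y)^r = ∑ Pc r n * y^n`. -/
noncomputable def Pc (r : ℝ) (n : ℕ) : ℝ := ∏ i ∈ Finset.range n, ((i - r) / (i + 1))

lemma Pc_zero (r : ℝ) : Pc r 0 = 1 := by simp [Pc]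

lemma Pc_succ (r : ℝ) (n : ℕ) : Pc r (n + 1) = Pc r n * (((n : ℝ) - r) / (n + 1)) :=
  Finset.prod_range_succ _ _

lemma abs_Pc_succ (r : ℝ) (n : ℕ) :
    |Pc r (n + 1)| = |Pc r n| * (|(n : ℝ) - r| / ((n : ℝ) + 1)) := by
  rw [Pc_succ, abs_mul, abs_div, abs_of_pos (by positivity : (0:ℝ) < (n:ℝ) + 1)]

lemma ratio_bound (r : ℝ) {ρ : ℝ} (hρ0 : 0 ≤ ρ) (hρ1 : ρ < 1) :
    ∃ N : ℕ, ∀ n : ℕ, N ≤ n → ∀ x : ℝ, (n : ℝ) ≤ x → (x + |r|) * ρ ≤ (ρ + 1) / 2 * x := by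
  refine ⟨⌈2 * |r| / (1 - ρ)⌉₊, fun n hn x hx => ?_⟩
  have h1 : 2 * |r| / (1 - ρ) ≤ (n : ℝ) := by
    exact_mod_cast Nat.ceil_le.1 hn
  have h2 : 2 * |r| ≤ x * (1 - ρ) := by
    rw [div_le_iff₀ (by linarith)] at h1
    nlinarith
  have hx0 : 0 ≤ x := le_trans (Nat.cast_nonneg n) hx
  nlinarith [abs_nonneg r]

lemma summable_S1 (r : ℝ) {ρ : ℝ} (hρ0 : 0 ≤ ρ) (hρ1 : ρ < 1) :
    Summable (fun n : ℕ => |Pc r n| * ρ ^ n) := by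
  obtain ⟨N, hN⟩ := ratio_bound r hρ0 hρ1
  apply summable_of_ratio_norm_eventually_le (r := (ρ + 1) / 2) (by linarith)
  filter_upwards [eventually_ge_atTop N] with n hn
  simp only [Real.norm_eq_abs, abs_mul, abs_abs, abs_pow, abs_of_nonneg hρ0]
  rw [abs_Pc_succ, pow_succ]
  have key : |(n : ℝ) - r| * ρ ≤ (ρ + 1) / 2 * ((n : ℝ) + 1) := by
    have h1 : |(n : ℝ) - r| ≤ (n : ℝ) + |r| := by
      calc |(n : ℝ) - r| ≤ |(n : ℝ)| + |r| := abs_sub _ _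
        _ = (n : ℝ) + |r| := by rw [abs_of_nonneg (Nat.cast_nonneg n)]
    have h2 := hN n hn ((n : ℝ) + 1) (by linarith)
    nlinarith [abs_nonneg r]
  have h2 : |(n : ℝ) - r| * ρ / ((n : ℝ) + 1) ≤ (ρ + 1) / 2 :=
    (div_le_iff₀ (by positivity)).2 key
  calc |Pc r n| * (|(n : ℝ) - r| / ((n : ℝ) + 1)) * (ρ ^ n * ρ)
      = |Pc r n| * ρ ^ n * (|(n : ℝ) - r| * ρ / ((n : ℝ) + 1)) := by ring
    _ ≤ |Pc r n| * ρ ^ n * ((ρ + 1) / 2) :=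
        mul_le_mul_of_nonneg_left h2 (by positivity)
    _ = (ρ + 1) / 2 * (|Pc r n| * ρ ^ n) := by ring

lemma summable_S2 (r : ℝ) {ρ : ℝ} (hρ0 : 0 ≤ ρ) (hρ1 : ρ < 1) :
    Summable (fun n : ℕ => |Pc r n| * ((n : ℝ) * ρ ^ (n - 1))) := by
  rw [← summable_nat_add_iff 1]
  simp only [Nat.add_sub_cancel]
  obtain ⟨N, hN⟩ := ratio_bound r hρ0 hρ1
  apply summable_of_ratio_norm_eventually_le (r := (ρ + 1) / 2) (by linarith)
  filter_upwards [eventually_ge_atTop N] with n hn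
  simp only [Real.norm_eq_abs, abs_mul, abs_abs, abs_pow, abs_of_nonneg hρ0, Nat.abs_cast]
  rw [abs_Pc_succ r (n + 1), pow_succ]
  push_cast
  have hne1 : ((n : ℝ) + 1) ≠ 0 := by positivity
  have hne2 : ((n : ℝ) + 1 + 1) ≠ 0 := by positivity
  have key : |((n : ℝ) + 1) - r| * ρ ≤ (ρ + 1) / 2 * ((n : ℝ) + 1) := by
    have h1 : |((n : ℝ) + 1) - r| ≤ ((n : ℝ) + 1) + |r| := by
        calc |((n : ℝ) + 1) - r| ≤ |(n : ℝ) + 1| + |r| := abs_sub _ _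
        _ = ((n : ℝ) + 1) + |r| := by rw [abs_of_nonneg (by positivity)]
    have h2 := hN n hn ((n : ℝ) + 1) (by linarith)
    nlinarith [abs_nonneg r]
  have h2 : |((n : ℝ) + 1) - r| * ρ / ((n : ℝ) + 1) ≤ (ρ + 1) / 2 :=
    (div_le_iff₀ (by positivity)).2 key
  calc |Pc r (n + 1)| * (|(n : ℝ) + 1 - r| / ((n : ℝ) + 1 + 1)) * (((n : ℝ) + 1 + 1) * (ρ ^ n * ρ))
      = |Pc r (n + 1)| * (((n : ℝ) + 1) * ρ ^ n) * (|(n : ℝ) + 1 - r| * ρ / ((n : ℝ) + 1)) := by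
        field_simp
    _ ≤ |Pc r (n + 1)| * (((n : ℝ) + 1) * ρ ^ n) * ((ρ + 1) / 2) :=
        mul_le_mul_of_nonneg_left h2 (by positivity)
    _ = (ρ + 1) / 2 * (|Pc r (n + 1)| * (((n : ℝ) + 1) * ρ ^ n)) := by ring

lemma summable_norm_Pc (r : ℝ) {z : ℝ} (hz : |z| < 1) :
    Summable (fun n : ℕ => ‖Pc r n * z ^ n‖) := by
  have := summable_S1 r (abs_nonneg z) hz
  simpa [abs_mul, abs_pow] using this

/-- The binomial series: `(1 - y)^r = ∑ Pc r n * y^n` for `|y| < 1`. -/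
lemma hasSum_Pc (r : ℝ) {y : ℝ} (hy : |y| < 1) :
    HasSum (fun n : ℕ => Pc r n * y ^ n) ((1 - y) ^ r) := by
  set g : ℝ → ℝ := fun z => ∑' n : ℕ, Pc r n * z ^ n with hg
  have hsum : ∀ z : ℝ, |z| < 1 → HasSum (fun n : ℕ => Pc r n * z ^ n) (g z) :=
    fun z hz => ((summable_norm_Pc r hz).of_norm).hasSum
  have hD : ∀ z : ℝ, |z| < 1 →
      HasSum (fun n : ℕ => Pc r n * ((n : ℝ) * z ^ (n - 1))) (∑' n : ℕ, Pc r n * ((n : ℝ) * z ^ (n - 1))) := by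
    intro z hz
    apply Summable.hasSum
    apply Summable.of_norm
    have := summable_S2 r (abs_nonneg z) hz
    simpa [abs_mul, abs_pow, Nat.abs_cast] using this
  have hderiv : ∀ z : ℝ, |z| < 1 →
      HasDerivAt g (∑' n : ℕ, Pc r n * ((n : ℝ) * z ^ (n - 1))) z := by
    intro z hz
    set ρ : ℝ := (|z| + 1) / 2 with hρ
    have hρ1 : ρ < 1 := by rw [hρ]; linarith
    have hρ0 : 0 < ρ := by rw [hρ]; positivity
    have hzρ : |z| < ρ := by rw [hρ]; linarith
    apply hasDerivAt_tsum_of_isPreconnected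
      (u := fun n : ℕ => |Pc r n| * ((n : ℝ) * ρ ^ (n - 1)))
      (summable_S2 r hρ0.le hρ1) Metric.isOpen_ball (convex_ball (0:ℝ) ρ).isPreconnected
      (g := fun n z => Pc r n * z ^ n) (g' := fun n w => Pc r n * ((n : ℝ) * w ^ (n - 1)))
    · intro n w _
      exact (hasDerivAt_pow n w).const_mul _
    · intro n w hw
      rw [Real.norm_eq_abs, abs_mul, abs_mul, abs_pow, Nat.abs_cast]
      have hwρ : |w| ≤ ρ := by
        rw [Metric.mem_ball, Real.dist_eq, sub_zero] at hw
        exact hw.le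
      gcongr
    · exact Metric.mem_ball_self hρ0
    · apply summable_of_ne_finset_zero (s := {0})
      intro n hn
      simp only [Finset.mem_singleton] at hn
      simp [zero_pow hn]
    · rw [Metric.mem_ball, Real.dist_eq, sub_zero]; exact hzρ
  set D : ℝ → ℝ := fun z => ∑' n : ℕ, Pc r n * ((n : ℝ) * z ^ (n - 1)) with hDdef
  have key : ∀ z : ℝ, |z| < 1 → (1 - z) * D z + r * g z = 0 := by
    intro z hz
    have hDz := hD z hz
    have h1 : HasSum (fun n : ℕ => (n : ℝ) * Pc r n * z ^ n) (z * D z) := by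
      have := hDz.mul_left z
      have e : ∀ n : ℕ, z * (Pc r n * ((n : ℝ) * z ^ (n - 1))) = (n : ℝ) * Pc r n * z ^ n := by
        intro n
        cases n with
        | zero => simp
        | succ m => push_cast; rw [pow_succ]; ring
      simpa only [e] using this
    have h2 : HasSum (fun n : ℕ => ((n : ℝ) - r) * Pc r n * z ^ n) (D z) := by
      have h0 := (hasSum_nat_add_iff
        (f := fun n : ℕ => Pc r n * ((n : ℝ) * z ^ (n - 1))) (g := D z) 1).2 (by simpa using hDz)
      have e : ∀ n : ℕ, Pc r (n + 1) * ((↑(n + 1) : ℝ) * z ^ (n + 1 - 1))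
          = ((n : ℝ) - r) * Pc r n * z ^ n := by
        intro n
        rw [Nat.add_sub_cancel, Pc_succ]
        have hne : ((n : ℝ) + 1) ≠ 0 := by positivity
        push_cast
        field_simp
      simpa only [e] using h0
    have h3 := (hsum z hz).mul_left r
    have h4 := (h2.sub h1).add h3
    have e : ∀ n : ℕ, ((n : ℝ) - r) * Pc r n * z ^ n - (n : ℝ) * Pc r n * z ^ n
        + r * (Pc r n * z ^ n) = 0 := by intro n; ring
    simp only [e] at h4
    have := h4.unique hasSum_zero
    linarith [this]
  have hone : ∀ z : ℝ, |z| < 1 → 0 < 1 - z := by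
    intro z hz
    have := abs_lt.1 hz
    linarith [this.2]
  set h : ℝ → ℝ := fun z => g z * (1 - z) ^ (-r) with hh
  have hhderiv : ∀ z ∈ Metric.ball (0:ℝ) 1, HasDerivAt h 0 z := by
    intro z hzball
    have hz : |z| < 1 := by
      rw [Metric.mem_ball, Real.dist_eq, sub_zero] at hzball; exact hzball
    have h1z := hone z hz
    have hrp : HasDerivAt (fun z : ℝ => (1 - z) ^ (-r)) (r * (1 - z) ^ (-r - 1)) z := by
      have base : HasDerivAt (fun w : ℝ => w ^ (-r)) (-r * (1 - z) ^ (-r - 1)) (1 - z) :=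
        Real.hasDerivAt_rpow_const (Or.inl h1z.ne')
      have lin : HasDerivAt (fun z : ℝ => 1 - z) (-1) z := by
        simpa using (hasDerivAt_id z).const_sub 1
      have h2 : HasDerivAt (fun z : ℝ => (1 - z) ^ (-r)) (-r * (1 - z) ^ (-r - 1) * (-1)) z :=
        base.comp z lin
      have e2 : -r * (1 - z) ^ (-r - 1) * (-1) = r * (1 - z) ^ (-r - 1) := by ring
      rwa [e2] at h2
    have hprod := (hderiv z hz).mul hrp
    have e : (1 - z) ^ (-r) = (1 - z) * (1 - z) ^ (-r - 1) := by
      have := Real.rpow_add h1z 1 (-r - 1)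
      rw [show (1 : ℝ) + (-r - 1) = -r by ring] at this
      rw [this, Real.rpow_one]
    have hval : D z * (1 - z) ^ (-r) + g z * (r * (1 - z) ^ (-r - 1)) = 0 := by
      rw [e]
      linear_combination ((1 - z) ^ (-r - 1)) * (key z hz)
    rw [← hval]
    exact hprod
  have hconst : ∀ z ∈ Metric.ball (0:ℝ) 1, h z = h 0 := by
    intro z hzball
    apply (convex_ball (0:ℝ) 1).is_const_of_fderivWithin_eq_zero
      (fun w hw => ((hhderiv w hw).differentiableAt).differentiableWithinAt)
      (fun w hw => ?_) hzball (by simp [Metric.mem_ball])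
    have := ((hhderiv w hw).hasFDerivAt.hasFDerivWithinAt).fderivWithin
      ((Metric.isOpen_ball.uniqueDiffOn) w hw)
    rw [this]
    ext v
    simp
  have hg0 : g 0 = 1 := by
    show (∑' n : ℕ, Pc r n * (0:ℝ) ^ n) = 1
    rw [tsum_eq_single 0 (by intro n hn; simp [zero_pow hn])]
    simp [Pc_zero]
  have hyval : g y * (1 - y) ^ (-r) = 1 := by
    have h0 : h 0 = 1 := by
      show g 0 * (1 - (0:ℝ)) ^ (-r) = 1
      rw [hg0, sub_zero, Real.one_rpow, one_mul]
    have := hconst y (by rw [Metric.mem_ball, Real.dist_eq, sub_zero]; exact hy)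
    rw [h0] at this
    exact this
  have h1y := hone y hy
  have hcancel : (1 - y) ^ (-r) * (1 - y) ^ r = 1 := by
    rw [← Real.rpow_add h1y]
    simp
  have hgy : g y = (1 - y) ^ r := by
    have h2 : g y * ((1 - y) ^ (-r) * (1 - y) ^ r) = 1 * (1 - y) ^ r := by
      rw [← mul_assoc, hyval]
    rwa [hcancel, mul_one, one_mul] at h2
  rw [← hgy]
  exact hsum y hy

/-- Coefficients of the arcsin series: `arcsin t = ∑ Qc m * t^(2m+1)`. -/
noncomputable def Qc (m : ℕ) : ℝ := Pc (-(1/2)) m / (2 * m + 1)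

lemma Pc_half_pos (m : ℕ) : 0 < Pc (-(1/2)) m := by
  apply Finset.prod_pos
  intro i _
  apply div_pos
  · have : (0:ℝ) ≤ (i:ℝ) := Nat.cast_nonneg i
    linarith
  · positivity

lemma Qc_pos (m : ℕ) : 0 < Qc m := by
  apply div_pos (Pc_half_pos m)
  positivity

lemma Qc_le (m : ℕ) : Qc m ≤ Pc (-(1/2)) m := by
  rw [Qc]
  apply div_le_self (Pc_half_pos m).le
  have : (0:ℝ) ≤ (m:ℝ) := Nat.cast_nonneg m
  linarith

lemma summable_norm_Qc {z : ℝ} (hz : |z| < 1) :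
    Summable (fun m : ℕ => ‖Qc m * z ^ (2 * m + 1)‖) := by
  have hz2 : |z| ^ 2 < 1 := by
    nlinarith [abs_nonneg z]
  apply Summable.of_nonneg_of_le (fun m => norm_nonneg _) (fun m => ?_)
    (summable_S1 (-(1/2)) (by positivity) hz2)
  rw [Real.norm_eq_abs, abs_mul, abs_pow, abs_of_pos (Qc_pos m)]
  have h1 : |z| ^ (2 * m + 1) ≤ (|z| ^ 2) ^ m := by
    rw [pow_succ]
    calc |z| ^ (2 * m) * |z| ≤ |z| ^ (2 * m) * 1 := by
          apply mul_le_mul_of_nonneg_left hz.le (by positivity)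
      _ = (|z| ^ 2) ^ m := by rw [mul_one, pow_mul]
  calc Qc m * |z| ^ (2 * m + 1) ≤ Pc (-(1/2)) m * (|z| ^ 2) ^ m := by
        apply mul_le_mul (Qc_le m) h1 (by positivity) (Pc_half_pos m).le
    _ = |Pc (-(1/2)) m| * (|z| ^ 2) ^ m := by rw [abs_of_pos (Pc_half_pos m)]

lemma hasSum_arcsin {t : ℝ} (ht : |t| < 1) :
    HasSum (fun m : ℕ => Qc m * t ^ (2 * m + 1)) (Real.arcsin t) := by
  set A : ℝ → ℝ := fun z => ∑' m : ℕ, Qc m * z ^ (2 * m + 1) with hA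
  have hsum : ∀ z : ℝ, |z| < 1 → HasSum (fun m : ℕ => Qc m * z ^ (2 * m + 1)) (A z) :=
    fun z hz => ((summable_norm_Qc hz).of_norm).hasSum
  have habs2 : ∀ z : ℝ, |z| < 1 → |z ^ 2| < 1 := by
    intro z hz
    rw [abs_pow]
    nlinarith [abs_nonneg z]
  have hterm : ∀ (m : ℕ) (w : ℝ), HasDerivAt (fun w : ℝ => Qc m * w ^ (2 * m + 1))
      (Pc (-(1/2)) m * (w ^ 2) ^ m) w := by
    intro m w
    have h1 := (hasDerivAt_pow (2 * m + 1) w).const_mul (Qc m)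
    have e : Qc m * (↑(2 * m + 1) * w ^ (2 * m + 1 - 1)) = Pc (-(1/2)) m * (w ^ 2) ^ m := by
      rw [Nat.add_sub_cancel, ← pow_mul, Qc]
      have hne : (2 * (m:ℝ) + 1) ≠ 0 := by positivity
      push_cast
      field_simp
    rwa [e] at h1
  have hAderiv : ∀ z : ℝ, |z| < 1 → HasDerivAt A ((1 - z ^ 2) ^ (-(1/2) : ℝ)) z := by
    intro z hz
    have key : HasDerivAt A (∑' m : ℕ, Pc (-(1/2)) m * (z ^ 2) ^ m) z := by
      set ρ : ℝ := (|z| + 1) / 2 with hρ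
      have hρ1 : ρ < 1 := by rw [hρ]; linarith
      have hρ0 : 0 < ρ := by rw [hρ]; positivity
      have hzρ : |z| < ρ := by rw [hρ]; linarith
      have hρ2 : ρ ^ 2 < 1 := by nlinarith
      apply hasDerivAt_tsum_of_isPreconnected
        (u := fun m : ℕ => |Pc (-(1/2)) m| * (ρ ^ 2) ^ m)
        (summable_S1 (-(1/2)) (by positivity) hρ2) Metric.isOpen_ball
        (convex_ball (0:ℝ) ρ).isPreconnected
        (g := fun m z => Qc m * z ^ (2 * m + 1))
        (g' := fun m w => Pc (-(1/2)) m * (w ^ 2) ^ m)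
      · intro m w _
        exact hterm m w
      · intro m w hw
        rw [Metric.mem_ball, Real.dist_eq, sub_zero] at hw
        rw [Real.norm_eq_abs, abs_mul, abs_pow, abs_pow]
        have : |w| ^ 2 ≤ ρ ^ 2 := by nlinarith [abs_nonneg w]
        calc |Pc (-(1/2)) m| * (|w| ^ 2) ^ m ≤ |Pc (-(1/2)) m| * (ρ ^ 2) ^ m := by
              apply mul_le_mul_of_nonneg_left (pow_le_pow_left₀ (by positivity) this m)
                (abs_nonneg _)
          _ = _ := rfl
      · exact Metric.mem_ball_self hρ0
      · apply summable_of_ne_finset_zero (s := ∅)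
        intro n _
        simp
      · rw [Metric.mem_ball, Real.dist_eq, sub_zero]; exact hzρ
    have e : (∑' m : ℕ, Pc (-(1/2)) m * (z ^ 2) ^ m) = (1 - z ^ 2) ^ (-(1/2) : ℝ) :=
      (hasSum_Pc (-(1/2)) (habs2 z hz)).tsum_eq
    rwa [e] at key
  have harc : ∀ z : ℝ, |z| < 1 → HasDerivAt Real.arcsin ((1 - z ^ 2) ^ (-(1/2) : ℝ)) z := by
    intro z hz
    have h1 := abs_lt.1 hz
    have hd := Real.hasDerivAt_arcsin (by linarith : z ≠ -1) (by linarith : z ≠ 1)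
    have hpos : 0 < 1 - z ^ 2 := by nlinarith
    have e : 1 / Real.sqrt (1 - z ^ 2) = (1 - z ^ 2) ^ (-(1/2) : ℝ) := by
      rw [Real.sqrt_eq_rpow, Real.rpow_neg hpos.le, one_div]
    rwa [e] at hd
  -- A - arcsin is constant on the unit ball
  set B : ℝ → ℝ := fun z => A z - Real.arcsin z with hB
  have hBd : ∀ z ∈ Metric.ball (0:ℝ) 1, HasDerivAt B 0 z := by
    intro z hzb
    rw [Metric.mem_ball, Real.dist_eq, sub_zero] at hzb
    have := (hAderiv z hzb).sub (harc z hzb)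
    rw [sub_self] at this; exact this
  have hconst : ∀ z ∈ Metric.ball (0:ℝ) 1, B z = B 0 := by
    intro z hzb
    apply (convex_ball (0:ℝ) 1).is_const_of_fderivWithin_eq_zero
      (fun w hw => ((hBd w hw).differentiableAt).differentiableWithinAt)
      (fun w hw => ?_) hzb (by simp [Metric.mem_ball])
    have := ((hBd w hw).hasFDerivAt.hasFDerivWithinAt).fderivWithin
      ((Metric.isOpen_ball.uniqueDiffOn) w hw)
    rw [this]
    ext v
    simp
  have hA0 : A 0 = 0 := by
    show (∑' m : ℕ, Qc m * (0:ℝ) ^ (2 * m + 1)) = 0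
    have : ∀ m : ℕ, Qc m * (0:ℝ) ^ (2 * m + 1) = 0 := by
      intro m; rw [zero_pow (by omega)]; ring
    simp only [this]
    exact tsum_zero
  have hB0 : B 0 = 0 := by
    show A 0 - Real.arcsin 0 = 0
    rw [hA0, Real.arcsin_zero, sub_zero]
  have ht' : A t = Real.arcsin t := by
    have := hconst t (by rw [Metric.mem_ball, Real.dist_eq, sub_zero]; exact ht)
    rw [hB0] at this
    have : A t - Real.arcsin t = 0 := this
    linarith
  rw [← ht']
  exact hsum t ht

/-- Coefficients of `arcsin` as a full power series. -/
noncomputable def Cc (j : ℕ) : ℝ := if j % 2 = 1 then Qc (j / 2) else 0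

lemma Cc_nonneg (j : ℕ) : 0 ≤ Cc j := by
  unfold Cc; split
  · exact (Qc_pos _).le
  · exact le_refl 0

lemma Cc_pos {j : ℕ} (h : j % 2 = 1) : 0 < Cc j := by
  simp only [Cc, h, if_pos]
  exact Qc_pos _

lemma Cc_even {j : ℕ} (h : j % 2 = 0) : Cc j = 0 := by
  simp [Cc, h]

lemma Cc_odd (m : ℕ) : Cc (2 * m + 1) = Qc m := by
  have h1 : (2 * m + 1) % 2 = 1 := by omega
  have h2 : (2 * m + 1) / 2 = m := by omega
  simp [Cc, h1, h2]

lemma hasSum_Cc {t : ℝ} (ht : |t| < 1) :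
    HasSum (fun j : ℕ => Cc j * t ^ j) (Real.arcsin t) := by
  have h := hasSum_arcsin ht
  have hinj : Function.Injective (fun m : ℕ => 2 * m + 1) := by
    intro a b hab; simpa using hab
  rw [← Function.Injective.hasSum_iff hinj ?_]
  · have e : ∀ m : ℕ, Cc (2 * m + 1) * t ^ (2 * m + 1) = Qc m * t ^ (2 * m + 1) := by
      intro m; rw [Cc_odd]
    show HasSum (fun m : ℕ => Cc (2 * m + 1) * t ^ (2 * m + 1)) (Real.arcsin t)
    simpa only [e] using h
  · intro j hj
    have hpar : j % 2 = 0 := by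
      by_contra hodd
      exact hj ⟨j / 2, show 2 * (j / 2) + 1 = j by omega⟩
    rw [Cc_even hpar, zero_mul]

/-- Coefficients of `arcsin^n`. -/
noncomputable def dcoef : ℕ → ℕ → ℝ
  | 0, k => if k = 0 then 1 else 0
  | n + 1, k => ∑ i ∈ Finset.range (k + 1), dcoef n i * Cc (k - i)

lemma dcoef_succ (n k : ℕ) :
    dcoef (n + 1) k = ∑ i ∈ Finset.range (k + 1), dcoef n i * Cc (k - i) := rfl

lemma dcoef_nonneg : ∀ n k, 0 ≤ dcoef n k := by
  intro n
  induction n with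
  | zero => intro k; unfold dcoef; split <;> norm_num
  | succ n ih =>
    intro k
    rw [dcoef_succ]
    exact Finset.sum_nonneg fun i _ => mul_nonneg (ih i) (Cc_nonneg _)

lemma dcoef_eq_zero : ∀ n k, k < n → dcoef n k = 0 := by
  intro n
  induction n with
  | zero => intro k hk; omega
  | succ n ih =>
    intro k hk
    rw [dcoef_succ]
    apply Finset.sum_eq_zero
    intro i hi
    rw [Finset.mem_range] at hi
    rcases lt_or_ge i n with h | h
    · rw [ih i h, zero_mul]
    · have : k - i = 0 := by omega
      rw [this, Cc_even (by norm_num), mul_zero]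

lemma dcoef_one (k : ℕ) : dcoef 1 k = Cc k := by
  rw [dcoef_succ]
  rw [Finset.sum_eq_single 0]
  · show (if (0:ℕ) = 0 then (1:ℝ) else 0) * Cc (k - 0) = Cc k
    simp
  · intro i _ hne
    show (if i = 0 then (1:ℝ) else 0) * Cc (k - i) = 0
    simp [hne]
  · intro h
    exact absurd (Finset.mem_range.2 (by omega)) h

lemma dcoef_two_pos {k : ℕ} (hk : 2 ≤ k) (he : k % 2 = 0) : 0 < dcoef 2 k := by
  rw [dcoef_succ]
  apply Finset.sum_pos'
  · intro i _
    exact mul_nonneg (dcoef_nonneg 1 i) (Cc_nonneg _)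
  · refine ⟨1, Finset.mem_range.2 (by omega), ?_⟩
    rw [dcoef_one]
    exact mul_pos (Cc_pos (by norm_num)) (Cc_pos (by omega))

lemma dcoef_hasSum : ∀ (n : ℕ) {t : ℝ}, |t| < 1 →
    HasSum (fun k : ℕ => dcoef n k * t ^ k) (Real.arcsin t ^ n) := by
  intro n
  induction n with
  | zero =>
    intro t _
    have e : (fun k : ℕ => dcoef 0 k * t ^ k) = fun k : ℕ => if k = 0 then (1:ℝ) else 0 := by
      funext k
      show (if k = 0 then (1:ℝ) else 0) * t ^ k = _
      split
      · rename_i h; subst h; simp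
      · simp
    rw [e, pow_zero]
    exact hasSum_ite_eq 0 1
  | succ n ih =>
    intro t ht
    have ht' : |(|t| : ℝ)| < 1 := by rwa [abs_abs]
    have hfn : Summable (fun k : ℕ => ‖dcoef n k * t ^ k‖) := by
      have hs := (ih ht').summable
      have e : (fun k : ℕ => ‖dcoef n k * t ^ k‖) = fun k => dcoef n k * |t| ^ k := by
        funext k
        rw [Real.norm_eq_abs, abs_mul, abs_of_nonneg (dcoef_nonneg n k), abs_pow]
      rw [e]
      exact hs
    have hgn : Summable (fun k : ℕ => ‖Cc k * t ^ k‖) := by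
      have hs := (hasSum_Cc ht').summable
      have e : (fun k : ℕ => ‖Cc k * t ^ k‖) = fun k => Cc k * |t| ^ k := by
        funext k
        rw [Real.norm_eq_abs, abs_mul, abs_of_nonneg (Cc_nonneg k), abs_pow]
      rw [e]
      exact hs
    have h := hasSum_sum_range_mul_of_summable_norm hfn hgn
    rw [(ih ht).tsum_eq, (hasSum_Cc ht).tsum_eq] at h
    have e3 : ∀ k : ℕ, (∑ i ∈ Finset.range (k + 1),
        (dcoef n i * t ^ i) * (Cc (k - i) * t ^ (k - i))) = dcoef (n + 1) k * t ^ k := by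
      intro k
      rw [dcoef_succ, Finset.sum_mul]
      apply Finset.sum_congr rfl
      intro i hi
      rw [Finset.mem_range] at hi
      have ht2 : t ^ i * t ^ (k - i) = t ^ k := by
        rw [← pow_add]
        congr 1
        omega
      calc dcoef n i * t ^ i * (Cc (k - i) * t ^ (k - i))
          = dcoef n i * Cc (k - i) * (t ^ i * t ^ (k - i)) := by ring
        _ = dcoef n i * Cc (k - i) * t ^ k := by rw [ht2]
    simp only [e3] at h
    rw [pow_succ]
    exact h

/-- For `0 < δ < 1` and `ε ∈ [0,1)`, the function `F(t) = (ε + arccos t)^δ`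
has a power series expansion on `(-1,1)` whose coefficients `a_k`, `k ≥ 1`, are all
strictly negative. -/
theorem geodesic_pos_power_neg_coeffs (δ ε : ℝ) (hδ0 : 0 < δ) (hδ1 : δ < 1)
    (hε : ε ∈ Set.Ico (0 : ℝ) 1) :
    ∃ a : ℕ → ℝ, (∀ k : ℕ, 1 ≤ k → a k < 0) ∧
      ∀ t : ℝ, |t| < 1 →
        HasSum (fun k : ℕ => a k * t ^ k) ((ε + Real.arccos t) ^ δ) := by
  obtain ⟨hε0, hε1⟩ := hε
  set c : ℝ := ε + π / 2 with hc
  have hπ := Real.pi_pos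
  have hcpos : 0 < c := by rw [hc]; linarith
  have hc2 : π / 2 ≤ c := by rw [hc]; linarith
  set γ : ℕ → ℝ := fun n => c ^ δ * Pc δ n / c ^ n with hγ
  have hPcneg : ∀ n : ℕ, 1 ≤ n → Pc δ n < 0 := by
    intro n hn
    induction n with
    | zero => omega
    | succ m ih =>
      rcases Nat.eq_zero_or_pos m with hm | hm
      · subst hm
        rw [Pc_succ, Pc_zero]
        simp only [Nat.cast_zero, one_mul]
        apply div_neg_of_neg_of_pos (by linarith) (by norm_num)
      · rw [Pc_succ]
        apply mul_neg_of_neg_of_pos (ih hm)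
        apply div_pos
        · have : (1:ℝ) ≤ (m:ℝ) := by exact_mod_cast hm
          linarith
        · positivity
  have hγneg : ∀ n : ℕ, 1 ≤ n → γ n < 0 := by
    intro n hn
    rw [hγ]
    apply div_neg_of_neg_of_pos _ (by positivity)
    exact mul_neg_of_pos_of_neg (Real.rpow_pos_of_pos hcpos δ) (hPcneg n hn)
  have hγsum : ∀ u : ℝ, |u| < c → HasSum (fun n : ℕ => γ n * u ^ n) ((c - u) ^ δ) := by
    intro u hu
    have h1 : |u / c| < 1 := by
      rw [abs_div, abs_of_pos hcpos, div_lt_one hcpos]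
      exact hu
    have h := (hasSum_Pc δ h1).mul_left (c ^ δ)
    have e : ∀ n : ℕ, c ^ δ * (Pc δ n * (u / c) ^ n) = γ n * u ^ n := by
      intro n
      rw [hγ, div_pow]
      field_simp
    have e2 : c ^ δ * (1 - u / c) ^ δ = (c - u) ^ δ := by
      rw [← Real.mul_rpow hcpos.le (by
        have : u / c < 1 := by rw [div_lt_one hcpos]; exact lt_of_abs_lt hu
        linarith)]
      congr 1
      field_simp
    rw [e2] at h
    simpa only [e] using h
  set a : ℕ → ℝ := fun k => ∑ n ∈ Finset.range (k + 1), γ n * dcoef n k with ha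
  refine ⟨a, ?_, ?_⟩
  · intro k hk
    rw [ha]
    have hlt : (∑ n ∈ Finset.range (k + 1), γ n * dcoef n k)
        < ∑ n ∈ Finset.range (k + 1), (0:ℝ) := by
      apply Finset.sum_lt_sum
      · intro n _
        cases n with
        | zero =>
          have : dcoef 0 k = 0 := by
            show (if k = 0 then (1:ℝ) else 0) = 0
            rw [if_neg (by omega : ¬ k = 0)]
          rw [this, mul_zero]
        | succ m =>
          exact mul_nonpos_iff.2 (Or.inr ⟨(hγneg (m + 1) (by omega)).le, dcoef_nonneg _ _⟩)
      · by_cases hpar : k % 2 = 1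
        · refine ⟨1, Finset.mem_range.2 (by omega), ?_⟩
          rw [dcoef_one]
          exact mul_neg_of_neg_of_pos (hγneg 1 le_rfl) (Cc_pos hpar)
        · have hk2 : 2 ≤ k := by omega
          refine ⟨2, Finset.mem_range.2 (by omega), ?_⟩
          exact mul_neg_of_neg_of_pos (hγneg 2 (by omega)) (dcoef_two_pos hk2 (by omega))
    simpa using hlt
  · intro t ht
    have ht' : |(|t| : ℝ)| < 1 := by rwa [abs_abs]
    have htlt := abs_lt.1 ht
    set u : ℝ := Real.arcsin t with hu
    have hu1 : u < π / 2 := Real.arcsin_lt_pi_div_two.2 htlt.2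
    have hu2 : -(π / 2) < u := Real.neg_pi_div_two_lt_arcsin.2 htlt.1
    have huc : |u| < c := lt_of_lt_of_le (abs_lt.2 ⟨hu2, hu1⟩) hc2
    set s : ℝ := Real.arcsin |t| with hs
    have hs0 : 0 ≤ s := Real.arcsin_nonneg.2 (abs_nonneg t)
    have hsc : s < c := lt_of_lt_of_le (Real.arcsin_lt_pi_div_two.2 ht) hc2
    set F2 : ℕ × ℕ → ℝ := fun p => γ p.1 * (dcoef p.1 p.2 * t ^ p.2) with hF2def
    have hnormfib : ∀ n : ℕ, HasSum (fun k : ℕ => ‖F2 (n, k)‖) (|γ n| * s ^ n) := by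
      intro n
      have h := (dcoef_hasSum n ht').mul_left (|γ n|)
      have e : ∀ k : ℕ, |γ n| * (dcoef n k * |t| ^ k) = ‖F2 (n, k)‖ := by
        intro k
        rw [hF2def, Real.norm_eq_abs, abs_mul, abs_mul, abs_pow,
          abs_of_nonneg (dcoef_nonneg n k)]
      rw [hs]
      simpa only [e] using h
    have hγabs : Summable (fun n : ℕ => |γ n| * s ^ n) := by
      have hsc1 : s / c < 1 := by rw [div_lt_one hcpos]; exact hsc
      have hsum := (summable_S1 δ (div_nonneg hs0 hcpos.le) hsc1).mul_left (c ^ δ)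
      have e : ∀ n : ℕ, c ^ δ * (|Pc δ n| * (s / c) ^ n) = |γ n| * s ^ n := by
        intro n
        rw [hγ, abs_div, abs_mul, abs_of_pos (Real.rpow_pos_of_pos hcpos δ),
          abs_of_pos (pow_pos hcpos n), div_pow]
        field_simp
      simpa only [e] using hsum
    have hnormsum : Summable (fun p : ℕ × ℕ => ‖F2 p‖) := by
      apply (summable_prod_of_nonneg (fun p => norm_nonneg (F2 p))).2
      constructor
      · exact fun n => (hnormfib n).summable
      · have e : (fun n : ℕ => ∑' k : ℕ, ‖F2 (n, k)‖) = fun n => |γ n| * s ^ n := by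
          funext n
          exact (hnormfib n).tsum_eq
        rw [e]
        exact hγabs
    have hF2sum : Summable F2 := hnormsum.of_norm
    have hfib1 : ∀ n : ℕ, HasSum (fun k : ℕ => F2 (n, k)) (γ n * u ^ n) := by
      intro n
      have h := (dcoef_hasSum n ht).mul_left (γ n)
      rw [hu]
      exact h
    have hS : HasSum F2 (∑' p, F2 p) := hF2sum.hasSum
    have hval : (∑' p, F2 p) = (c - u) ^ δ :=
      (hS.prod_fiberwise hfib1).unique (hγsum u huc)
    rw [hval] at hS
    have hswap : HasSum (F2 ∘ (Equiv.prodComm ℕ ℕ)) ((c - u) ^ δ) :=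
      ((Equiv.prodComm ℕ ℕ).hasSum_iff).2 hS
    have hfib2 : ∀ k : ℕ, HasSum (fun n : ℕ => F2 (n, k)) (a k * t ^ k) := by
      intro k
      have h0 : ∀ n ∉ Finset.range (k + 1), γ n * (dcoef n k * t ^ k) = 0 := by
        intro n hn
        rw [Finset.mem_range, not_lt] at hn
        rw [dcoef_eq_zero n k (by omega), zero_mul, mul_zero]
      have h := hasSum_sum_of_ne_finset_zero (L := SummationFilter.unconditional ℕ) h0
      have e : (∑ n ∈ Finset.range (k + 1), γ n * (dcoef n k * t ^ k)) = a k * t ^ k := by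
        rw [ha, Finset.sum_mul]
        apply Finset.sum_congr rfl
        intro n _
        ring
      rw [e] at h
      exact h
    have hfinal : HasSum (fun k : ℕ => a k * t ^ k) ((c - u) ^ δ) :=
      hswap.prod_fiberwise hfib2
    have e : c - u = ε + Real.arccos t := by
      rw [hc, hu, Real.arccos_eq_pi_div_two_sub_arcsin]
      ring
    rwa [e] at hfinal
end

section
/- Let s > 0 and ε ∈ [0,1). Then the function F(t) = (ε + arccos t)^{-s} has a power series expansion F(t) = Σ_{k≥0} a_k t^k valid for |t| < 1 in which every coefficient a_k is strictly positive. -/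
open Filter Real Finset Topology

noncomputable section

namespace GeoAux

/-- Coefficients of the binomial series `(1-u)^{-s}`. -/
def d (s : ℝ) : ℕ → ℝ
  | 0 => 1
  | k + 1 => d s k * (s + k) / (k + 1)

lemma d_pos {s : ℝ} (hs : 0 < s) : ∀ k, 0 < d s k
  | 0 => one_pos
  | k + 1 => by
      have h0 := d_pos hs k
      have h1 : (0:ℝ) < s + k := by positivity
      have h2 : (0:ℝ) < (k:ℝ) + 1 := by positivity
      simp only [d]
      positivity

lemma d_rec (s : ℝ) (k : ℕ) : ((k:ℝ) + 1) * d s (k+1) = (s + k) * d s k := by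
  have h2 : ((k:ℝ) + 1) ≠ 0 := by positivity
  simp only [d]
  field_simp

lemma d_shift (s : ℝ) : ∀ k, (s + k) * d s k = s * d (s+1) k
  | 0 => by simp [d]
  | k + 1 => by
      have ih := d_shift s k
      have h2 : ((k:ℝ) + 1) ≠ 0 := by positivity
      simp only [d]
      push_cast
      field_simp
      linear_combination (s + (k:ℝ) + 1) * ih

lemma tendsto_ratio (s : ℝ) :
    Tendsto (fun k : ℕ => (s + k) / ((k:ℝ) + 1)) atTop (𝓝 1) := by
  have h : (fun k : ℕ => (s + k) / ((k:ℝ) + 1))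
      = fun k : ℕ => (s - 1) / ((k:ℝ) + 1) + 1 := by
    funext k
    have h2 : ((k:ℝ) + 1) ≠ 0 := by positivity
    field_simp
    ring
  rw [h]
  have h1 : Tendsto (fun k : ℕ => (s - 1) / ((k:ℝ) + 1)) atTop (𝓝 0) := by
    apply Tendsto.div_atTop tendsto_const_nhds
    exact tendsto_atTop_add_const_right _ 1 tendsto_natCast_atTop_atTop
  simpa using h1.add tendsto_const_nhds

lemma summable_d_mul {s : ℝ} (hs : 0 < s) {u : ℝ} (hu : |u| < 1) :
    Summable (fun k => d s k * u ^ k) := by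
  rcases eq_or_ne u 0 with rfl | hu0
  · apply summable_of_ne_finset_zero (s := {0})
    intro k hk
    simp only [Finset.mem_singleton] at hk
    simp [zero_pow hk]
  · refine summable_of_ratio_test_tendsto_lt_one hu
      (Eventually.of_forall fun k =>
        mul_ne_zero (ne_of_gt (d_pos hs k)) (pow_ne_zero _ hu0)) ?_
    have key : ∀ k : ℕ, ‖d s (k+1) * u ^ (k+1)‖ / ‖d s k * u ^ k‖
          = (s + k) / ((k:ℝ) + 1) * |u| := by
        intro k
        have hd := d_pos hs k
        have hup : (0:ℝ) < |u| ^ k := pow_pos (abs_pos.2 hu0) k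
        have h2 : ((k:ℝ) + 1) ≠ 0 := by positivity
        rw [norm_mul, norm_mul, norm_pow, norm_pow, Real.norm_eq_abs, Real.norm_eq_abs,
          Real.norm_eq_abs, abs_of_pos (d_pos hs (k+1)), abs_of_pos hd]
        simp only [d, pow_succ]
        field_simp
    simp only [key]
    simpa using (tendsto_ratio s).mul_const |u|

lemma summable_k_d_mul {s : ℝ} (hs : 0 < s) {r : ℝ} (hr0 : 0 ≤ r) (hr : r < 1) :
    Summable (fun k : ℕ => (k:ℝ) * d s k * r ^ k) := by
  have hs1 : (0:ℝ) < s + 1 := by linarith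
  have h := (summable_d_mul hs1 (u := r) (by rwa [abs_of_nonneg hr0])).mul_left s
  apply Summable.of_nonneg_of_le ?_ ?_ h
  · intro k
    have := d_pos hs k
    positivity
  · intro k
    have hdk := d_pos hs k
    have h1 : (k:ℝ) * d s k ≤ (s + k) * d s k := by nlinarith
    have h2 : (s + k) * d s k = s * d (s+1) k := d_shift s k
    calc (k:ℝ) * d s k * r ^ k ≤ (s + k) * d s k * r ^ k := by
          apply mul_le_mul_of_nonneg_right h1 (by positivity)
      _ = s * (d (s+1) k * r ^ k) := by rw [h2]; ring


lemma eq_at_zero_of_deriv_zero {h : ℝ → ℝ} (H : ∀ x, |x| < 1 → HasDerivAt h 0 x)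
    {x : ℝ} (hx : |x| < 1) : h x = h 0 := by
  rw [abs_lt] at hx
  have cont : ∀ a b : ℝ, -1 < a → b < 1 → ContinuousOn h (Set.Icc a b) := by
    intro a b ha hb y hy
    exact ((H y (abs_lt.2 ⟨by cases hy; linarith, by cases hy; linarith⟩)).continuousAt).continuousWithinAt
  rcases lt_trichotomy x 0 with hlt | rfl | hgt
  · obtain ⟨c, _, hc⟩ := exists_hasDerivAt_eq_slope h (fun _ => 0) hlt
      (cont x 0 (by linarith) (by linarith))
      (fun y hy => H y (abs_lt.2 ⟨by cases hy; linarith, by cases hy; linarith⟩))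
    rw [eq_div_iff (by linarith : (0:ℝ) - x ≠ 0)] at hc
    linarith
  · rfl
  · obtain ⟨c, _, hc⟩ := exists_hasDerivAt_eq_slope h (fun _ => 0) hgt
      (cont 0 x (by linarith) (by linarith))
      (fun y hy => H y (abs_lt.2 ⟨by cases hy; linarith, by cases hy; linarith⟩))
    rw [eq_div_iff (by linarith : x - (0:ℝ) ≠ 0)] at hc
    linarith

lemma summable_kpow {s : ℝ} (hs : 0 < s) {r : ℝ} (hr0 : 0 < r) (hr : r < 1) :
    Summable (fun k : ℕ => (k:ℝ) * d s k * r ^ (k - 1)) := by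
  have h := (summable_k_d_mul hs hr0.le hr).div_const r
  apply h.congr
  intro k
  cases k with
  | zero => simp
  | succ n =>
      have : r ^ (n + 1 - 1) = r ^ (n+1) / r := by
        rw [pow_succ]; field_simp; rfl
      rw [this]; ring

lemma hasDerivAt_dsum {s : ℝ} (hs : 0 < s) {x : ℝ} (hx : |x| < 1) :
    HasDerivAt (fun z => ∑' k, d s k * z ^ k)
      (∑' k : ℕ, d s k * ((k:ℝ) * x ^ (k - 1))) x := by
  set r : ℝ := (|x| + 1) / 2 with hr
  have hxr : |x| < r := by rw [hr]; linarith [abs_nonneg x]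
  have hr0 : 0 < r := by positivity
  have hr1 : r < 1 := by rw [hr]; linarith
  refine hasDerivAt_tsum_of_isPreconnected
    (g := fun (k : ℕ) (z : ℝ) => d s k * z ^ k)
    (g' := fun (k : ℕ) (y : ℝ) => d s k * ((k:ℝ) * y ^ (k - 1)))
    (u := fun k : ℕ => (k:ℝ) * d s k * r ^ (k - 1))
    (t := Metric.ball (0:ℝ) r) (y₀ := (0:ℝ))
    (summable_kpow hs hr0 hr1) Metric.isOpen_ball
    ((convex_ball (0:ℝ) r).isPreconnected) ?_ ?_ ?_ ?_ ?_
  · intro k y _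
    exact (hasDerivAt_pow k y).const_mul (d s k)
  · intro k y hy
    have hyr : |y| < r := by simpa [Real.dist_eq] using hy
    rw [norm_mul, Real.norm_eq_abs, Real.norm_eq_abs, abs_of_pos (d_pos hs k), abs_mul,
      abs_pow, Nat.abs_cast]
    have h1 : |y| ^ (k-1) ≤ r ^ (k-1) := pow_le_pow_left₀ (abs_nonneg y) hyr.le _
    have hd := d_pos hs k
    calc d s k * ((k:ℝ) * |y| ^ (k-1)) ≤ d s k * ((k:ℝ) * r ^ (k-1)) := by
          apply mul_le_mul_of_nonneg_left ?_ hd.le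
          exact mul_le_mul_of_nonneg_left h1 (Nat.cast_nonneg k)
      _ = (k:ℝ) * d s k * r ^ (k-1) := by ring
  · show (0:ℝ) ∈ Metric.ball (0:ℝ) r
    simpa using hr0
  · exact summable_d_mul hs (by norm_num : |(0:ℝ)| < 1)
  · show x ∈ Metric.ball (0:ℝ) r
    simpa [Real.dist_eq] using hxr

lemma summable_kd_at {s : ℝ} (hs : 0 < s) {x : ℝ} (hx : |x| < 1) :
    Summable (fun k : ℕ => d s k * ((k:ℝ) * x ^ (k - 1))) := by
  set r : ℝ := (|x| + 1) / 2 with hr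
  have hxr : |x| < r := by rw [hr]; linarith [abs_nonneg x]
  have hr0 : 0 < r := by positivity
  have hr1 : r < 1 := by rw [hr]; linarith
  apply Summable.of_norm
  apply Summable.of_nonneg_of_le (fun k => norm_nonneg _) ?_ (summable_kpow hs hr0 hr1)
  intro k
  rw [norm_mul, Real.norm_eq_abs, Real.norm_eq_abs, abs_of_pos (d_pos hs k), abs_mul,
    abs_pow, Nat.abs_cast]
  have h1 : |x| ^ (k-1) ≤ r ^ (k-1) := pow_le_pow_left₀ (abs_nonneg x) hxr.le _
  have hd := d_pos hs k
  calc d s k * ((k:ℝ) * |x| ^ (k-1)) ≤ d s k * ((k:ℝ) * r ^ (k-1)) := by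
        apply mul_le_mul_of_nonneg_left ?_ hd.le
        exact mul_le_mul_of_nonneg_left h1 (Nat.cast_nonneg k)
    _ = (k:ℝ) * d s k * r ^ (k-1) := by ring

lemma summable_sk_at {s : ℝ} (hs : 0 < s) {x : ℝ} (hx : |x| < 1) :
    Summable (fun k : ℕ => (s + k) * d s k * x ^ k) := by
  have hs1 : (0:ℝ) < s + 1 := by linarith
  apply ((summable_d_mul hs1 hx).mul_left s).congr
  intro k
  rw [← mul_assoc, ← d_shift s k]

lemma summable_k_at {s : ℝ} (hs : 0 < s) {x : ℝ} (hx : |x| < 1) :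
    Summable (fun k : ℕ => (k:ℝ) * d s k * x ^ k) := by
  have h := summable_kd_at hs hx
  have h2 := h.mul_right x
  rcases eq_or_ne x 0 with rfl | hx0
  · apply summable_of_ne_finset_zero (s := {0, 1})
    intro k hk
    simp only [Finset.mem_insert, Finset.mem_singleton] at hk
    push_neg at hk
    rw [zero_pow hk.1, mul_zero]
  · apply h2.congr
    intro k
    cases k with
    | zero => simp
    | succ n =>
        have : x ^ (n + 1 - 1) * x = x ^ (n + 1) := by simp [pow_succ]
        push_cast
        calc d s (n+1) * (((n:ℝ)+1) * x ^ (n + 1 - 1)) * x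
            = ((n:ℝ)+1) * d s (n+1) * (x ^ (n+1-1) * x) := by ring
          _ = ((n:ℝ)+1) * d s (n+1) * x ^ (n+1) := by rw [this]

lemma deriv_identity {s : ℝ} (hs : 0 < s) {x : ℝ} (hx : |x| < 1) :
    (1 - x) * (∑' k : ℕ, d s k * ((k:ℝ) * x ^ (k - 1)))
      = s * ∑' k, d s k * x ^ k := by
  have S1 := summable_kd_at hs hx
  have S2 := summable_sk_at hs hx
  have S3 := summable_k_at hs hx
  have h1 : (∑' k : ℕ, d s k * ((k:ℝ) * x ^ (k - 1)))
      = ∑' k : ℕ, (s + k) * d s k * x ^ k := by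
    rw [Summable.tsum_eq_zero_add S1]
    have hz : d s 0 * ((0:ℕ) * x ^ (0 - 1)) = 0 := by simp
    rw [hz, zero_add]
    apply tsum_congr
    intro k
    have hrec := d_rec s k
    have hsub : k + 1 - 1 = k := rfl
    rw [hsub]
    push_cast
    linear_combination x ^ k * hrec
  have h2 : (∑' k : ℕ, (s + k) * d s k * x ^ (k+1))
      = ∑' k : ℕ, (k:ℝ) * d s k * x ^ k := by
    rw [Summable.tsum_eq_zero_add S3]
    have hz : ((0:ℕ):ℝ) * d s 0 * x ^ 0 = 0 := by simp
    rw [hz, zero_add]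
    apply tsum_congr
    intro k
    have hrec := d_rec s k
    push_cast
    linear_combination (-(x ^ (k+1))) * hrec
  have S2' : Summable (fun k : ℕ => (s + k) * d s k * x ^ (k+1)) := by
    apply (S2.mul_right x).congr
    intro k
    rw [pow_succ]; ring
  rw [h1, sub_mul, one_mul]
  have hxmul : x * (∑' k : ℕ, (s + k) * d s k * x ^ k)
      = ∑' k : ℕ, (s + k) * d s k * x ^ (k+1) := by
    rw [← tsum_mul_left]
    congr 1
    funext k
    rw [pow_succ]; ring
  rw [hxmul, h2, ← Summable.tsum_sub S2 S3, ← tsum_mul_left]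
  congr 1
  funext k
  ring

theorem hasSum_binomial {s : ℝ} (hs : 0 < s) {u : ℝ} (hu : |u| < 1) :
    HasSum (fun k : ℕ => d s k * u ^ k) ((1 - u) ^ (-s)) := by
  set f : ℝ → ℝ := fun x => ∑' k, d s k * x ^ k with hf
  set h : ℝ → ℝ := fun x => (1 - x) ^ s * f x with hh
  have key : ∀ x : ℝ, |x| < 1 → HasDerivAt h 0 x := by
    intro x hx
    have h1x : (0:ℝ) < 1 - x := by rw [abs_lt] at hx; linarith
    have hd1 : HasDerivAt (fun z : ℝ => (1 - z) ^ s)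
        (s * (1 - x) ^ (s - 1) * -1) x := by
      have := (Real.hasDerivAt_rpow_const (x := 1 - x) (p := s) (Or.inl h1x.ne')).comp x
        ((hasDerivAt_id x).const_sub 1)
      exact this
    have hd2 := hasDerivAt_dsum hs hx
    have := hd1.mul hd2
    refine this.congr_deriv ?_
    symm
    have hfx := deriv_identity hs hx
    have hsplit : (1 - x) ^ s = (1 - x) ^ (s - 1) * (1 - x) := by
      rw [← Real.rpow_add_one h1x.ne' (s-1)]
      norm_num
    rw [hsplit]
    have : (1 - x) ^ (s - 1) * (1 - x) * (∑' k : ℕ, d s k * ((k:ℝ) * x ^ (k - 1)))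
        = (1 - x) ^ (s - 1) * (s * f x) := by
      rw [mul_assoc, hfx]
    calc (0:ℝ) = s * (1 - x) ^ (s-1) * -1 * f x + (1 - x) ^ (s-1) * (s * f x) := by ring
      _ = s * (1 - x) ^ (s-1) * -1 * f x
          + (1 - x) ^ (s - 1) * (1 - x) * (∑' k : ℕ, d s k * ((k:ℝ) * x ^ (k - 1))) := by
          rw [this]
  have hconst := eq_at_zero_of_deriv_zero key hu
  have hf0 : f 0 = 1 := by
    have hfe : f 0 = ∑' k, d s k * (0:ℝ) ^ k := rfl
    rw [hfe, tsum_eq_single 0 (by intro k hk; simp [zero_pow hk])]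
    simp [d]
  have hh0 : h 0 = 1 := by simp [hh, hf0]
  have h1u : (0:ℝ) < 1 - u := by rw [abs_lt] at hu; linarith
  have hval : (1 - u) ^ s * f u = 1 := by
    have := hconst
    rw [hh0] at this
    exact this
  have hfu : f u = (1 - u) ^ (-s) := by
    rw [Real.rpow_neg h1u.le]
    field_simp [(Real.rpow_pos_of_pos h1u s).ne'] at hval ⊢
    linarith [hval]
  have := (summable_d_mul hs hu).hasSum
  rwa [show ∑' k, d s k * u ^ k = (1-u) ^ (-s) from hfu] at this

lemma half_pos' : (0:ℝ) < 1/2 := by norm_num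

lemma summable_arcsin_series {x : ℝ} (hx : |x| < 1) :
    Summable (fun k : ℕ => (d (1/2) k / (2*(k:ℝ)+1)) * x ^ (2*k+1)) := by
  apply Summable.of_norm
  apply Summable.of_nonneg_of_le (fun k => norm_nonneg _) ?_
    (summable_d_mul half_pos' (u := x^2) (by rw [abs_of_nonneg (sq_nonneg x)]; nlinarith [abs_nonneg x, sq_abs x]))
  intro k
  have hd := d_pos half_pos' k
  have h21 : (0:ℝ) < 2*(k:ℝ)+1 := by positivity
  rw [Real.norm_eq_abs, abs_mul, abs_pow, abs_div, abs_of_pos hd, abs_of_pos h21]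
  have h1 : d (1/2) k / (2*(k:ℝ)+1) ≤ d (1/2) k := by
    rw [div_le_iff₀ h21]; nlinarith
  have h2 : |x| ^ (2*k+1) ≤ (x^2) ^ k := by
    have : (x^2)^k = |x|^(2*k) := by rw [pow_mul, sq_abs]
    rw [this, pow_succ]
    have hb : |x| ^ (2*k) * |x| ≤ |x| ^ (2*k) * 1 := by
      apply mul_le_mul_of_nonneg_left hx.le (by positivity)
    simpa using hb
  calc d (1/2) k / (2*(k:ℝ)+1) * |x| ^ (2*k+1) ≤ d (1/2) k * (x^2)^k := by
        apply mul_le_mul h1 h2 (by positivity) hd.le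

lemma sq_lt_one_of_abs_lt {x : ℝ} (hx : |x| < 1) : |x^2| < 1 := by
  rw [abs_of_nonneg (sq_nonneg x)]
  nlinarith [abs_nonneg x, sq_abs x]

lemma hasDerivAt_arcsin_series {x : ℝ} (hx : |x| < 1) :
    HasDerivAt (fun z => ∑' k : ℕ, (d (1/2) k / (2*(k:ℝ)+1)) * z ^ (2*k+1))
      (∑' k : ℕ, d (1/2) k * (x^2) ^ k) x := by
  set r : ℝ := (|x| + 1) / 2 with hr
  have hxr : |x| < r := by rw [hr]; linarith [abs_nonneg x]
  have hr0 : 0 < r := by positivity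
  have hr1 : r < 1 := by rw [hr]; linarith
  have hrabs : |r| < 1 := by rw [abs_of_pos hr0]; exact hr1
  refine hasDerivAt_tsum_of_isPreconnected
    (g := fun (k : ℕ) (z : ℝ) => (d (1/2) k / (2*(k:ℝ)+1)) * z ^ (2*k+1))
    (g' := fun (k : ℕ) (y : ℝ) => d (1/2) k * (y^2) ^ k)
    (u := fun k : ℕ => d (1/2) k * (r^2) ^ k)
    (t := Metric.ball (0:ℝ) r) (y₀ := (0:ℝ))
    (summable_d_mul half_pos' (sq_lt_one_of_abs_lt hrabs)) Metric.isOpen_ball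
    ((convex_ball (0:ℝ) r).isPreconnected) ?_ ?_ ?_ ?_ ?_
  · intro k y _
    have hbase := (hasDerivAt_pow (2*k+1) y).const_mul (d (1/2) k / (2*(k:ℝ)+1))
    convert hbase using 1
    show d (1/2) k * (y^2)^k = d (1/2) k / (2*(k:ℝ)+1) * (((2*k+1:ℕ):ℝ) * y ^ (2*k+1-1))
    have hsub : 2*k+1-1 = 2*k := rfl
    rw [hsub, ← pow_mul]
    have h21 : (2*(k:ℝ)+1) ≠ 0 := by positivity
    push_cast
    field_simp
    rfl
  · intro k y hy
    have hyr : |y| < r := by simpa [Real.dist_eq] using hy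
    have hd := d_pos half_pos' k
    rw [norm_mul, Real.norm_eq_abs, Real.norm_eq_abs, abs_of_pos hd, abs_pow]
    apply mul_le_mul_of_nonneg_left ?_ hd.le
    apply pow_le_pow_left₀ (abs_nonneg _)
    rw [abs_of_nonneg (sq_nonneg y)]
    nlinarith [abs_nonneg y, sq_abs y]
  · show (0:ℝ) ∈ Metric.ball (0:ℝ) r
    simpa using hr0
  · apply summable_of_ne_finset_zero (s := (∅ : Finset ℕ))
    intro k _
    simp
  · show x ∈ Metric.ball (0:ℝ) r
    simpa [Real.dist_eq] using hxr

lemma hasSum_arcsin {t : ℝ} (ht : |t| < 1) :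
    HasSum (fun k : ℕ => (d (1/2) k / (2*(k:ℝ)+1)) * t ^ (2*k+1)) (Real.arcsin t) := by
  set G : ℝ → ℝ := fun z => ∑' k : ℕ, (d (1/2) k / (2*(k:ℝ)+1)) * z ^ (2*k+1) with hG
  set Φ : ℝ → ℝ := fun z => G z - Real.arcsin z with hΦ
  have key : ∀ x : ℝ, |x| < 1 → HasDerivAt Φ 0 x := by
    intro x hx
    have hx' := abs_lt.1 hx
    have h1x : (0:ℝ) < 1 - x^2 := by nlinarith
    have hGd := hasDerivAt_arcsin_series hx
    have hAd := Real.hasDerivAt_arcsin (by linarith : x ≠ -1) (by linarith : x ≠ 1)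
    have heq : (∑' k : ℕ, d (1/2) k * (x^2) ^ k) = 1 / Real.sqrt (1 - x^2) := by
      rw [(hasSum_binomial half_pos' (sq_lt_one_of_abs_lt hx)).tsum_eq]
      rw [Real.sqrt_eq_rpow, Real.rpow_neg h1x.le]
      norm_num
    have := hGd.sub hAd
    rw [hΦ]
    refine this.congr_deriv ?_
    symm
    rw [heq]
    ring
  have hconst := eq_at_zero_of_deriv_zero key ht
  have hΦ0 : Φ 0 = 0 := by
    have hG0 : G 0 = 0 := by
      have : G 0 = ∑' k : ℕ, (d (1/2) k / (2*(k:ℝ)+1)) * (0:ℝ) ^ (2*k+1) := rfl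
      rw [this]
      convert tsum_zero with k
      simp
    simp [hΦ, hG0]
  have hGt : G t = Real.arcsin t := by
    have : Φ t = 0 := by rw [hconst, hΦ0]
    rw [hΦ] at this
    simpa [sub_eq_zero] using this
  have := (summable_arcsin_series ht).hasSum
  rwa [show (∑' k : ℕ, (d (1/2) k / (2*(k:ℝ)+1)) * t ^ (2*k+1)) = Real.arcsin t from hGt] at this

/-- Taylor coefficients of `arcsin`. -/
def cc : ℕ → ℝ := fun n => if n % 2 = 1 then d (1/2) (n / 2) / (n:ℝ) else 0

lemma cc_nonneg (n : ℕ) : 0 ≤ cc n := by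
  unfold cc
  split
  · have hd := d_pos half_pos' (n / 2)
    have hn : 0 < n := by omega
    positivity
  · exact le_refl 0

lemma cc_one : cc 1 = 1 := by
  unfold cc
  norm_num
  simp [d]

lemma cc_zero : cc 0 = 0 := by unfold cc; norm_num

lemma hasSum_cc {t : ℝ} (ht : |t| < 1) :
    HasSum (fun n : ℕ => cc n * t ^ n) (Real.arcsin t) := by
  have hinj : Function.Injective (fun k : ℕ => 2*k+1) := by
    intro a b hab
    simp only [] at hab
    omega
  have hvanish : ∀ n, n ∉ Set.range (fun k : ℕ => 2*k+1) → cc n * t ^ n = 0 := by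
    intro n hn
    have hev : n % 2 = 0 := by
      by_contra h
      exact hn ⟨n / 2, by simp only []; omega⟩
    unfold cc
    rw [if_neg (by omega)]
    ring
  rw [← Function.Injective.hasSum_iff hinj hvanish]
  have hfun : ((fun n : ℕ => cc n * t ^ n) ∘ (fun k : ℕ => 2*k+1))
      = fun k : ℕ => (d (1/2) k / (2*(k:ℝ)+1)) * t ^ (2*k+1) := by
    funext k
    simp only [Function.comp_apply]
    unfold cc
    rw [if_pos (by omega : (2*k+1) % 2 = 1)]
    have h2 : (2*k+1)/2 = k := by omega
    rw [h2]
    push_cast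
    ring
  rw [hfun]
  exact hasSum_arcsin ht

/-- Convolution powers of the arcsin coefficients. -/
def P : ℕ → ℕ → ℝ
  | 0, n => if n = 0 then 1 else 0
  | (k+1), n => ∑ p ∈ Finset.HasAntidiagonal.antidiagonal n, P k p.1 * cc p.2

lemma P_nonneg : ∀ k n, 0 ≤ P k n
  | 0, n => by unfold P; split <;> norm_num
  | (k+1), n => by
      unfold P
      apply Finset.sum_nonneg
      intro p _
      exact mul_nonneg (P_nonneg k p.1) (cc_nonneg p.2)

lemma P_eval : ∀ k, (∀ n, n < k → P k n = 0) ∧ P k k = 1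
  | 0 => ⟨fun n hn => absurd hn (Nat.not_lt_zero n), by unfold P; norm_num⟩
  | (k+1) => by
      obtain ⟨ih0, ih1⟩ := P_eval k
      constructor
      · intro n hn
        unfold P
        apply Finset.sum_eq_zero
        intro p hp
        rw [Finset.HasAntidiagonal.mem_antidiagonal] at hp
        rcases Nat.eq_zero_or_pos p.2 with h2 | h2
        · rw [h2, cc_zero, mul_zero]
        · have : p.1 < k := by omega
          rw [ih0 p.1 this, zero_mul]
      · unfold P
        rw [Finset.sum_eq_single_of_mem (k, 1) (by rw [Finset.HasAntidiagonal.mem_antidiagonal])]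
        · rw [ih1, cc_one]; norm_num
        · intro p hp hne
          rw [Finset.HasAntidiagonal.mem_antidiagonal] at hp
          rcases Nat.eq_zero_or_pos p.2 with h2 | h2
          · rw [h2, cc_zero, mul_zero]
          · have h1 : p.1 < k := by
              rcases Nat.lt_or_ge p.1 k with h | h
              · exact h
              · exfalso
                have : p.1 = k ∧ p.2 = 1 := by omega
                exact hne (Prod.ext this.1 this.2)
            rw [ih0 p.1 h1, zero_mul]

lemma P_succ (k n : ℕ) : P (k+1) n = ∑ p ∈ Finset.HasAntidiagonal.antidiagonal n, P k p.1 * cc p.2 := rfl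

lemma norm_summable_P {k : ℕ} {t : ℝ} (ht : |t| < 1)
    (h : HasSum (fun n : ℕ => P k n * |t| ^ n) (Real.arcsin |t| ^ k)) :
    Summable (fun n : ℕ => ‖P k n * t ^ n‖) := by
  apply h.summable.congr
  intro n
  rw [Real.norm_eq_abs, abs_mul, abs_pow, abs_of_nonneg (P_nonneg k n)]

lemma norm_summable_cc {t : ℝ} (ht : |t| < 1) :
    Summable (fun n : ℕ => ‖cc n * t ^ n‖) := by
  have h := hasSum_cc (t := |t|) (by rwa [abs_abs])
  apply h.summable.congr
  intro n
  rw [Real.norm_eq_abs, abs_mul, abs_pow, abs_of_nonneg (cc_nonneg n)]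

lemma hasSum_P (k : ℕ) : ∀ t : ℝ, |t| < 1 →
    HasSum (fun n : ℕ => P k n * t ^ n) (Real.arcsin t ^ k) := by
  induction k with
  | zero =>
      intro t ht
      have : HasSum (fun n : ℕ => P 0 n * t ^ n) (P 0 0 * t ^ 0) := by
        apply hasSum_single
        intro n hn
        unfold P
        rw [if_neg hn, zero_mul]
      simpa [P] using this
  | succ k ih =>
      intro t ht
      have habs : |(|t|)| < 1 := by rwa [abs_abs]
      have h1 := ih t ht
      have h1' := ih |t| habs
      have hc := hasSum_cc ht
      have hPn := norm_summable_P ht h1'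
      have hccn := norm_summable_cc ht
      have hsum2 := summable_sum_mul_antidiagonal_of_summable_norm' hPn h1.summable hccn hc.summable
      have htsum := tsum_mul_tsum_eq_tsum_sum_antidiagonal_of_summable_norm hPn hccn
      rw [h1.tsum_eq, hc.tsum_eq] at htsum
      have heq : (fun n : ℕ => ∑ p ∈ Finset.HasAntidiagonal.antidiagonal n, (P k p.1 * t ^ p.1) * (cc p.2 * t ^ p.2))
          = fun n : ℕ => P (k+1) n * t ^ n := by
        funext n
        rw [P_succ, Finset.sum_mul]
        apply Finset.sum_congr rfl
        intro p hp
        rw [Finset.HasAntidiagonal.mem_antidiagonal] at hp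
        rw [← hp, pow_add]
        ring
      have h2 : Summable (fun n : ℕ => P (k+1) n * t ^ n) := by
        rw [← heq]; exact hsum2
      have h3 : Real.arcsin t ^ k * Real.arcsin t = ∑' n : ℕ, P (k+1) n * t ^ n := by
        rw [htsum]
        exact tsum_congr fun n => congrFun heq n
      rw [pow_succ]
      exact h3 ▸ h2.hasSum

lemma abs_arcsin_eq (t : ℝ) : |Real.arcsin t| = Real.arcsin |t| := by
  rcases le_or_gt 0 t with h | h
  · rw [abs_of_nonneg h, abs_of_nonneg (Real.arcsin_nonneg.2 h)]
  · rw [abs_of_neg h, abs_of_neg (Real.arcsin_lt_zero.2 h), ← Real.arcsin_neg]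

lemma F2_summable {s A : ℝ} (hs : 0 < s) (hA : π/2 ≤ A) {t : ℝ} (ht : |t| < 1) :
    Summable (fun p : ℕ × ℕ => d s p.1 * A⁻¹ ^ p.1 * P p.1 p.2 * t ^ p.2) := by
  have hπ := Real.pi_pos
  have hA0 : (0:ℝ) < A := lt_of_lt_of_le (half_pos hπ) hA
  have habs : |(|t|)| < 1 := by rwa [abs_abs]
  have harc0 : 0 ≤ Real.arcsin |t| := Real.arcsin_nonneg.2 (abs_nonneg t)
  have harclt : Real.arcsin |t| < π/2 := Real.arcsin_lt_pi_div_two.2 ht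
  set q : ℝ := Real.arcsin |t| / A with hq
  have hq0 : 0 ≤ q := by positivity
  have hq1 : q < 1 := by rw [hq, div_lt_one hA0]; linarith
  rw [← summable_abs_iff]
  have habs_eq : (fun p : ℕ × ℕ => |d s p.1 * A⁻¹ ^ p.1 * P p.1 p.2 * t ^ p.2|)
      = fun p : ℕ × ℕ => d s p.1 * A⁻¹ ^ p.1 * P p.1 p.2 * |t| ^ p.2 := by
    funext p
    have h1 := d_pos hs p.1
    have h2 := P_nonneg p.1 p.2
    rw [abs_mul, abs_pow, abs_mul, abs_mul, abs_of_pos h1, abs_of_nonneg h2,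
      abs_pow, abs_of_nonneg (inv_nonneg.2 hA0.le)]
  rw [habs_eq]
  apply (summable_prod_of_nonneg ?_).2 ⟨?_, ?_⟩
  · intro p
    have h1 := d_pos hs p.1
    have h2 := P_nonneg p.1 p.2
    have h3 : (0:ℝ) ≤ A⁻¹ ^ p.1 := by positivity
    positivity
  · intro k
    apply ((hasSum_P k |t| habs).mul_left (d s k * A⁻¹ ^ k)).summable.congr
    intro n
    ring
  · have hrowsum : ∀ k : ℕ, (∑' n : ℕ, d s k * A⁻¹ ^ k * P k n * |t| ^ n)
        = d s k * q ^ k := by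
      intro k
      have h := ((hasSum_P k |t| habs).mul_left (d s k * A⁻¹ ^ k)).tsum_eq
      have heq : (fun n : ℕ => d s k * A⁻¹ ^ k * (P k n * |t| ^ n))
          = fun n : ℕ => d s k * A⁻¹ ^ k * P k n * |t| ^ n := by
        funext n; ring
      rw [heq] at h
      rw [h, hq, div_pow, div_eq_mul_inv, ← inv_pow]
      ring
    simp only [hrowsum]
    exact summable_d_mul hs (by rwa [abs_of_nonneg hq0])

theorem main_aux (s ε : ℝ) (hs : 0 < s)
    (hε : ε ∈ Set.Ico (0 : ℝ) 1) :
    ∃ a : ℕ → ℝ, (∀ k : ℕ, 0 < a k) ∧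
      ∀ t : ℝ, |t| < 1 →
        HasSum (fun k : ℕ => a k * t ^ k) ((ε + Real.arccos t) ^ (-s)) := by
  obtain ⟨hε0, hε1⟩ := hε
  have hπ := Real.pi_pos
  obtain ⟨A, hAdef⟩ : ∃ A : ℝ, A = ε + π/2 := ⟨_, rfl⟩
  have hA : π/2 ≤ A := by rw [hAdef]; linarith
  have hA0 : (0:ℝ) < A := lt_of_lt_of_le (half_pos hπ) hA
  have hSn : ∀ n : ℕ, Summable (fun k : ℕ => d s k * A⁻¹ ^ k * P k n) := by
    intro n
    have hhalf : |(1/2 : ℝ)| < 1 := by rw [abs_of_pos (by norm_num : (0:ℝ) < 1/2)]; norm_num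
    have h1 : Summable (fun k : ℕ => d s k * A⁻¹ ^ k * P k n * (1/2:ℝ) ^ n) :=
      ((F2_summable hs hA hhalf).prod_symm).prod_factor n
    apply (h1.mul_right ((2:ℝ) ^ n)).congr
    intro k
    have : ((1:ℝ)/2) ^ n * 2 ^ n = 1 := by
      rw [← mul_pow]; norm_num
    calc d s k * A⁻¹ ^ k * P k n * (1/2:ℝ) ^ n * 2 ^ n
        = d s k * A⁻¹ ^ k * P k n * ((1/2:ℝ) ^ n * 2 ^ n) := by ring
      _ = d s k * A⁻¹ ^ k * P k n := by rw [this, mul_one]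
  refine ⟨fun n => A ^ (-s) * ∑' k : ℕ, d s k * A⁻¹ ^ k * P k n, fun n => ?_, fun t ht => ?_⟩
  · have h1 : (0:ℝ) < A ^ (-s) := Real.rpow_pos_of_pos hA0 _
    have hterm : 0 < d s n * A⁻¹ ^ n * P n n := by
      rw [(P_eval n).2]
      have := d_pos hs n
      positivity
    have h2 : d s n * A⁻¹ ^ n * P n n ≤ ∑' k : ℕ, d s k * A⁻¹ ^ k * P k n := by
      apply Summable.le_tsum (hSn n) n
      intro k _
      have h3 := d_pos hs k
      have h4 := P_nonneg k n
      positivity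
    exact mul_pos h1 (lt_of_lt_of_le hterm h2)
  · have habs : |(|t|)| < 1 := by rwa [abs_abs]
    set u : ℝ := Real.arcsin t / A with hu_def
    have harclt : Real.arcsin |t| < π/2 := Real.arcsin_lt_pi_div_two.2 ht
    have harc0 : 0 ≤ Real.arcsin |t| := Real.arcsin_nonneg.2 (abs_nonneg t)
    have hu : |u| < 1 := by
      rw [hu_def, abs_div, abs_of_pos hA0, div_lt_one hA0, abs_arcsin_eq]
      linarith
    have h1u : (0:ℝ) < 1 - u := by
      have := (abs_lt.1 hu).2
      linarith
    have hF2 := F2_summable hs hA ht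
    have hrow : ∀ k : ℕ, HasSum (fun n : ℕ => d s k * A⁻¹ ^ k * P k n * t ^ n)
        (d s k * A⁻¹ ^ k * Real.arcsin t ^ k) := by
      intro k
      have h := (hasSum_P k t ht).mul_left (d s k * A⁻¹ ^ k)
      have heq : (fun n : ℕ => d s k * A⁻¹ ^ k * (P k n * t ^ n))
          = fun n : ℕ => d s k * A⁻¹ ^ k * P k n * t ^ n := by
        funext n; ring
      rwa [heq] at h
    have hway1 : HasSum (fun k : ℕ => d s k * A⁻¹ ^ k * Real.arcsin t ^ k)
        (∑' p : ℕ × ℕ, d s p.1 * A⁻¹ ^ p.1 * P p.1 p.2 * t ^ p.2) :=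
      hF2.hasSum.prod_fiberwise hrow
    have hbin : HasSum (fun k : ℕ => d s k * u ^ k) ((1 - u) ^ (-s)) :=
      hasSum_binomial hs hu
    have hfun : (fun k : ℕ => d s k * A⁻¹ ^ k * Real.arcsin t ^ k)
        = fun k : ℕ => d s k * u ^ k := by
      funext k
      rw [hu_def, div_pow, div_eq_mul_inv, ← inv_pow]
      ring
    rw [hfun] at hway1
    have hT : (∑' p : ℕ × ℕ, d s p.1 * A⁻¹ ^ p.1 * P p.1 p.2 * t ^ p.2)
        = (1 - u) ^ (-s) := hway1.unique hbin
    have hslice : ∀ n : ℕ, Summable (fun k : ℕ => d s k * A⁻¹ ^ k * P k n * t ^ n) :=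
      fun n => (hF2.prod_symm).prod_factor n
    have hway2 : HasSum (fun n : ℕ => ∑' k : ℕ, d s k * A⁻¹ ^ k * P k n * t ^ n)
        (∑' p : ℕ × ℕ, d s p.1 * A⁻¹ ^ p.1 * P p.1 p.2 * t ^ p.2) :=
      (((Equiv.prodComm ℕ ℕ).hasSum_iff).2 hF2.hasSum).prod_fiberwise
        fun n => (hslice n).hasSum
    have hinner : ∀ n : ℕ, (∑' k : ℕ, d s k * A⁻¹ ^ k * P k n * t ^ n)
        = (∑' k : ℕ, d s k * A⁻¹ ^ k * P k n) * t ^ n := fun n => tsum_mul_right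
    simp only [hinner, hT] at hway2
    have hfinal := hway2.mul_left (A ^ (-s))
    have hshape : (fun n : ℕ => A ^ (-s) * ((∑' k : ℕ, d s k * A⁻¹ ^ k * P k n) * t ^ n))
        = fun n : ℕ => (A ^ (-s) * ∑' k : ℕ, d s k * A⁻¹ ^ k * P k n) * t ^ n := by
      funext n; ring
    rw [hshape] at hfinal
    have hval : ε + Real.arccos t = A * (1 - u) := by
      rw [Real.arccos_eq_pi_div_two_sub_arcsin, hu_def, hAdef]
      field_simp
      ring
    rw [hval, Real.mul_rpow hA0.le h1u.le]
    exact hfinal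

end GeoAux

end

/-- For `s > 0` and `ε ∈ [0,1)`, the function `F(t) = (ε + arccos t)^{-s}`
has a power series expansion on `(-1,1)` with all coefficients strictly positive. -/
theorem geodesic_neg_power_pos_coeffs (s ε : ℝ) (hs : 0 < s)
    (hε : ε ∈ Set.Ico (0 : ℝ) 1) :
    ∃ a : ℕ → ℝ, (∀ k : ℕ, 0 < a k) ∧
      ∀ t : ℝ, |t| < 1 →
        HasSum (fun k : ℕ => a k * t ^ k) ((ε + Real.arccos t) ^ (-s)) := by
  exact GeoAux.main_aux s ε hs hε
end

section
/- Let ε ∈ (0,1). Then the function F(t) = log(π/(ε + arccos t)) has a power series expansion F(t) = a_0 + Σ_{k≥1} a_k t^k valid for |t| < 1 in which every coefficient a_k with k ≥ 1 is strictly positive. -/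
open Real Finset MeasureTheory

noncomputable def uu : ℕ → ℝ
  | 0 => 1
  | (k+1) => uu k * (2*k+1) / (2*k+2)

lemma uu_pos : ∀ k, 0 < uu k
  | 0 => one_pos
  | (k+1) => by
      have h := uu_pos k
      simp only [uu]
      positivity

lemma uu_le_one : ∀ k, uu k ≤ 1
  | 0 => le_refl 1
  | (k+1) => by
      have h := uu_le_one k
      have hp := (uu_pos k).le
      simp only [uu]
      rw [div_le_one (by positivity)]
      nlinarith

lemma uu_rec (k : ℕ) : (2*(k:ℝ)+2) * uu (k+1) = (2*(k:ℝ)+1) * uu k := by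
  simp only [uu]
  field_simp

lemma twos (m : ℕ) :
    (∑ i ∈ range (m+1), (2*(i:ℝ)) * (uu i * uu (m-i))) * 2
      = (2*(m:ℝ)) * ∑ i ∈ range (m+1), uu i * uu (m-i) := by
  have h : ∑ i ∈ range (m+1), (2*(i:ℝ)) * (uu i * uu (m-i))
        = ∑ i ∈ range (m+1), (2*((m-i : ℕ):ℝ)) * (uu i * uu (m-i)) := by
    rw [← Finset.sum_range_reflect (fun i => (2*(i:ℝ)) * (uu i * uu (m-i))) (m+1)]
    refine Finset.sum_congr rfl fun j hj => ?_
    have hj' : j ≤ m := Nat.lt_succ_iff.mp (Finset.mem_range.mp hj)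
    simp only [Nat.add_sub_cancel]
    rw [Nat.sub_sub_self hj']
    ring
  calc (∑ i ∈ range (m+1), (2*(i:ℝ)) * (uu i * uu (m-i))) * 2
      = (∑ i ∈ range (m+1), (2*(i:ℝ)) * (uu i * uu (m-i)))
        + (∑ i ∈ range (m+1), (2*((m-i:ℕ):ℝ)) * (uu i * uu (m-i))) := by rw [← h]; ring
    _ = ∑ i ∈ range (m+1), (2*(m:ℝ)) * (uu i * uu (m-i)) := by
        rw [← Finset.sum_add_distrib]
        refine Finset.sum_congr rfl fun i hi => ?_
        have hi' : i ≤ m := Nat.lt_succ_iff.mp (Finset.mem_range.mp hi)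
        have : ((m - i : ℕ):ℝ) = (m:ℝ) - (i:ℝ) := by
          rw [Nat.cast_sub hi']
        rw [this]; ring
    _ = (2*(m:ℝ)) * ∑ i ∈ range (m+1), uu i * uu (m-i) := by rw [Finset.mul_sum]

lemma conv : ∀ n : ℕ, ∑ i ∈ range (n+1), uu i * uu (n-i) = 1
  | 0 => by simp [uu]
  | (n+1) => by
      have ih := conv n
      have h1 := twos (n+1)
      have h2 : ∑ i ∈ range (n+2), (2*(i:ℝ)) * (uu i * uu (n+1-i))
          = ∑ i ∈ range (n+1), (2*(i:ℝ)+1) * (uu i * uu (n-i)) := by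
        rw [Finset.sum_range_succ' (fun i => (2*(i:ℝ)) * (uu i * uu (n+1-i))) (n+1)]
        simp only [Nat.cast_zero, mul_zero, zero_mul, add_zero]
        refine Finset.sum_congr rfl fun i hi => ?_
        have hs : n + 1 - (i+1) = n - i := by omega
        rw [hs]
        have h5 : (2*(i:ℝ)+2) * uu (i+1) * uu (n-i) = (2*(i:ℝ)+1) * uu i * uu (n-i) := by
          rw [uu_rec i]
        push_cast
        linear_combination h5
      have h3 := twos n
      rw [ih] at h3
      -- h2 RHS = twos n sum + conv n sum
      have h4 : ∑ i ∈ range (n+1), (2*(i:ℝ)+1) * (uu i * uu (n-i))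
          = (∑ i ∈ range (n+1), (2*(i:ℝ)) * (uu i * uu (n-i)))
            + ∑ i ∈ range (n+1), uu i * uu (n-i) := by
        rw [← Finset.sum_add_distrib]
        exact Finset.sum_congr rfl fun i _ => by ring
      rw [h2, h4, ih] at h1
      have hn : (0:ℝ) < 2*(n:ℝ)+2 := by positivity
      have := h1
      push_cast at this
      nlinarith [this, h3]
lemma hasSum_S {x : ℝ} (h0 : 0 ≤ x) (h1 : x < 1) :
    HasSum (fun k => uu k * x ^ k) (1 / Real.sqrt (1 - x)) := by
  have hterm_nonneg : ∀ k : ℕ, 0 ≤ uu k * x ^ k := fun k =>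
    mul_nonneg (uu_pos k).le (pow_nonneg h0 k)
  have hsum : Summable (fun k => uu k * x ^ k) := by
    refine Summable.of_nonneg_of_le hterm_nonneg (fun k => ?_)
      (summable_geometric_of_lt_one h0 h1)
    calc uu k * x^k ≤ 1 * x^k :=
          mul_le_mul_of_nonneg_right (uu_le_one k) (pow_nonneg h0 k)
      _ = x^k := one_mul _
  have hP := hsum.hasSum
  set P := ∑' k, uu k * x ^ k with hPdef
  have hnormeq : (fun k => ‖uu k * x ^ k‖) = fun k => uu k * x ^ k :=
    funext fun k => Real.norm_of_nonneg (hterm_nonneg k)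
  have hnorm : Summable (fun k => ‖uu k * x ^ k‖) := by rw [hnormeq]; exact hsum
  have hmul := tsum_mul_tsum_eq_tsum_sum_antidiagonal_of_summable_norm hnorm hnorm
  have hinner : ∀ n : ℕ, ∑ kl ∈ Finset.HasAntidiagonal.antidiagonal n,
      (uu kl.1 * x^kl.1) * (uu kl.2 * x^kl.2) = x ^ n := by
    intro n
    rw [Finset.Nat.sum_antidiagonal_eq_sum_range_succ_mk]
    have hc : ∀ i ∈ range (n+1),
        (uu i * x^i) * (uu (n-i) * x^(n-i)) = (uu i * uu (n-i)) * x^n := by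
      intro i hi
      have hi' : i ≤ n := Nat.lt_succ_iff.mp (Finset.mem_range.mp hi)
      have : x^i * x^(n-i) = x^n := by rw [← pow_add, Nat.add_sub_cancel' hi']
      calc (uu i * x^i) * (uu (n-i) * x^(n-i)) = (uu i * uu (n-i)) * (x^i * x^(n-i)) := by ring
        _ = (uu i * uu (n-i)) * x^n := by rw [this]
    rw [Finset.sum_congr rfl hc, ← Finset.sum_mul, conv n, one_mul]
  have hPP : P * P = (1-x)⁻¹ := by
    rw [hmul, tsum_congr hinner, tsum_geometric_of_lt_one h0 h1]
  have hP1 : (1:ℝ) ≤ P := by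
    have h := le_hasSum hP 0 (fun j _ => hterm_nonneg j)
    simpa [uu] using h
  have hPnn : 0 ≤ P := le_trans zero_le_one hP1
  have hfin : P = 1 / Real.sqrt (1-x) := by
    have h2 : P = Real.sqrt (P * P) := (Real.sqrt_mul_self hPnn).symm
    rw [h2, hPP, Real.sqrt_inv, one_div]
  rw [← hfin]
  exact hP
lemma hasSum_arcsin_nonneg {t : ℝ} (h0 : 0 ≤ t) (h1 : t < 1) :
    HasSum (fun k : ℕ => uu k * t ^ (2*k+1) / (2*k+1)) (Real.arcsin t) := by
  set μ := volume.restrict (Set.Ioc (0:ℝ) t) with hμ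
  have hFi : ∀ k : ℕ, Integrable (fun s : ℝ => uu k * s ^ (2*k)) μ := by
    intro k
    exact (continuous_const.mul (continuous_pow (2*k))).integrableOn_Ioc
  have hval : ∀ k : ℕ, ∫ s, uu k * s^(2*k) ∂μ = uu k * t^(2*k+1) / (2*k+1) := by
    intro k
    rw [hμ, ← intervalIntegral.integral_of_le h0, intervalIntegral.integral_const_mul,
      integral_pow]
    have : (0:ℝ)^(2*k+1) = 0 := zero_pow (by omega)
    rw [this]
    push_cast
    ring
  have hnormint : ∀ k : ℕ, ∫ s, ‖uu k * s^(2*k)‖ ∂μ = uu k * t^(2*k+1) / (2*k+1) := by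
    intro k
    have he : (fun s : ℝ => ‖uu k * s^(2*k)‖) = fun s => uu k * s^(2*k) := by
      funext s
      refine Real.norm_of_nonneg (mul_nonneg (uu_pos k).le ?_)
      rw [pow_mul]
      positivity
    rw [he, hval k]
  have hFsum : Summable (fun k : ℕ => ∫ s, ‖uu k * s^(2*k)‖ ∂μ) := by
    have ht2 : t^2 < 1 := by nlinarith
    have ht2' : 0 ≤ t^2 := sq_nonneg t
    refine Summable.of_nonneg_of_le (fun k => ?_) (fun k => ?_)
      (summable_geometric_of_lt_one ht2' ht2)
    · rw [hnormint k]
      have : 0 ≤ t^(2*k+1) := pow_nonneg h0 _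
      exact div_nonneg (mul_nonneg (uu_pos k).le this) (by positivity)
    · rw [hnormint k]
      have e1 : uu k * t^(2*k+1) / (2*k+1) ≤ t^(2*k+1) := by
        have hp : 0 ≤ t^(2*k+1) := pow_nonneg h0 _
        have e2 : uu k * t^(2*k+1) ≤ t^(2*k+1) := by
          calc uu k * t^(2*k+1) ≤ 1 * t^(2*k+1) :=
                mul_le_mul_of_nonneg_right (uu_le_one k) hp
            _ = t^(2*k+1) := one_mul _
        have e3 : uu k * t^(2*k+1) / (2*k+1) ≤ uu k * t^(2*k+1) / 1 := by
          apply div_le_div_of_nonneg_left ?_ one_pos ?_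
          · exact mul_nonneg (uu_pos k).le hp
          · push_cast; linarith [Nat.cast_nonneg (α := ℝ) k]
        rw [div_one] at e3
        exact e3.trans e2
      refine e1.trans ?_
      calc t^(2*k+1) = (t^2)^k * t := by rw [← pow_mul, ← pow_succ]
        _ ≤ (t^2)^k * 1 := by
            apply mul_le_mul_of_nonneg_left h1.le (pow_nonneg ht2' k)
        _ = (t^2)^k := mul_one _
  have hkey := MeasureTheory.hasSum_integral_of_summable_integral_norm hFi hFsum
  have hint : (∫ s, (∑' k : ℕ, uu k * s^(2*k)) ∂μ) = Real.arcsin t := by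
    have h1' : ∀ s ∈ Set.Ioc (0:ℝ) t, (∑' k : ℕ, uu k * s^(2*k)) = 1 / Real.sqrt (1 - s^2) := by
      intro s hs
      have hs1 : s^2 < 1 := by nlinarith [hs.1, hs.2]
      have hkey2 := (hasSum_S (sq_nonneg s) hs1).tsum_eq
      rw [← hkey2]
      exact tsum_congr fun k => by rw [pow_mul]
    rw [hμ, MeasureTheory.setIntegral_congr_fun measurableSet_Ioc h1',
      ← intervalIntegral.integral_of_le h0]
    have hderiv : ∀ x ∈ Set.uIcc (0:ℝ) t,
        HasDerivAt Real.arcsin (1 / Real.sqrt (1 - x^2)) x := by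
      intro x hx
      rw [Set.uIcc_of_le h0] at hx
      exact Real.hasDerivAt_arcsin (by intro h; rw [h] at hx; linarith [hx.1])
        (by intro h; rw [h] at hx; linarith [hx.2])
    have hcont : ContinuousOn (fun x : ℝ => 1 / Real.sqrt (1 - x^2)) (Set.uIcc 0 t) := by
      apply ContinuousOn.div continuousOn_const
      · exact (Real.continuous_sqrt.comp (by continuity)).continuousOn
      · intro x hx
        rw [Set.uIcc_of_le h0] at hx
        have : 0 < 1 - x^2 := by nlinarith [hx.1, hx.2]
        positivity
    rw [intervalIntegral.integral_eq_sub_of_hasDerivAt hderiv (hcont.intervalIntegrable)]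
    simp [Real.arcsin_zero]
  rw [hint] at hkey
  exact (funext hval : (fun k : ℕ => ∫ s, uu k * s^(2*k) ∂μ) = _) ▸ hkey
noncomputable def bb : ℕ → ℝ := fun k => if Odd k then uu (k/2) / k else 0

lemma bb_nonneg (k : ℕ) : 0 ≤ bb k := by
  unfold bb
  split_ifs
  · exact div_nonneg (uu_pos _).le (Nat.cast_nonneg k)
  · exact le_refl 0

lemma bb_one : bb 1 = 1 := by
  simp [bb, uu]

lemma hasSum_bb_nonneg {t : ℝ} (h0 : 0 ≤ t) (h1 : t < 1) :
    HasSum (fun k : ℕ => bb k * t ^ k) (Real.arcsin t) := by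
  have base := hasSum_arcsin_nonneg h0 h1
  have hinj : Function.Injective (fun m : ℕ => 2*m+1) := fun a b h => by dsimp only at h; omega
  have hzero : ∀ k : ℕ, k ∉ Set.range (fun m : ℕ => 2*m+1) → bb k * t ^ k = 0 := by
    intro k hk
    have hne : ¬ Odd k := by
      rintro ⟨m, hm⟩; exact hk ⟨m, by dsimp only; omega⟩
    simp [bb, hne]
  rw [← Function.Injective.hasSum_iff hinj hzero]
  have he : ((fun k : ℕ => bb k * t ^ k) ∘ (fun m : ℕ => 2*m+1))
      = fun m : ℕ => uu m * t ^ (2*m+1) / (2*m+1) := by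
    funext m
    have hodd : Odd (2*m+1) := ⟨m, by omega⟩
    have hdiv : (2*m+1)/2 = m := by omega
    simp only [Function.comp, bb, if_pos hodd, hdiv]
    push_cast
    ring
  rw [he]
  exact base

lemma hasSum_bb {t : ℝ} (h : |t| < 1) :
    HasSum (fun k : ℕ => bb k * t ^ k) (Real.arcsin t) := by
  rcases le_or_gt 0 t with ht | ht
  · exact hasSum_bb_nonneg ht (lt_of_abs_lt h)
  · have habs := abs_lt.mp h
    have hn := (hasSum_bb_nonneg (by linarith : (0:ℝ) ≤ -t) (by linarith)).neg
    rw [← Real.arcsin_neg, neg_neg] at hn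
    have he : (fun k : ℕ => -(bb k * (-t) ^ k)) = fun k : ℕ => bb k * t ^ k := by
      funext k
      by_cases hodd : Odd k
      · rw [hodd.neg_pow]; ring
      · simp [bb, hodd]
    rwa [he] at hn

noncomputable def BB : ℕ → ℕ → ℝ
  | 0, k => if k = 0 then 1 else 0
  | (n+1), k => ∑ ij ∈ Finset.HasAntidiagonal.antidiagonal k, bb ij.1 * BB n ij.2

lemma BB_succ (n k : ℕ) :
    BB (n+1) k = ∑ ij ∈ Finset.HasAntidiagonal.antidiagonal k, bb ij.1 * BB n ij.2 := rfl

lemma BB_nonneg : ∀ n k, 0 ≤ BB n k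
  | 0, k => by unfold BB; split_ifs <;> norm_num
  | (n+1), k => Finset.sum_nonneg fun ij _ => mul_nonneg (bb_nonneg _) (BB_nonneg n ij.2)

lemma BB_hasSum (n : ℕ) : ∀ (t : ℝ), |t| < 1 →
    HasSum (fun k : ℕ => BB n k * t ^ k) (Real.arcsin t ^ n) := by
  induction n with
  | zero =>
    intro t ht
    have he : (fun k : ℕ => BB 0 k * t ^ k) = fun k : ℕ => if k = 0 then 1 else 0 := by
      funext k
      by_cases h : k = 0
      · subst h; simp [BB]
      · simp [BB, h]
    rw [he, pow_zero]
    exact hasSum_ite_eq 0 1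
  | succ n ih =>
    intro t ht
    have habs_t : |(|t|)| < 1 := by rwa [abs_abs]
    have hb := hasSum_bb ht
    have hbabs := hasSum_bb habs_t
    have ihs := ih t ht
    have ihabs := ih |t| habs_t
    have hnb : Summable (fun k : ℕ => ‖bb k * t ^ k‖) := by
      have he : (fun k : ℕ => ‖bb k * t ^ k‖) = fun k : ℕ => bb k * |t| ^ k := by
        funext k
        rw [Real.norm_eq_abs, abs_mul, abs_of_nonneg (bb_nonneg k), abs_pow]
      rw [he]; exact hbabs.summable
    have hnB : Summable (fun k : ℕ => ‖BB n k * t ^ k‖) := by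
      have he : (fun k : ℕ => ‖BB n k * t ^ k‖) = fun k : ℕ => BB n k * |t| ^ k := by
        funext k
        rw [Real.norm_eq_abs, abs_mul, abs_of_nonneg (BB_nonneg n k), abs_pow]
      rw [he]; exact ihabs.summable
    have hmul := tsum_mul_tsum_eq_tsum_sum_antidiagonal_of_summable_norm hnb hnB
    have hsn := summable_norm_sum_mul_antidiagonal_of_summable_norm hnb hnB
    have hterm : ∀ k : ℕ, ∑ ij ∈ Finset.HasAntidiagonal.antidiagonal k,
        (bb ij.1 * t ^ ij.1) * (BB n ij.2 * t ^ ij.2) = BB (n+1) k * t ^ k := by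
      intro k
      rw [BB_succ, Finset.sum_mul]
      refine Finset.sum_congr rfl fun ij hij => ?_
      have hij' : ij.1 + ij.2 = k := Finset.HasAntidiagonal.mem_antidiagonal.mp hij
      rw [← hij', pow_add]; ring
    have hS : Summable (fun k : ℕ => BB (n+1) k * t ^ k) := by
      rw [← funext hterm]
      exact hsn.of_norm
    rw [Summable.hasSum_iff hS]
    rw [← funext hterm, ← hmul, hb.tsum_eq, ihs.tsum_eq, pow_succ]
    ring

lemma BB_diag : ∀ n, 1 ≤ BB n n
  | 0 => by simp [BB]
  | (n+1) => by
      have h := BB_diag n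
      have hmem : ((1,n) : ℕ×ℕ) ∈ Finset.HasAntidiagonal.antidiagonal (n+1) := by
        rw [Finset.HasAntidiagonal.mem_antidiagonal]
        omega
      have hle := Finset.single_le_sum (f := fun ij : ℕ×ℕ => bb ij.1 * BB n ij.2)
        (fun ij _ => mul_nonneg (bb_nonneg _) (BB_nonneg n ij.2)) hmem
      rw [BB_succ]
      calc (1:ℝ) = bb 1 * 1 := by rw [bb_one]; ring
        _ ≤ bb 1 * BB n n := by rw [bb_one, one_mul, one_mul]; exact h
        _ ≤ _ := hle

lemma BB_bound (n k : ℕ) : BB n k ≤ 2^k * (π/2)^n := by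
  have h := BB_hasSum n (1/2) (by rw [abs_of_pos (by norm_num)]; norm_num)
  have h1 : BB n k * (1/2:ℝ)^k ≤ Real.arcsin (1/2) ^ n :=
    le_hasSum h k (fun j _ => mul_nonneg (BB_nonneg _ _) (by positivity))
  have harc0 : 0 ≤ Real.arcsin (1/2:ℝ) := Real.arcsin_nonneg.mpr (by norm_num)
  have h2 : Real.arcsin (1/2:ℝ) ^ n ≤ (π/2)^n :=
    pow_le_pow_left₀ harc0 (Real.arcsin_le_pi_div_two _) n
  calc BB n k = BB n k * (1/2:ℝ)^k * 2^k := by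
        rw [mul_assoc, ← mul_pow]; norm_num
    _ ≤ (π/2)^n * 2^k := mul_le_mul_of_nonneg_right (h1.trans h2) (by positivity)
    _ = 2^k * (π/2)^n := mul_comm _ _

/-- For `ε ∈ (0,1)`, the function `F(t) = log(π/(ε + arccos t))` has a power
series expansion on `(-1,1)` in which every coefficient `a_k` with `k ≥ 1` is strictly
positive. -/
theorem geodesic_log_pos_coeffs (ε : ℝ) (hε : ε ∈ Set.Ioo (0 : ℝ) 1) :
    ∃ a : ℕ → ℝ, (∀ k : ℕ, 1 ≤ k → 0 < a k) ∧
      ∀ t : ℝ, |t| < 1 →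
        HasSum (fun k : ℕ => a k * t ^ k)
          (Real.log (Real.pi / (ε + Real.arccos t))) := by
  obtain ⟨hε0, hε1⟩ := hε
  have hπ := Real.pi_pos
  set c : ℝ := ε + π/2 with hc
  have hcpos : 0 < c := by rw [hc]; linarith
  have hhalf : π/2 < c := by rw [hc]; linarith
  set r : ℝ := (π/2)/c with hr
  have hr0 : 0 ≤ r := by positivity
  have hr1 : r < 1 := (div_lt_one hcpos).mpr hhalf
  have key : ∀ (A : ℝ), 0 ≤ A → A ≤ π/2 → ∀ n : ℕ,
      A^(n+1) / (((n:ℝ)+1) * c^(n+1)) ≤ r^(n+1) := by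
    intro A hA0 hA n
    have hcp : (0:ℝ) < c^(n+1) := by positivity
    have h1 : A^(n+1) ≤ (π/2)^(n+1) := pow_le_pow_left₀ hA0 hA _
    have h2 : c^(n+1) ≤ ((n:ℝ)+1) * c^(n+1) := by
      nlinarith [Nat.cast_nonneg (α := ℝ) n, hcp]
    calc A^(n+1) / (((n:ℝ)+1) * c^(n+1)) ≤ (π/2)^(n+1) / c^(n+1) :=
          div_le_div₀ (by positivity) h1 hcp h2
      _ = r^(n+1) := by simp [hr, div_pow]
  refine ⟨fun k => (if k = 0 then Real.log (π/c) else 0)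
      + ∑' n : ℕ, BB (n+1) k / (((n:ℝ)+1) * c^(n+1)), ?_, ?_⟩
  · intro k hk
    have hge : ∀ n : ℕ, 0 ≤ BB (n+1) k / (((n:ℝ)+1) * c^(n+1)) := fun n =>
      div_nonneg (BB_nonneg _ _) (by positivity)
    have hsummable : Summable (fun n : ℕ => BB (n+1) k / (((n:ℝ)+1) * c^(n+1))) := by
      have hgeo : Summable (fun n : ℕ => ((2:ℝ)^k * r) * r ^ n) :=
        (summable_geometric_of_lt_one hr0 hr1).mul_left _
      refine Summable.of_nonneg_of_le hge (fun n => ?_) hgeo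
      have hd : (0:ℝ) < ((n:ℝ)+1) * c^(n+1) := by positivity
      calc BB (n+1) k / (((n:ℝ)+1) * c^(n+1))
          ≤ ((2:ℝ)^k * (π/2)^(n+1)) / (((n:ℝ)+1) * c^(n+1)) :=
            div_le_div₀ (by positivity) (BB_bound (n+1) k) hd le_rfl
        _ = (2:ℝ)^k * ((π/2)^(n+1) / (((n:ℝ)+1) * c^(n+1))) := by ring
        _ ≤ (2:ℝ)^k * r^(n+1) :=
            mul_le_mul_of_nonneg_left (key (π/2) (by positivity) le_rfl n) (by positivity)
        _ = ((2:ℝ)^k * r) * r^n := by rw [pow_succ]; ring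
    have hkne : k ≠ 0 := by omega
    show 0 < (if k = 0 then Real.log (π/c) else 0)
        + ∑' n : ℕ, BB (n+1) k / (((n:ℝ)+1) * c^(n+1))
    rw [if_neg hkne, zero_add]
    have hk1 : k - 1 + 1 = k := Nat.succ_pred_eq_of_pos hk
    refine Summable.tsum_pos hsummable hge (k-1) ?_
    rw [hk1]
    exact div_pos (lt_of_lt_of_le one_pos (BB_diag k)) (by positivity)
  · intro t ht
    have habs : |Real.arcsin t| ≤ π/2 :=
      abs_le.mpr ⟨Real.neg_pi_div_two_le_arcsin t, Real.arcsin_le_pi_div_two t⟩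
    have harc_lt : |Real.arcsin t| < c := lt_of_le_of_lt habs hhalf
    have hx : |Real.arcsin t / c| < 1 := by
      rw [abs_div, abs_of_pos hcpos]
      exact (div_lt_one hcpos).mpr harc_lt
    have hlog := Real.hasSum_pow_div_log_of_abs_lt_one hx
    set f : ℕ × ℕ → ℝ :=
      fun p => BB (p.1+1) p.2 / (((p.1:ℝ)+1) * c^(p.1+1)) * t^p.2 with hf
    have habs_t : |(|t|)| < 1 := by rwa [abs_abs]
    have hfiber : ∀ n : ℕ, HasSum (fun k => f (n, k))
        ((Real.arcsin t)^(n+1) / (((n:ℝ)+1) * c^(n+1))) := by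
      intro n
      have h := (BB_hasSum (n+1) t ht).div_const (((n:ℝ)+1) * c^(n+1))
      have he : (fun k : ℕ => BB (n+1) k * t^k / (((n:ℝ)+1) * c^(n+1)))
          = fun k => f (n, k) := by
        funext k; rw [hf]; ring
      rwa [he] at h
    have hfiberabs : ∀ n : ℕ, HasSum (fun k => |f (n, k)|)
        ((Real.arcsin |t|)^(n+1) / (((n:ℝ)+1) * c^(n+1))) := by
      intro n
      have h := (BB_hasSum (n+1) |t| habs_t).div_const (((n:ℝ)+1) * c^(n+1))
      have he : (fun k : ℕ => BB (n+1) k * |t|^k / (((n:ℝ)+1) * c^(n+1)))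
          = fun k => |f (n, k)| := by
        funext k
        rw [hf]
        have hd : (0:ℝ) ≤ BB (n+1) k / (((n:ℝ)+1) * c^(n+1)) :=
          div_nonneg (BB_nonneg _ _) (by positivity)
        rw [abs_mul, abs_pow, abs_of_nonneg hd]
        ring
      rwa [he] at h
    have harcabs0 : 0 ≤ Real.arcsin |t| := Real.arcsin_nonneg.mpr (abs_nonneg t)
    have harcabs2 : Real.arcsin |t| ≤ π/2 := Real.arcsin_le_pi_div_two _
    have hsumabs : Summable (fun p : ℕ × ℕ => |f p|) := by
      rw [summable_prod_of_nonneg (fun p => abs_nonneg _)]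
      constructor
      · intro n; exact (hfiberabs n).summable
      · refine Summable.of_nonneg_of_le
          (fun n => tsum_nonneg fun k => abs_nonneg _) (fun n => ?_)
          ((summable_geometric_of_lt_one hr0 hr1).mul_left r)
        rw [(hfiberabs n).tsum_eq]
        calc (Real.arcsin |t|)^(n+1) / (((n:ℝ)+1) * c^(n+1)) ≤ r^(n+1) :=
              key _ harcabs0 harcabs2 n
          _ = r * r^n := by rw [pow_succ]; ring
    have hsumf : Summable f := hsumabs.of_abs
    have htotal := hsumf.hasSum
    have hrow := htotal.prod_fiberwise hfiber
    have hlog' : HasSum (fun n : ℕ => (Real.arcsin t)^(n+1) / (((n:ℝ)+1) * c^(n+1)))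
        (-Real.log (1 - Real.arcsin t / c)) := by
      have he : (fun n : ℕ => (Real.arcsin t / c) ^ (n+1) / ((n:ℝ)+1))
          = fun n : ℕ => (Real.arcsin t)^(n+1) / (((n:ℝ)+1) * c^(n+1)) := by
        funext n
        rw [div_pow, div_div, mul_comm]
      rw [← he]
      exact_mod_cast hlog
    have hTeq : (∑' p, f p) = -Real.log (1 - Real.arcsin t / c) := hrow.unique hlog'
    have hcol : ∀ k : ℕ, HasSum (fun n => f (n, k)) (∑' n, f (n, k)) := by
      intro k
      have hinj : Function.Injective (fun n : ℕ => ((n, k) : ℕ × ℕ)) := by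
        intro a b h
        simpa using congrArg Prod.fst h
      exact (hsumf.comp_injective hinj).hasSum
    have hswap : HasSum (fun k => ∑' n, f (n, k)) (∑' p, f p) := by
      have h1 : HasSum (f ∘ (Equiv.prodComm ℕ ℕ)) (∑' p, f p) :=
        (Equiv.prodComm ℕ ℕ).hasSum_iff.mpr htotal
      exact h1.prod_fiberwise (fun k => hcol k)
    have hLsum : HasSum (fun k : ℕ => (if k = 0 then Real.log (π/c) else 0) * t^k)
        (Real.log (π/c)) := by
      have he : (fun k : ℕ => (if k = 0 then Real.log (π/c) else 0) * t^k)
          = fun k : ℕ => if k = 0 then Real.log (π/c) else 0 := by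
        funext k
        by_cases h : k = 0
        · subst h; simp
        · simp [h]
      rw [he]
      exact hasSum_ite_eq 0 _
    have hfinal := hLsum.add hswap
    have hfn : (fun k : ℕ => (if k = 0 then Real.log (π/c) else 0) * t^k
          + ∑' n : ℕ, f (n, k))
        = fun k : ℕ => ((if k = 0 then Real.log (π/c) else 0)
            + ∑' n : ℕ, BB (n+1) k / (((n:ℝ)+1) * c^(n+1))) * t^k := by
      funext k
      rw [add_mul, ← tsum_mul_right]
    rw [hfn] at hfinal
    have hpos2 : 0 < c - Real.arcsin t := by
      have := (abs_lt.mp harc_lt).2; linarith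
    have harccos : ε + Real.arccos t = c - Real.arcsin t := by
      rw [Real.arccos_eq_pi_div_two_sub_arcsin, hc]; ring
    have hval : Real.log (π/c) + ∑' p, f p = Real.log (π / (ε + Real.arccos t)) := by
      rw [hTeq, harccos]
      have h1 : 1 - Real.arcsin t / c = (c - Real.arcsin t)/c := by field_simp
      rw [h1, Real.log_div hπ.ne' hcpos.ne', Real.log_div hpos2.ne' hcpos.ne',
        Real.log_div hπ.ne' hpos2.ne']
      ring
    rw [hval] at hfinal
    exact hfinal
end

section
/- Let λ > 0 and -(2λ+1) < δ ≤ 0, with the convention that for δ = 0 the potential is F_0(t) = log(π/arccos t). Then for every integer n ≥ 0, ∫_{-1}^1 F_δ(t) C_n^λ(t) (1-t^2)^{λ-1/2} dt > 0, where F_δ(t) = (arccos t)^δ for δ ≠ 0. -/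
/-- Gegenbauer polynomials via the standard three-term recurrence. -/
noncomputable def gegenbauer (l : ℝ) : ℕ → Polynomial ℝ
  | 0 => 1
  | 1 => Polynomial.C (2 * l) * Polynomial.X
  | (n + 2) =>
      Polynomial.C ((2 * ((n : ℝ) + 1 + l)) / ((n : ℝ) + 2)) * Polynomial.X *
          gegenbauer l (n + 1) -
        Polynomial.C (((n : ℝ) + 2 * l) / ((n : ℝ) + 2)) * gegenbauer l n
namespace Geg
noncomputable def G (l : ℝ) (n : ℕ) (t : ℝ) : ℝ := (gegenbauer l n).eval t
noncomputable def D (l : ℝ) (n : ℕ) (t : ℝ) : ℝ := (Polynomial.derivative (gegenbauer l n)).eval t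
lemma G_zero (l t : ℝ) : G l 0 t = 1 := by simp [G, gegenbauer]
lemma G_one (l t : ℝ) : G l 1 t = 2 * l * t := by simp [G, gegenbauer]
lemma D_zero (l t : ℝ) : D l 0 t = 0 := by simp [D, gegenbauer]
lemma D_one (l t : ℝ) : D l 1 t = 2 * l := by simp [D, gegenbauer]
lemma G_rec (l : ℝ) (n : ℕ) (t : ℝ) :
    ((n : ℝ) + 2) * G l (n + 2) t =
      2 * ((n : ℝ) + 1 + l) * t * G l (n + 1) t - ((n : ℝ) + 2 * l) * G l n t := by
  have h : ((n : ℝ) + 2) ≠ 0 := by positivity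
  show ((n : ℝ) + 2) * (gegenbauer l (n+2)).eval t = _
  rw [show gegenbauer l (n+2) = Polynomial.C ((2 * ((n : ℝ) + 1 + l)) / ((n : ℝ) + 2)) * Polynomial.X *
          gegenbauer l (n + 1) - Polynomial.C (((n : ℝ) + 2 * l) / ((n : ℝ) + 2)) * gegenbauer l n from rfl]
  simp only [Polynomial.eval_sub, Polynomial.eval_mul, Polynomial.eval_C, Polynomial.eval_X]
  field_simp [G]
  rfl
lemma D_rec (l : ℝ) (n : ℕ) (t : ℝ) :
    ((n : ℝ) + 2) * D l (n + 2) t =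
      2 * ((n : ℝ) + 1 + l) * (G l (n + 1) t + t * D l (n + 1) t) - ((n : ℝ) + 2 * l) * D l n t := by
  have h : ((n : ℝ) + 2) ≠ 0 := by positivity
  show ((n : ℝ) + 2) * (Polynomial.derivative (gegenbauer l (n+2))).eval t = _
  rw [show gegenbauer l (n+2) = Polynomial.C ((2 * ((n : ℝ) + 1 + l)) / ((n : ℝ) + 2)) * Polynomial.X *
          gegenbauer l (n + 1) - Polynomial.C (((n : ℝ) + 2 * l) / ((n : ℝ) + 2)) * gegenbauer l n from rfl]
  simp only [Polynomial.derivative_sub, Polynomial.derivative_mul, Polynomial.derivative_C,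
    Polynomial.derivative_X, Polynomial.eval_sub, Polynomial.eval_add, Polynomial.eval_mul,
    Polynomial.eval_C, Polynomial.eval_X, Polynomial.eval_one, zero_mul, zero_add, mul_one]
  field_simp [G, D]
  simp only [G, D]

/-- (1-t²) Cₙ' = (n+2l) t Cₙ - (n+1) Cₙ₊₁ -/
lemma deriv_id (l : ℝ) : ∀ n : ℕ, ∀ t : ℝ,
    (1 - t^2) * D l n t = ((n : ℝ) + 2*l) * t * G l n t - ((n : ℝ) + 1) * G l (n+1) t := by
  intro n
  induction n using Nat.twoStepInduction with
  | zero => intro t; simp [D_zero, G_zero, G_one]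
  | one =>
    intro t
    have h2 : (2:ℝ) * G l 2 t = 2 * (0 + 1 + l) * t * G l 1 t - (0 + 2*l) * G l 0 t := by
      have := G_rec l 0 t; push_cast at this ⊢; linarith
    push_cast
    rw [D_one, G_one, G_zero] at *
    nlinarith [h2]
  | more n ih0 ih1 =>
    intro t
    have h : ((n : ℝ) + 2) ≠ 0 := by positivity
    have key : ((n:ℝ)+2) * ((1 - t^2) * D l (n+2) t) =
        ((n:ℝ)+2) * ((((n:ℕ):ℝ) + 2 + 2*l) * t * G l (n+2) t - (((n:ℝ)) + 3) * G l (n+3) t) := by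
      have hG1 : ((n:ℝ) + 1 + 2) * G l (n + 3) t =
          2 * ((n : ℝ) + 1 + 1 + l) * t * G l (n + 2) t - ((n : ℝ) + 1 + 2 * l) * G l (n+1) t := by
        have := G_rec l (n+1) t; push_cast at this ⊢; linarith
      have hD := D_rec l n t
      have hG0 := G_rec l n t
      have i0 := ih0 t
      have i1 := ih1 t
      push_cast at i1 ⊢
      linear_combination (1 - t^2) * hD + (2*((n:ℝ)+1+l)*t) * i1 - ((n:ℝ)+2*l) * i0
        + ((n:ℝ)+2) * hG1 - (((n:ℝ)+2*l)*t) * hG0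
    have := mul_left_cancel₀ h key
    push_cast at this ⊢
    linarith
end Geg

namespace Geg2
open Geg
/-- P(n): 2l(C^{l+1}_{n+1} - t C^{l+1}_n) = (n+2l+1) C^l_{n+1}
    Q(n): (n+2) C^l_{n+2} = 2l (t C^{l+1}_{n+1} - C^{l+1}_n)  -/
lemma PQ (l : ℝ) : ∀ n : ℕ, ∀ t : ℝ,
    (2*l*(G (l+1) (n+1) t - t * G (l+1) n t) = ((n:ℝ) + 2*l + 1) * G l (n+1) t)
    ∧ (((n:ℝ)+2) * G l (n+2) t = 2*l*(t * G (l+1) (n+1) t - G (l+1) n t)) := by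
  intro n
  induction n using Nat.twoStepInduction with
  | zero =>
    intro t
    have h2 : (2:ℝ) * G l 2 t = 2 * ((0:ℝ) + 1 + l) * t * G l 1 t - ((0:ℝ) + 2*l) * G l 0 t := by
      have := G_rec l 0 t; push_cast at this; linarith
    constructor
    · rw [G_one, G_zero, G_one]; push_cast; ring
    · rw [G_one, G_zero] at *; push_cast at *; nlinarith [h2]
  | one =>
    intro t
    have hg2 : (2:ℝ) * G l 2 t = 2 * ((0:ℝ) + 1 + l) * t * G l 1 t - ((0:ℝ) + 2*l) * G l 0 t := by
      have := G_rec l 0 t; push_cast at this; linarith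
    have hu2 : (2:ℝ) * G (l+1) 2 t = 2 * ((0:ℝ) + 1 + (l+1)) * t * G (l+1) 1 t - ((0:ℝ) + 2*(l+1)) * G (l+1) 0 t := by
      have := G_rec (l+1) 0 t; push_cast at this; linarith
    have hg3 : (3:ℝ) * G l 3 t = 2 * ((1:ℝ) + 1 + l) * t * G l 2 t - ((1:ℝ) + 2*l) * G l 1 t := by
      have := G_rec l 1 t; push_cast at this; linarith
    have e0 : G l 0 t = 1 := G_zero _ _
    have e1 : G l 1 t = 2*l*t := G_one _ _
    have f0 : G (l+1) 0 t = 1 := G_zero _ _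
    have f1 : G (l+1) 1 t = 2*(l+1)*t := G_one _ _
    constructor
    · push_cast
      linear_combination l*hu2 - (l+1)*hg2 + 2*l*(l+1)*e0 - 2*(l+1)^2*t*e1
        - 2*l*(l+1)*f0 + 2*l*(l+1)*t*f1
    · push_cast
      linear_combination hg3 + (2+l)*t*hg2 - l*t*hu2
        + (-(1+2*l) + 2*(1+l)*(2+l)*t^2)*e1 + (2*l - 2*l*(l+2)*t^2)*f1
        - 2*l*(2+l)*t*e0 + 2*l*(l+1)*t*f0
  | more n ih0 ih1 =>
    intro t
    have h3 : ((n : ℝ) + 3) ≠ 0 := by positivity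
    obtain ⟨hP0, hQ0⟩ := ih0 t
    obtain ⟨hP1, hQ1⟩ := ih1 t
    push_cast at hP1 hQ1
    have hU1 : ((n:ℝ) + 3) * G (l+1) (n + 3) t =
        2 * ((n : ℝ) + 3 + l) * t * G (l+1) (n + 2) t - ((n : ℝ) + 2*l + 3) * G (l+1) (n+1) t := by
      have := G_rec (l+1) (n+1) t; push_cast at this; linarith
    have hG1 : ((n:ℝ) + 3) * G l (n + 3) t =
        2 * ((n : ℝ) + 2 + l) * t * G l (n + 2) t - ((n : ℝ) + 2*l + 1) * G l (n+1) t := by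
      have := G_rec l (n+1) t; push_cast at this; linarith
    have hG2 : ((n:ℝ) + 4) * G l (n + 4) t =
        2 * ((n : ℝ) + 3 + l) * t * G l (n + 3) t - ((n : ℝ) + 2*l + 2) * G l (n+2) t := by
      have := G_rec l (n+2) t; push_cast at this; linarith
    constructor
    · have key : ((n:ℝ)+3) * (2*l*(G (l+1) (n+3) t - t * G (l+1) (n+2) t)) =
          ((n:ℝ)+3) * ((((n:ℝ)+2) + 2*l + 1) * G l (n+3) t) := by
        linear_combination 2*l*hU1 - ((n:ℝ)+2*l+3)*hG1 + ((n:ℝ)+2*l+3)*t*hP1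
          - ((n:ℝ)+2*l+3)*t*hQ0 - ((n:ℝ)+2*l+3)*hP0
      have := mul_left_cancel₀ h3 key
      push_cast
      linarith
    · have key : ((n:ℝ)+3) * ((((n:ℝ)+2)+2) * G l (n+4) t) =
          ((n:ℝ)+3) * (2*l*(t * G (l+1) (n+3) t - G (l+1) (n+2) t)) := by
        linear_combination ((n:ℝ)+3)*hG2 - 2*l*t*hU1 + 2*((n:ℝ)+3+l)*t*hG1
          + (((n:ℝ)+3) - 2*((n:ℝ)+3+l)*t^2)*hP1 + 2*((n:ℝ)+3+l)*t^2*hQ0 + 2*((n:ℝ)+3+l)*t*hP0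
      have := mul_left_cancel₀ h3 key
      push_cast
      linarith
end Geg2

open Real MeasureTheory Set Filter Topology intervalIntegral

namespace GegAn

noncomputable def F (δ t : ℝ) : ℝ :=
  if δ = 0 then Real.log (Real.pi / Real.arccos t) else (Real.arccos t) ^ δ

lemma one_sub_sq_pos {t : ℝ} (ht : t ∈ Ioo (-1:ℝ) 1) : 0 < 1 - t^2 := by
  obtain ⟨h1, h2⟩ := ht; nlinarith

lemma arccos_pos' {t : ℝ} (ht : t < 1) : 0 < arccos t := Real.arccos_pos.2 ht

lemma arccos_lt_pi' {t : ℝ} (ht : -1 < t) : arccos t < π := by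
  rcases lt_or_eq_of_le (Real.arccos_le_pi t) with h | h
  · exact h
  · exact absurd (Real.arccos_eq_pi.1 h) (not_le.2 ht)

lemma sqrt_le_arccos {t : ℝ} : Real.sqrt (1 - t^2) ≤ arccos t := by
  rw [← Real.sin_arccos]
  exact Real.sin_le (Real.arccos_nonneg t)

/-- arccos t ^ γ ≤ (1-t²)^(γ/2) for γ ≤ 0 on (-1,1). -/
lemma arccos_rpow_le {t γ : ℝ} (ht : t ∈ Ioo (-1:ℝ) 1) (hγ : γ ≤ 0) :
    arccos t ^ γ ≤ (1 - t^2) ^ (γ/2) := by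
  have h0 : (0:ℝ) < 1 - t^2 := one_sub_sq_pos ht
  have hs : (0:ℝ) < Real.sqrt (1 - t^2) := Real.sqrt_pos.2 h0
  have key : (1 - t^2) ^ (γ/2) = (Real.sqrt (1 - t^2)) ^ γ := by
    rw [Real.sqrt_eq_rpow, ← Real.rpow_mul h0.le]
    ring_nf
  rw [key]
  exact Real.rpow_le_rpow_of_nonpos hs sqrt_le_arccos hγ

lemma F_pos {δ t : ℝ} (ht : t ∈ Ioo (-1:ℝ) 1) : 0 < F δ t := by
  unfold F
  split_ifs with h
  · apply Real.log_pos
    rw [lt_div_iff₀ (arccos_pos' ht.2)]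
    simpa using arccos_lt_pi' ht.1
  · exact Real.rpow_pos_of_pos (arccos_pos' ht.2) δ

/-- Bound for F: if δ ≠ 0, F δ t ≤ (1-t²)^(δ/2); if δ = 0, F δ t ≤ π (1-t²)^(-1/2). -/
lemma F_le {δ t : ℝ} (ht : t ∈ Ioo (-1:ℝ) 1) (hδ : δ ≤ 0) :
    F δ t ≤ (if δ = 0 then π else 1) * (1 - t^2) ^ (if δ = 0 then (-(1/2) : ℝ) else δ/2) := by
  have h0 : (0:ℝ) < 1 - t^2 := one_sub_sq_pos ht
  have ha : 0 < arccos t := arccos_pos' ht.2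
  unfold F
  split_ifs with h
  · have h1 : Real.log (π / arccos t) ≤ π / arccos t := by
      have := Real.log_le_sub_one_of_pos (div_pos Real.pi_pos ha)
      linarith
    refine h1.trans ?_
    rw [div_eq_mul_inv]
    apply mul_le_mul_of_nonneg_left _ Real.pi_pos.le
    have : (arccos t)⁻¹ ≤ (Real.sqrt (1-t^2))⁻¹ := by
      apply inv_anti₀ (Real.sqrt_pos.2 h0) sqrt_le_arccos
    refine this.trans ?_
    rw [Real.sqrt_eq_rpow, ← Real.rpow_neg_one, ← Real.rpow_mul h0.le]
    norm_num
  · simpa using arccos_rpow_le ht hδ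

lemma continuousOn_F (δ : ℝ) : ContinuousOn (F δ) (Ioo (-1:ℝ) 1) := by
  unfold F
  split_ifs with h
  · apply ContinuousOn.log
    · exact continuousOn_const.div Real.continuous_arccos.continuousOn
        (fun t ht => (arccos_pos' ht.2).ne')
    · intro t ht
      exact (div_pos Real.pi_pos (arccos_pos' ht.2)).ne'
  · exact ContinuousOn.rpow_const Real.continuous_arccos.continuousOn
      (fun t ht => Or.inl (arccos_pos' ht.2).ne')

/-- (1-t²)^e is interval integrable on [-1,1] for e > -1. -/
lemma weight_integrable {e : ℝ} (he : -1 < e) :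
    IntervalIntegrable (fun t : ℝ => (1 - t^2) ^ e) volume (-1) 1 := by
  have base : IntervalIntegrable (fun x : ℝ => x ^ e) volume 0 1 := intervalIntegrable_rpow' he
  -- on [0,1] : (1-t)^e * (1+t)^e
  have right : IntervalIntegrable (fun t : ℝ => (1 - t^2) ^ e) volume 0 1 := by
    have h1 : IntervalIntegrable (fun x : ℝ => (1 - x) ^ e) volume 0 1 := by
      have := base.comp_sub_left 1
      norm_num at this
      exact this.symm
    have h2 : IntervalIntegrable (fun x : ℝ => (1 + x) ^ e * (1 - x) ^ e) volume 0 1 :=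
      h1.continuousOn_mul (by
        apply ContinuousOn.rpow_const (by fun_prop)
        intro x hx
        rw [uIcc_of_le (by norm_num : (0:ℝ) ≤ 1)] at hx
        left; nlinarith [hx.1])
    rw [intervalIntegrable_iff_integrableOn_Ioo_of_le (by norm_num : (0:ℝ) ≤ 1)] at h2 ⊢
    apply h2.congr_fun _ measurableSet_Ioo
    intro x hx
    show (1 + x) ^ e * (1 - x) ^ e = (1 - x^2) ^ e
    rw [← Real.mul_rpow (by nlinarith [hx.1.le] : (0:ℝ) ≤ 1 + x) (by nlinarith [hx.2.le] : (0:ℝ) ≤ 1 - x)]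
    ring_nf
  have left : IntervalIntegrable (fun t : ℝ => (1 - t^2) ^ e) volume (-1) 0 := by
    have h1 : IntervalIntegrable (fun x : ℝ => (x + 1) ^ e) volume (-1) 0 := by
      have := base.comp_add_right 1
      norm_num at this
      exact this
    have h2 : IntervalIntegrable (fun x : ℝ => (1 - x) ^ e * (x + 1) ^ e) volume (-1) 0 :=
      h1.continuousOn_mul (by
        apply ContinuousOn.rpow_const (by fun_prop)
        intro x hx
        rw [uIcc_of_le (by norm_num : (-1:ℝ) ≤ 0)] at hx
        left; nlinarith [hx.2])
    rw [intervalIntegrable_iff_integrableOn_Ioo_of_le (by norm_num : (-1:ℝ) ≤ 0)] at h2 ⊢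
    apply h2.congr_fun _ measurableSet_Ioo
    intro x hx
    show (1 - x) ^ e * (x + 1) ^ e = (1 - x^2) ^ e
    rw [← Real.mul_rpow (by nlinarith [hx.2.le] : (0:ℝ) ≤ 1 - x) (by nlinarith [hx.1.le] : (0:ℝ) ≤ x + 1)]
    ring_nf
  exact left.trans right

/-- Master integrability lemma via a bound C (1-t²)^e with e > -1. -/
lemma integrable_of_bound (f : ℝ → ℝ) (hf : ContinuousOn f (Ioo (-1:ℝ) 1)) (C e : ℝ)
    (he : -1 < e) (hb : ∀ t ∈ Ioo (-1:ℝ) 1, |f t| ≤ C * (1 - t^2) ^ e) :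
    IntervalIntegrable f volume (-1) 1 := by
  have base : IntervalIntegrable (fun t : ℝ => C * (1 - t^2) ^ e) volume (-1) 1 :=
    (weight_integrable he).const_mul C
  apply base.mono_fun'
  · have h1 : AEStronglyMeasurable f (volume.restrict (Ioo (-1:ℝ) 1)) :=
      hf.aestronglyMeasurable measurableSet_Ioo
    rwa [uIoc_of_le (by norm_num : (-1:ℝ) ≤ 1),
      ← Measure.restrict_congr_set Ioo_ae_eq_Ioc]
  · rw [uIoc_of_le (by norm_num : (-1:ℝ) ≤ 1), ← Measure.restrict_congr_set Ioo_ae_eq_Ioc]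
    filter_upwards [ae_restrict_mem measurableSet_Ioo] with t ht
    exact hb t ht

/-- Tendsto 0 at the endpoints given a bound C (1-t²)^e, e > 0. -/
lemma tendsto_endpoints (f : ℝ → ℝ) (C e : ℝ) (he : 0 < e)
    (hb : ∀ t ∈ Ioo (-1:ℝ) 1, |f t| ≤ C * (1 - t^2) ^ e) :
    Tendsto f (𝓝[>] (-1:ℝ)) (𝓝 0) ∧ Tendsto f (𝓝[<] (1:ℝ)) (𝓝 0) := by
  have hcont : ∀ a : ℝ, 1 - a^2 = 0 → Tendsto (fun t : ℝ => C * (1 - t^2) ^ e) (𝓝 a) (𝓝 0) := by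
    intro a ha
    have h1 : Tendsto (fun t : ℝ => 1 - t^2) (𝓝 a) (𝓝 0) := by
      rw [← ha]
      exact (continuous_const.sub (continuous_pow 2)).tendsto a
    have h2 : Tendsto (fun x : ℝ => x ^ e) (𝓝 0) (𝓝 0) := by
      have := (Real.continuousAt_rpow_const 0 e (Or.inr he.le))
      simpa [Real.zero_rpow he.ne'] using this.tendsto
    simpa using (tendsto_const_nhds (x := C)).mul (h2.comp h1)
  constructor
  · apply squeeze_zero_norm' _ ((hcont (-1) (by norm_num)).mono_left nhdsWithin_le_nhds)
    filter_upwards [Ioo_mem_nhdsGT_of_mem (by norm_num : (-1:ℝ) ∈ Ico (-1:ℝ) 1)] with t ht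
    exact hb t ht
  · apply squeeze_zero_norm' _ ((hcont 1 (by norm_num)).mono_left nhdsWithin_le_nhds)
    filter_upwards [Ioo_mem_nhdsLT_of_mem (by norm_num : (1:ℝ) ∈ Ioc (-1:ℝ) 1)] with t ht
    exact hb t ht

/-- FTC for improper endpoints: integral of a derivative vanishing at both ends is 0. -/
lemma integral_deriv_zero (H H' : ℝ → ℝ)
    (hd : ∀ t ∈ Ioo (-1:ℝ) 1, HasDerivAt H (H' t) t)
    (hi : IntervalIntegrable H' volume (-1) 1)
    (h0 : Tendsto H (𝓝[>] (-1:ℝ)) (𝓝 0)) (h1 : Tendsto H (𝓝[<] (1:ℝ)) (𝓝 0)) :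
    ∫ t in (-1:ℝ)..1, H' t = 0 := by
  rw [integral_eq_sub_of_hasDerivAt_of_tendsto (by norm_num) hd hi h0 h1]
  ring

lemma hasDerivAt_weight {σ t : ℝ} (ht : t ∈ Ioo (-1:ℝ) 1) :
    HasDerivAt (fun x : ℝ => (1 - x^2) ^ σ) (σ * (1 - t^2) ^ (σ - 1) * (-2*t)) t := by
  have hin : HasDerivAt (fun x : ℝ => 1 - x^2) (-(2*t)) t := by
    simpa using (HasDerivAt.const_sub 1 (hasDerivAt_pow 2 t))
  have := hin.rpow_const (p := σ) (Or.inl (one_sub_sq_pos ht).ne')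
  convert this using 1
  ring

lemma inv_sqrt_eq {t : ℝ} (ht : t ∈ Ioo (-1:ℝ) 1) :
    1 / Real.sqrt (1 - t^2) = (1 - t^2) ^ (-(1/2) : ℝ) := by
  have h0 := one_sub_sq_pos ht
  rw [Real.sqrt_eq_rpow, Real.rpow_neg h0.le, one_div]

lemma hasDerivAt_F {δ t : ℝ} (ht : t ∈ Ioo (-1:ℝ) 1) :
    HasDerivAt (F δ) ((if δ = 0 then 1 else -δ) * (arccos t ^ (δ-1) * (1 - t^2) ^ (-(1/2):ℝ))) t := by
  have h0 := one_sub_sq_pos ht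
  have ha0 : 0 < arccos t := arccos_pos' ht.2
  have ha : HasDerivAt arccos (-(1 / Real.sqrt (1 - t^2))) t :=
    Real.hasDerivAt_arccos ht.1.ne' ht.2.ne
  have hsq := inv_sqrt_eq ht
  by_cases h : δ = 0
  · subst h
    have hd : HasDerivAt (fun x => π / Real.arccos x) _ t :=
      (hasDerivAt_const t π).div ha ha0.ne'
    have hl := hd.log (div_pos Real.pi_pos ha0).ne'
    have heq : F 0 = fun x => Real.log (π / Real.arccos x) := by
      funext x; simp [F]
    rw [heq]
    convert hl using 1
    rw [if_pos rfl, ← hsq]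
    rw [Real.rpow_sub ha0, Real.rpow_zero, Real.rpow_one]
    field_simp
    ring
  · have hF : F δ = fun x => Real.arccos x ^ δ := by
      funext x; simp [F, h]
    have hd := ha.rpow_const (p := δ) (Or.inl ha0.ne')
    rw [hF]
    convert hd using 1
    rw [if_neg h, ← hsq]
    ring

end GegAn

namespace GegMain
open Geg Geg2 GegAn Real MeasureTheory Set Filter Topology intervalIntegral Polynomial

/-- bound for a polynomial on [-1,1] -/
lemma poly_bound (P : Polynomial ℝ) : ∃ C : ℝ, 0 ≤ C ∧ ∀ t ∈ Ioo (-1:ℝ) 1, |P.eval t| ≤ C := by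
  obtain ⟨C, hC⟩ := (isCompact_Icc (a := (-1:ℝ)) (b := 1)).exists_bound_of_continuousOn
    (P.continuous).continuousOn
  refine ⟨max C 0, le_max_right _ _, fun t ht => ?_⟩
  have := hC t (Ioo_subset_Icc_self ht)
  calc |P.eval t| ≤ C := this
    _ ≤ max C 0 := le_max_left _ _

/-- master integrability for arccos^γ · P · (1-t²)^σ -/
lemma kg_integrable (γ σ : ℝ) (P : Polynomial ℝ) (hγ : γ ≤ 0) (hsum : -1 < γ/2 + σ) :
    IntervalIntegrable (fun t => arccos t ^ γ * P.eval t * (1 - t^2) ^ σ) volume (-1) 1 := by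
  obtain ⟨C, hC0, hC⟩ := poly_bound P
  refine integrable_of_bound _ ?_ C (γ/2 + σ) hsum ?_
  · refine ((ContinuousOn.rpow_const Real.continuous_arccos.continuousOn
        (fun t ht => Or.inl (arccos_pos' ht.2).ne')).mul P.continuous.continuousOn).mul
      (ContinuousOn.rpow_const (by fun_prop) (fun t ht => Or.inl (one_sub_sq_pos ht).ne'))
  · intro t ht
    have h0 := one_sub_sq_pos ht
    have ha := arccos_pos' ht.2
    have hw : (0:ℝ) < (1 - t^2) ^ σ := Real.rpow_pos_of_pos h0 σ
    have haw : (0:ℝ) < arccos t ^ γ := Real.rpow_pos_of_pos ha γ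
    rw [abs_mul, abs_mul, abs_of_pos haw, abs_of_pos hw]
    rw [Real.rpow_add h0]
    calc arccos t ^ γ * |P.eval t| * (1 - t^2) ^ σ
        ≤ (1 - t^2) ^ (γ/2) * C * (1 - t^2) ^ σ := by
          apply mul_le_mul_of_nonneg_right _ hw.le
          exact mul_le_mul (arccos_rpow_le ht hγ) (hC t ht) (abs_nonneg _) (Real.rpow_nonneg h0.le _)
      _ = C * ((1 - t^2) ^ (γ/2) * (1 - t^2) ^ σ) := by ring
noncomputable def jf (l δ : ℝ) (n : ℕ) (t : ℝ) : ℝ :=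
  F δ t * (gegenbauer l n).eval t * (1 - t^2) ^ (l - 1/2)

noncomputable def kg (γ σ : ℝ) (P : Polynomial ℝ) (t : ℝ) : ℝ :=
  arccos t ^ γ * P.eval t * (1 - t^2) ^ σ

lemma jf_eq_kg {l δ : ℝ} (h : δ ≠ 0) (n : ℕ) :
    jf l δ n = kg δ (l - 1/2) (gegenbauer l n) := by
  funext t; simp [jf, kg, F, h]

lemma kg_integrable' (γ σ : ℝ) (P : Polynomial ℝ) (hγ : γ ≤ 0) (hsum : -1 < γ/2 + σ) :
    IntervalIntegrable (kg γ σ P) volume (-1) 1 := kg_integrable γ σ P hγ hsum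

lemma jf_integrable (l δ : ℝ) (n : ℕ) (hl : 0 < l) (hδ1 : -(2*l+1) < δ) (hδ2 : δ ≤ 0) :
    IntervalIntegrable (jf l δ n) volume (-1) 1 := by
  by_cases h : δ = 0
  · subst h
    obtain ⟨C, hC0, hC⟩ := poly_bound (gegenbauer l n)
    apply integrable_of_bound _ ?_ (π * C) (l - 1) (by linarith) ?_
    · refine ((continuousOn_F 0).mul (gegenbauer l n).continuous.continuousOn).mul
        (ContinuousOn.rpow_const (by fun_prop) (fun t ht => Or.inl (one_sub_sq_pos ht).ne'))
    · intro t ht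
      have h0 := one_sub_sq_pos ht
      have hFp := F_pos (δ := 0) ht
      have hw : (0:ℝ) < (1 - t^2) ^ (l - 1/2) := Real.rpow_pos_of_pos h0 _
      have hF := F_le (δ := 0) ht le_rfl
      norm_num at hF
      show |F 0 t * (gegenbauer l n).eval t * (1 - t^2) ^ (l - 1/2)| ≤ _
      rw [abs_mul, abs_mul, abs_of_pos hFp, abs_of_pos hw]
      calc F 0 t * |(gegenbauer l n).eval t| * (1 - t^2) ^ (l - 1/2)
          ≤ (π * (1 - t^2) ^ (-(1/2):ℝ)) * C * (1 - t^2) ^ (l - 1/2) := by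
            apply mul_le_mul_of_nonneg_right _ hw.le
            exact mul_le_mul hF (hC t ht) (abs_nonneg _) (by positivity)
        _ = π * C * ((1 - t^2) ^ (-(1/2):ℝ) * (1 - t^2) ^ (l - 1/2)) := by ring
        _ = π * C * (1 - t^2) ^ (l - 1) := by
            rw [← Real.rpow_add h0, show -(1/2 : ℝ) + (l - 1/2) = l - 1 by ring]
  · rw [jf_eq_kg h]
    exact kg_integrable' _ _ _ hδ2 (by linarith)

noncomputable def Jint (l δ : ℝ) (n : ℕ) : ℝ := ∫ t in (-1:ℝ)..1, jf l δ n t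
noncomputable def Kint (p γ : ℝ) (n : ℕ) : ℝ := ∫ t in (-1:ℝ)..1, kg γ (p-1) (gegenbauer p n) t

lemma Jint_zero_pos (l δ : ℝ) (hl : 0 < l) (hδ1 : -(2*l+1) < δ) (hδ2 : δ ≤ 0) :
    0 < Jint l δ 0 := by
  apply intervalIntegral.intervalIntegral_pos_of_pos_on (jf_integrable l δ 0 hl hδ1 hδ2)
    _ (by norm_num)
  intro t ht
  have h1 : (gegenbauer l 0).eval t = 1 := by simp [gegenbauer]
  unfold jf
  rw [h1]
  have := F_pos (δ := δ) ht
  have := one_sub_sq_pos ht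
  positivity

lemma Kint_zero_pos (p γ : ℝ) (hp : 0 < p) (hγ : γ < 0) (hsum : 0 < γ + 2*p) :
    0 < Kint p γ 0 := by
  apply intervalIntegral.intervalIntegral_pos_of_pos_on
    (kg_integrable' _ _ _ hγ.le (by linarith)) _ (by norm_num)
  intro t ht
  have h1 : (gegenbauer p 0).eval t = 1 := by simp [gegenbauer]
  unfold kg
  rw [h1]
  have := arccos_pos' ht.2
  have := one_sub_sq_pos ht
  positivity
lemma keyJm (l : ℝ) (n : ℕ) (t : ℝ) :
    2*l*((1 - t^2) * D (l+1) n t - (2*l+1) * t * G (l+1) n t)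
      = -(((n:ℝ)+1) * ((n:ℝ)+2*l+1)) * G l (n+1) t := by
  have hDI := deriv_id (l+1) n t
  have hP := (PQ l n t).1
  linear_combination 2*l*hDI - ((n:ℝ)+1)*hP

lemma keyJdiv (l : ℝ) (hl : l ≠ 0) (n : ℕ) (t : ℝ) :
    (1 - t^2) * D (l+1) n t - (2*l+1) * t * G (l+1) n t
      = -(((n:ℝ)+1) * ((n:ℝ)+2*l+1) / (2*l)) * G l (n+1) t := by
  have h := keyJm l n t
  have h2 : (2*l) ≠ 0 := by simpa using hl
  field_simp
  linear_combination h

lemma keyK (p : ℝ) (m : ℕ) (t : ℝ) :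
    (1 - t^2) * D p m t - 2*p*t*G p m t = (m:ℝ)*t*G p m t - ((m:ℝ)+1)*G p (m+1) t := by
  linear_combination Geg.deriv_id p m t

lemma hasDerivAt_HJ {l δ : ℝ} (hl : 0 < l) (n : ℕ) {t : ℝ} (ht : t ∈ Ioo (-1:ℝ) 1) :
    HasDerivAt (fun x => F δ x * ((1 - x^2) ^ (l + 1/2) * (gegenbauer (l+1) n).eval x))
      ((if δ = 0 then 1 else -δ) * kg (δ-1) (l+1-1) (gegenbauer (l+1) n) t
        - (((n:ℝ)+1) * ((n:ℝ)+2*l+1) / (2*l)) * jf l δ (n+1) t) t := by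
  have h0 := one_sub_sq_pos ht
  have hΨ : HasDerivAt (fun x => (1 - x^2) ^ (l + 1/2) * (gegenbauer (l+1) n).eval x)
      ((l+1/2) * (1-t^2) ^ ((l+1/2)-1) * (-2*t) * (gegenbauer (l+1) n).eval t
        + (1-t^2) ^ (l+1/2) * (Polynomial.derivative (gegenbauer (l+1) n)).eval t) t :=
    (hasDerivAt_weight ht).mul ((gegenbauer (l+1) n).hasDerivAt t)
  have hH := (hasDerivAt_F (δ := δ) ht).mul hΨ
  convert hH using 1
  · rfl
  · rfl
  · rfl
  have e3 : (1-t^2) ^ ((l+1/2)-1) = (1-t^2) ^ (l - 1/2) := by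
    congr 1; ring
  have e2 : (1-t^2) ^ (l+1/2) = (1-t^2) ^ (l - 1/2) * (1-t^2) := by
    rw [← Real.rpow_add_one h0.ne' (l - 1/2)]
    congr 1; ring
  have e1 : (1-t^2) ^ (-(1/2):ℝ) * ((1-t^2) ^ (l-1/2) * (1-t^2)) = (1-t^2) ^ (l+1-1) := by
    rw [← Real.rpow_add_one h0.ne' (l - 1/2), ← Real.rpow_add h0]
    congr 1; ring
  have hkey := keyJdiv l hl.ne' n t
  simp only [Geg.G, Geg.D] at hkey
  unfold kg jf
  rw [e3, e2]
  show _ = _ * (Real.arccos t ^ (δ-1) * (1 - t^2) ^ (-(1/2):ℝ)) * _ + F δ t * _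
  linear_combination ((if δ = 0 then (1:ℝ) else -δ) * Real.arccos t ^ (δ-1)
      * (gegenbauer (l+1) n).eval t) * e1.symm
    - (F δ t * ((1-t^2) ^ (l - 1/2))) * hkey

lemma hasDerivAt_HK {p γ : ℝ} (m : ℕ) {t : ℝ} (ht : t ∈ Ioo (-1:ℝ) 1) :
    HasDerivAt (fun x => Real.arccos x ^ γ * ((1 - x^2) ^ p * (gegenbauer p m).eval x))
      ((-γ) * kg (γ-1) (p - 1/2) (gegenbauer p m) t
        + ((m:ℝ) * kg γ (p-1) (Polynomial.X * gegenbauer p m) t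
          - ((m:ℝ)+1) * kg γ (p-1) (gegenbauer p (m+1)) t)) t := by
  have h0 := one_sub_sq_pos ht
  have ha0 : 0 < arccos t := arccos_pos' ht.2
  have hΨ : HasDerivAt (fun x => (1 - x^2) ^ p * (gegenbauer p m).eval x)
      (p * (1-t^2) ^ (p-1) * (-2*t) * (gegenbauer p m).eval t
        + (1-t^2) ^ p * (Polynomial.derivative (gegenbauer p m)).eval t) t :=
    (hasDerivAt_weight ht).mul ((gegenbauer p m).hasDerivAt t)
  have ha := (Real.hasDerivAt_arccos ht.1.ne' ht.2.ne).rpow_const (p := γ) (Or.inl ha0.ne')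
  have hH := ha.mul hΨ
  convert hH using 1
  · rfl
  · rfl
  · rfl
  have hsq := inv_sqrt_eq ht
  have e2 : (1-t^2) ^ p = (1-t^2) ^ (p - 1) * (1-t^2) := by
    rw [← Real.rpow_add_one h0.ne' (p-1)]
    congr 1; ring
  have e1 : (1 / Real.sqrt (1-t^2)) * ((1-t^2) ^ (p-1) * (1-t^2)) = (1-t^2) ^ (p - 1/2) := by
    rw [hsq, ← Real.rpow_add_one h0.ne' (p-1), ← Real.rpow_add h0]
    congr 1; ring
  have hkey := keyK p m t
  simp only [Geg.G, Geg.D] at hkey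
  unfold kg
  rw [e2]
  simp only [Polynomial.eval_mul, Polynomial.eval_X]
  linear_combination ((-γ) * Real.arccos t ^ (γ-1) * (gegenbauer p m).eval t) * e1.symm
    - (Real.arccos t ^ γ * ((1-t^2) ^ (p-1))) * hkey

lemma SP_step (l δ : ℝ) (n : ℕ) (hl : 0 < l) (hδ1 : -(2*l+1) < δ) (hδ2 : δ ≤ 0)
    (hK : 0 < Kint (l+1) (δ-1) n) : 0 < Jint l δ (n+1) := by
  have hcpos : 0 < (if δ = 0 then (1:ℝ) else -δ) := by
    split_ifs with h
    · norm_num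
    · rcases lt_or_eq_of_le hδ2 with h' | h'
      · linarith
      · exact absurd h' h
  have hκpos : 0 < ((n:ℝ)+1) * ((n:ℝ)+2*l+1) / (2*l) := by positivity
  have hkint : IntervalIntegrable (kg (δ-1) (l+1-1) (gegenbauer (l+1) n)) volume (-1) 1 :=
    kg_integrable' _ _ _ (by linarith) (by linarith)
  have hjint := jf_integrable l δ (n+1) hl hδ1 hδ2
  obtain ⟨C, hC0, hC⟩ := poly_bound (gegenbauer (l+1) n)
  have he : (0:ℝ) < (if δ = 0 then (-(1/2):ℝ) else δ/2) + (l + 1/2) := by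
    split_ifs <;> linarith
  have hbound : ∀ t ∈ Ioo (-1:ℝ) 1,
      |F δ t * ((1 - t^2) ^ (l + 1/2) * (gegenbauer (l+1) n).eval t)|
        ≤ ((if δ = 0 then π else 1) * C) *
            (1 - t^2) ^ ((if δ = 0 then (-(1/2):ℝ) else δ/2) + (l + 1/2)) := by
    intro t ht
    have h0 := one_sub_sq_pos ht
    have hFp := F_pos (δ := δ) ht
    have hF := F_le ht hδ2
    have hWp : (0:ℝ) < (1-t^2) ^ (l+1/2) := Real.rpow_pos_of_pos h0 _
    rw [abs_mul, abs_of_pos hFp, abs_mul, abs_of_pos hWp]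
    calc F δ t * ((1-t^2) ^ (l+1/2) * |(gegenbauer (l+1) n).eval t|)
        ≤ ((if δ = 0 then π else 1) * (1 - t^2) ^ (if δ = 0 then (-(1/2):ℝ) else δ/2))
            * ((1-t^2) ^ (l+1/2) * C) := by
          apply mul_le_mul hF (mul_le_mul_of_nonneg_left (hC t ht) hWp.le) (by positivity)
          positivity
      _ = ((if δ = 0 then π else 1) * C) *
            ((1 - t^2) ^ (if δ = 0 then (-(1/2):ℝ) else δ/2) * (1-t^2) ^ (l + 1/2)) := by ring
      _ = _ := by rw [← Real.rpow_add h0]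
  obtain ⟨h0t, h1t⟩ := tendsto_endpoints _ _ _ he hbound
  have hzero : ∫ t in (-1:ℝ)..1,
      ((if δ = 0 then (1:ℝ) else -δ) * kg (δ-1) (l+1-1) (gegenbauer (l+1) n) t
        - (((n:ℝ)+1) * ((n:ℝ)+2*l+1) / (2*l)) * jf l δ (n+1) t) = 0 := by
    apply integral_deriv_zero
      (fun x => F δ x * ((1 - x^2) ^ (l + 1/2) * (gegenbauer (l+1) n).eval x)) _
      (fun t ht => hasDerivAt_HJ hl n ht)
      ((hkint.const_mul _).sub (hjint.const_mul _)) h0t h1t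
  rw [intervalIntegral.integral_sub (hkint.const_mul _) (hjint.const_mul _),
    intervalIntegral.integral_const_mul, intervalIntegral.integral_const_mul] at hzero
  have hKe : Kint (l+1) (δ-1) n = ∫ t in (-1:ℝ)..1, kg (δ-1) (l+1-1) (gegenbauer (l+1) n) t := rfl
  have hJe : Jint l δ (n+1) = ∫ t in (-1:ℝ)..1, jf l δ (n+1) t := rfl
  rw [← hKe, ← hJe] at hzero
  have hpos : 0 < (if δ = 0 then (1:ℝ) else -δ) * Kint (l+1) (δ-1) n := mul_pos hcpos hK
  nlinarith [hzero, mul_pos hκpos (mul_pos hcpos hK)]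

lemma HK_tendsto (p γ : ℝ) (m : ℕ) (hγ : γ ≤ 0) (hs : 0 < γ + 2*p) :
    Tendsto (fun x => Real.arccos x ^ γ * ((1 - x^2) ^ p * (gegenbauer p m).eval x))
      (𝓝[>] (-1:ℝ)) (𝓝 0) ∧
    Tendsto (fun x => Real.arccos x ^ γ * ((1 - x^2) ^ p * (gegenbauer p m).eval x))
      (𝓝[<] (1:ℝ)) (𝓝 0) := by
  obtain ⟨C, hC0, hC⟩ := poly_bound (gegenbauer p m)
  apply tendsto_endpoints _ C (γ/2 + p) (by linarith)
  intro t ht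
  have h0 := one_sub_sq_pos ht
  have ha := arccos_pos' ht.2
  have haw : (0:ℝ) < arccos t ^ γ := Real.rpow_pos_of_pos ha γ
  have hWp : (0:ℝ) < (1-t^2) ^ p := Real.rpow_pos_of_pos h0 p
  rw [abs_mul, abs_of_pos haw, abs_mul, abs_of_pos hWp]
  calc arccos t ^ γ * ((1-t^2) ^ p * |(gegenbauer p m).eval t|)
      ≤ (1-t^2) ^ (γ/2) * ((1-t^2) ^ p * C) := by
        apply mul_le_mul (arccos_rpow_le ht hγ)
          (mul_le_mul_of_nonneg_left (hC t ht) hWp.le) (by positivity) (by positivity)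
    _ = C * ((1-t^2) ^ (γ/2) * (1-t^2) ^ p) := by ring
    _ = _ := by rw [← Real.rpow_add h0]

lemma TP_step1 (p γ : ℝ) (hp : 0 < p) (hγ : γ < 0) (hs : 0 < γ + 2*p)
    (hJ : 0 < Jint p (γ-1) 0) : 0 < Kint p γ 1 := by
  have hJint : IntervalIntegrable (kg (γ-1) (p - 1/2) (gegenbauer p 0)) volume (-1) 1 :=
    kg_integrable' _ _ _ (by linarith) (by linarith)
  have hMint : IntervalIntegrable (kg γ (p-1) (Polynomial.X * gegenbauer p 0)) volume (-1) 1 :=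
    kg_integrable' _ _ _ hγ.le (by linarith)
  have hK1int : IntervalIntegrable (kg γ (p-1) (gegenbauer p 1)) volume (-1) 1 :=
    kg_integrable' _ _ _ hγ.le (by linarith)
  obtain ⟨h0t, h1t⟩ := HK_tendsto p γ 0 hγ.le hs
  have hzero : ∫ t in (-1:ℝ)..1,
      ((-γ) * kg (γ-1) (p - 1/2) (gegenbauer p 0) t
        + (((0:ℕ):ℝ) * kg γ (p-1) (Polynomial.X * gegenbauer p 0) t
          - (((0:ℕ):ℝ)+1) * kg γ (p-1) (gegenbauer p (0+1)) t)) = 0 := by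
    apply integral_deriv_zero
      (fun x => Real.arccos x ^ γ * ((1 - x^2) ^ p * (gegenbauer p 0).eval x)) _
      (fun t ht => hasDerivAt_HK 0 ht)
      ((hJint.const_mul _).add ((hMint.const_mul _).sub (hK1int.const_mul _))) h0t h1t
  rw [intervalIntegral.integral_add (hJint.const_mul _) ((hMint.const_mul _).sub (hK1int.const_mul _)),
    intervalIntegral.integral_sub (hMint.const_mul _) (hK1int.const_mul _),
    intervalIntegral.integral_const_mul, intervalIntegral.integral_const_mul,
    intervalIntegral.integral_const_mul] at hzero
  have hJe : Jint p (γ-1) 0 = ∫ t in (-1:ℝ)..1, kg (γ-1) (p - 1/2) (gegenbauer p 0) t := by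
    rw [Jint, jf_eq_kg (ne_of_lt (by linarith : γ - 1 < 0))]
  have hKe : Kint p γ 1 = ∫ t in (-1:ℝ)..1, kg γ (p-1) (gegenbauer p (0+1)) t := rfl
  rw [← hJe, ← hKe] at hzero
  push_cast at hzero
  nlinarith [mul_pos (neg_pos.2 hγ) hJ]

lemma TP_step2 (p γ : ℝ) (j : ℕ) (hp : 0 < p) (hγ : γ < 0) (hs : 0 < γ + 2*p)
    (hJ : 0 < Jint p (γ-1) (j+1)) (hK0 : 0 < Kint p γ j) : 0 < Kint p γ (j+2) := by
  have hJint : IntervalIntegrable (kg (γ-1) (p - 1/2) (gegenbauer p (j+1))) volume (-1) 1 :=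
    kg_integrable' _ _ _ (by linarith) (by linarith)
  have hMint : IntervalIntegrable (kg γ (p-1) (Polynomial.X * gegenbauer p (j+1))) volume (-1) 1 :=
    kg_integrable' _ _ _ hγ.le (by linarith)
  have hK2int : IntervalIntegrable (kg γ (p-1) (gegenbauer p (j+2))) volume (-1) 1 :=
    kg_integrable' _ _ _ hγ.le (by linarith)
  have hK0int : IntervalIntegrable (kg γ (p-1) (gegenbauer p j)) volume (-1) 1 :=
    kg_integrable' _ _ _ hγ.le (by linarith)
  obtain ⟨h0t, h1t⟩ := HK_tendsto p γ (j+1) hγ.le hs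
  have hzero : ∫ t in (-1:ℝ)..1,
      ((-γ) * kg (γ-1) (p - 1/2) (gegenbauer p (j+1)) t
        + ((((j+1:ℕ)):ℝ) * kg γ (p-1) (Polynomial.X * gegenbauer p (j+1)) t
          - ((((j+1:ℕ)):ℝ)+1) * kg γ (p-1) (gegenbauer p ((j+1)+1)) t)) = 0 := by
    apply integral_deriv_zero
      (fun x => Real.arccos x ^ γ * ((1 - x^2) ^ p * (gegenbauer p (j+1)).eval x)) _
      (fun t ht => hasDerivAt_HK (j+1) ht)
      ((hJint.const_mul _).add ((hMint.const_mul _).sub (hK2int.const_mul _))) h0t h1t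
  rw [intervalIntegral.integral_add (hJint.const_mul _) ((hMint.const_mul _).sub (hK2int.const_mul _)),
    intervalIntegral.integral_sub (hMint.const_mul _) (hK2int.const_mul _),
    intervalIntegral.integral_const_mul, intervalIntegral.integral_const_mul,
    intervalIntegral.integral_const_mul] at hzero
  have hJe : Jint p (γ-1) (j+1) = ∫ t in (-1:ℝ)..1, kg (γ-1) (p - 1/2) (gegenbauer p (j+1)) t := by
    rw [Jint, jf_eq_kg (ne_of_lt (by linarith : γ - 1 < 0))]
  have hKe : Kint p γ (j+2) = ∫ t in (-1:ℝ)..1, kg γ (p-1) (gegenbauer p ((j+1)+1)) t := rfl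
  have hKe0 : Kint p γ j = ∫ t in (-1:ℝ)..1, kg γ (p-1) (gegenbauer p j) t := rfl
  rw [← hJe, ← hKe] at hzero
  -- recurrence for the middle integral
  have hM : 2*((j:ℝ)+1+p) * (∫ t in (-1:ℝ)..1, kg γ (p-1) (Polynomial.X * gegenbauer p (j+1)) t)
      = ((j:ℝ)+2) * Kint p γ (j+2) + ((j:ℝ)+2*p) * Kint p γ j := by
    rw [hKe, hKe0, ← intervalIntegral.integral_const_mul, ← intervalIntegral.integral_const_mul,
      ← intervalIntegral.integral_const_mul,
      ← intervalIntegral.integral_add ((hK2int).const_mul _) ((hK0int).const_mul _)]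
    apply intervalIntegral.integral_congr
    intro t _
    have hrec := Geg.G_rec p j t
    simp only [Geg.G] at hrec
    show 2*((j:ℝ)+1+p) * (Real.arccos t ^ γ * (Polynomial.X * gegenbauer p (j+1)).eval t
      * (1-t^2)^(p-1)) = _
    simp only [Polynomial.eval_mul, Polynomial.eval_X]
    unfold kg
    linear_combination (-(Real.arccos t ^ γ * (1-t^2)^(p-1))) * hrec
  push_cast at hzero
  have key : ((j:ℝ)+2)*((j:ℝ)+1+2*p)*Kint p γ (j+2)
      = 2*((j:ℝ)+1+p)*(-γ)*Jint p (γ-1) (j+1) + ((j:ℝ)+1)*((j:ℝ)+2*p)*Kint p γ j := by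
    linear_combination (-2*((j:ℝ)+1+p))*hzero + ((j:ℝ)+1)*hM
  have hrhs : 0 < 2*((j:ℝ)+1+p)*(-γ)*Jint p (γ-1) (j+1) + ((j:ℝ)+1)*((j:ℝ)+2*p)*Kint p γ j := by
    have c1 : (0:ℝ) < 2*((j:ℝ)+1+p) := by positivity
    have c2 : (0:ℝ) < -γ := by linarith
    have c3 : (0:ℝ) < ((j:ℝ)+1)*((j:ℝ)+2*p) := by positivity
    have h1 := mul_pos (mul_pos c1 c2) hJ
    have h2 := mul_pos c3 hK0
    linarith
  have c4 : (0:ℝ) < ((j:ℝ)+2)*((j:ℝ)+1+2*p) := by positivity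
  by_contra hcon
  push_neg at hcon
  nlinarith [key, hrhs, mul_nonpos_of_nonneg_of_nonpos c4.le hcon]
lemma main_induction : ∀ n : ℕ,
    (∀ l δ : ℝ, 0 < l → -(2*l+1) < δ → δ ≤ 0 → 0 < Jint l δ n) ∧
    (∀ p γ : ℝ, 0 < p → γ < 0 → 0 < γ + 2*p → 0 < Kint p γ n) := by
  intro n
  induction n using Nat.strong_induction_on with
  | _ n IH =>
    constructor
    · intro l δ hl h1 h2
      match n with
      | 0 => exact Jint_zero_pos l δ hl h1 h2
      | Nat.succ m =>
        exact SP_step l δ m hl h1 h2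
          ((IH m (Nat.lt_succ_self m)).2 (l+1) (δ-1) (by linarith) (by linarith) (by linarith))
    · intro p γ hp h1 h2
      match n with
      | 0 => exact Kint_zero_pos p γ hp h1 h2
      | 1 =>
        exact TP_step1 p γ hp h1 h2
          ((IH 0 (by norm_num)).1 p (γ-1) hp (by linarith) (by linarith))
      | Nat.succ (Nat.succ j) =>
        exact TP_step2 p γ j hp h1 h2
          ((IH (j+1) (by omega)).1 p (γ-1) hp (by linarith) (by linarith))
          ((IH j (by omega)).2 p γ hp h1 h2)
end GegMain

/-- Let `λ > 0` and `-(2λ+1) < δ ≤ 0`, with `F_δ(t) = (arccos t)^δ` for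
`δ ≠ 0` and `F_0(t) = log (π / arccos t)`.  Then for every `n ≥ 0`,
`∫_{-1}^1 F_δ(t) C_n^λ(t) (1-t^2)^(λ-1/2) dt > 0`. -/
theorem gegenbauer_coeff_neg_power_pos (l δ : ℝ) (hl : 0 < l)
    (hδ : δ ∈ Set.Ioc (-(2 * l + 1)) 0) (n : ℕ) :
    0 < ∫ t in (-1:ℝ)..1,
        (if δ = 0 then Real.log (Real.pi / Real.arccos t) else (Real.arccos t) ^ δ) *
          (gegenbauer l n).eval t * (1 - t^2) ^ (l - 1/2) := by
  have h := (GegMain.main_induction n).1 l δ hl hδ.1 hδ.2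
  simpa [GegMain.Jint, GegMain.jf, GegAn.F] using h
end

section
/- Let f ∈ L^1(𝕋) have Fourier series Σ_{n∈ℤ} i c_n e^{2πinx} with c_n = -c_{-n} ≥ 0 for all n > 0 (a sine series with nonnegative coefficients). Then Σ_{n>0} c_n/n < ∞. -/
open MeasureTheory

open Finset Real

private lemma sin_le_n_sin (x : ℝ) : ∀ n : ℕ, |Real.sin (n * x)| ≤ n * |Real.sin x| := by
  intro n
  induction n with
  | zero => simp
  | succ n ih =>
    have : ((n:ℝ)+1) * x = n * x + x := by ring
    push_cast
    rw [this, Real.sin_add]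
    calc |Real.sin (n*x) * Real.cos x + Real.cos (n*x) * Real.sin x|
        ≤ |Real.sin (n*x) * Real.cos x| + |Real.cos (n*x) * Real.sin x| := abs_add_le _ _
      _ ≤ |Real.sin (n*x)| * 1 + 1 * |Real.sin x| := by
          rw [abs_mul, abs_mul]
          have := Real.abs_cos_le_one x
          have := Real.abs_cos_le_one ((n:ℝ)*x)
          have := abs_nonneg (Real.sin ((n:ℝ)*x))
          have := abs_nonneg (Real.sin x)
          nlinarith
      _ ≤ n * |Real.sin x| + 1 * |Real.sin x| := by
          have := abs_nonneg (Real.sin x); nlinarith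
      _ = ((n:ℝ)+1) * |Real.sin x| := by ring

private lemma dirichlet_identity (x : ℝ) (N : ℕ) :
    2 * Real.sin (x/2) * ∑ n ∈ range N, Real.sin ((n+1) * x)
      = Real.cos (x/2) - Real.cos ((N + 1/2) * x) := by
  induction N with
  | zero =>
    rw [Finset.range_zero, Finset.sum_empty, mul_zero,
      show ((0:ℕ):ℝ) + 1/2 = 1/2 by norm_num, show (1:ℝ)/2 * x = x/2 by ring, sub_self]
  | succ N ih =>
    rw [Finset.sum_range_succ, mul_add, ih]
    have : Real.cos ((N + 1/2) * x) - Real.cos ((N + 1 + 1/2) * x)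
        = 2 * Real.sin (x/2) * Real.sin ((N+1) * x) := by
      rw [Real.cos_sub_cos]
      have h1 : ((N + 1/2) * x + (N + 1 + 1/2) * x) / 2 = ((N:ℝ)+1) * x := by ring
      have h2 : ((N + 1/2) * x - (N + 1 + 1/2) * x) / 2 = -(x/2) := by ring
      rw [h1, h2, Real.sin_neg]
      ring
    push_cast
    push_cast at this
    linarith [this]

private lemma dirichlet_bound {x : ℝ} (hs : Real.sin (x/2) ≠ 0) (N : ℕ) :
    |∑ n ∈ range N, Real.sin ((n+1) * x)| ≤ 1 / |Real.sin (x/2)| := by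
  have h := dirichlet_identity x N
  have hs' : 0 < |Real.sin (x/2)| := abs_pos.mpr hs
  rw [le_div_iff₀ hs']
  have : |2 * Real.sin (x/2) * ∑ n ∈ range N, Real.sin ((n+1) * x)| ≤ 2 := by
    rw [h]
    calc |Real.cos (x/2) - Real.cos ((N + 1/2) * x)|
        ≤ |Real.cos (x/2)| + |Real.cos ((N + 1/2) * x)| := abs_sub _ _
      _ ≤ 1 + 1 := add_le_add (Real.abs_cos_le_one _) (Real.abs_cos_le_one _)
      _ = 2 := by norm_num
  rw [abs_mul, abs_mul, abs_two] at this
  nlinarith [abs_nonneg (∑ n ∈ range N, Real.sin ((n+1) * x))]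

private lemma abel_aux {x B : ℝ} (hB : 0 ≤ B)
    (hD : ∀ k : ℕ, |∑ n ∈ range k, Real.sin ((n+1) * x)| ≤ B) (M : ℕ) :
    ∀ N, M ≤ N →
      |∑ n ∈ Finset.Ico M N, Real.sin ((n+1) * x) / (n+1)
        - (∑ n ∈ range N, Real.sin ((n+1) * x)) / (N+1)
        + (∑ n ∈ range M, Real.sin ((n+1) * x)) / (M+1)|
      ≤ B * (1/(M+1) - 1/(N+1)) := by
  intro N
  induction N with
  | zero =>
    intro hM
    interval_cases M
    simp
  | succ N ih =>
    intro hM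
    rcases Nat.lt_or_ge M (N+1) with h | h
    · have hMN : M ≤ N := Nat.lt_succ_iff.mp h
      have key := ih hMN
      have hsum : ∑ n ∈ Finset.Ico M (N+1), Real.sin ((n+1) * x) / (n+1)
          = (∑ n ∈ Finset.Ico M N, Real.sin ((n+1) * x) / (n+1))
            + Real.sin ((N+1) * x) / (N+1) := by
        rw [Finset.sum_Ico_succ_top hMN]
      have hDrec : (∑ n ∈ range (N+1), Real.sin ((n+1) * x))
          = (∑ n ∈ range N, Real.sin ((n+1) * x)) + Real.sin ((N+1) * x) := by
        rw [Finset.sum_range_succ]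
      set DN := ∑ n ∈ range N, Real.sin ((n+1) * x) with hDN
      set DN1 := ∑ n ∈ range (N+1), Real.sin ((n+1) * x) with hDN1
      set DM := ∑ n ∈ range M, Real.sin ((n+1) * x) with hDM
      have e1 : ∑ n ∈ Finset.Ico M (N+1), Real.sin ((n+1) * x) / (n+1)
            - DN1 / (N+1+1) + DM / (M+1)
          = (∑ n ∈ Finset.Ico M N, Real.sin ((n+1) * x) / (n+1)
              - DN / (N+1) + DM / (M+1))
            + DN1 * (1/((N:ℝ)+1) - 1/((N:ℝ)+1+1)) := by
        rw [hsum]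
        have hN1 : ((N:ℝ)+1) ≠ 0 := by positivity
        have : Real.sin ((N+1) * x) = DN1 - DN := by rw [hDrec]; ring
        push_cast
        rw [this]
        generalize (∑ n ∈ Finset.Ico M N, Real.sin ((n+1) * x) / (n+1)) = S
        field_simp
        ring
      push_cast
      push_cast at e1 key
      rw [e1]
      have hb2 : |DN1 * (1/((N:ℝ)+1) - 1/((N:ℝ)+1+1))|
          ≤ B * (1/((N:ℝ)+1) - 1/((N:ℝ)+1+1)) := by
        rw [abs_mul]
        have h1 : (0:ℝ) ≤ 1/((N:ℝ)+1) - 1/((N:ℝ)+1+1) := by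
          rw [sub_nonneg]
          gcongr <;> linarith
        rw [abs_of_nonneg h1]
        exact mul_le_mul_of_nonneg_right (hD (N+1) |>.trans_eq (by norm_num) |>.trans_eq rfl
          |> fun h => by push_cast at h ⊢; convert h using 2 <;> norm_num) h1
      calc _ ≤ |∑ n ∈ Finset.Ico M N, Real.sin ((↑n+1) * x) / (↑n+1)
              - DN / (↑N+1) + DM / (↑M+1)|
            + |DN1 * (1/((N:ℝ)+1) - 1/((N:ℝ)+1+1))| := abs_add_le _ _
        _ ≤ B * (1/(↑M+1) - 1/(↑N+1)) + B * (1/((N:ℝ)+1) - 1/((N:ℝ)+1+1)) :=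
            add_le_add key hb2
        _ = B * (1/(↑M+1) - 1/(↑N+1+1)) := by ring
    · have : M = N+1 := le_antisymm hM h
      subst this
      simp

private lemma sin_partial_bound (x : ℝ) (N : ℕ) :
    |∑ n ∈ range N, Real.sin ((n+1) * x) / (n+1)| ≤ 5 := by
  rcases eq_or_ne (Real.sin (x/2)) 0 with hs | hs
  · -- x is a multiple of 2π, every term vanishes
    obtain ⟨k, hk⟩ := Real.sin_eq_zero_iff.mp hs
    have hterm : ∀ n : ℕ, Real.sin ((n+1) * x) = 0 := by
      intro n
      have : ((n:ℝ)+1) * x = ((2 * (n+1) * k : ℤ) : ℝ) * π := by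
        push_cast
        have : x = 2 * (k * π) := by rw [hk]; ring
        rw [this]; ring
      rw [this, Real.sin_int_mul_pi]
    rw [Finset.sum_congr rfl fun n _ => by rw [hterm n, zero_div]]
    simp
  · set s := |Real.sin (x/2)| with hsdef
    have hs0 : 0 < s := abs_pos.mpr hs
    set B := 1 / s with hBdef
    have hB0 : 0 < B := by positivity
    have hs1 : s ≤ 1 := abs_sin_le_one _
    have hB1 : 1 ≤ B := by rw [hBdef, le_div_iff₀ hs0, one_mul]; exact hs1
    have hD : ∀ k : ℕ, |∑ n ∈ range k, Real.sin ((n+1) * x)| ≤ B := dirichlet_bound hs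
    have hsinx : |Real.sin x| ≤ 2 * s := by
      have : Real.sin x = 2 * Real.sin (x/2) * Real.cos (x/2) := by
        rw [show x = 2 * (x/2) by ring, Real.sin_two_mul]; ring_nf
      rw [this, abs_mul, abs_mul, abs_two]
      calc 2 * |Real.sin (x/2)| * |Real.cos (x/2)| ≤ 2 * s * 1 := by
            rw [hsdef]; gcongr; exact Real.abs_cos_le_one _
        _ = 2 * s := by ring
    set M := ⌊B⌋₊ with hMdef
    have hMB : (M:ℝ) ≤ B := Nat.floor_le hB0.le
    have hBM : B < (M:ℝ) + 1 := Nat.lt_floor_add_one B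
    -- head bound: for any K ≤ M
    have head : ∀ K : ℕ, K ≤ M → |∑ n ∈ range K, Real.sin ((n+1) * x) / (n+1)| ≤ 2 := by
      intro K hK
      calc |∑ n ∈ range K, Real.sin ((n+1) * x) / (n+1)|
          ≤ ∑ n ∈ range K, |Real.sin ((n+1) * x) / (n+1)| := Finset.abs_sum_le_sum_abs _ _
        _ ≤ ∑ n ∈ range K, 2 * s := by
            apply Finset.sum_le_sum
            intro n _
            rw [abs_div, abs_of_pos (by positivity : (0:ℝ) < (n:ℝ)+1)]
            rw [div_le_iff₀ (by positivity : (0:ℝ) < (n:ℝ)+1)]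
            calc |Real.sin (((n:ℝ)+1) * x)| ≤ ((n:ℝ)+1) * |Real.sin x| := by
                  have := sin_le_n_sin x (n+1); push_cast at this; exact this
              _ ≤ ((n:ℝ)+1) * (2 * s) := by gcongr
              _ = 2 * s * ((n:ℝ)+1) := by ring
        _ = K * (2 * s) := by rw [Finset.sum_const, Finset.card_range, nsmul_eq_mul]
        _ ≤ B * (2 * s) := by gcongr; exact_mod_cast hMB.trans' (by exact_mod_cast hK)
        _ = 2 := by rw [hBdef]; field_simp
    rcases le_or_gt N M with hNM | hMN
    · exact (head N hNM).trans (by norm_num)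
    · have hMN' : M ≤ N := hMN.le
      have hsplit : ∑ n ∈ range N, Real.sin ((n+1) * x) / (n+1)
          = (∑ n ∈ range M, Real.sin ((n+1) * x) / (n+1))
            + ∑ n ∈ Finset.Ico M N, Real.sin ((n+1) * x) / (n+1) := by
        rw [Finset.range_eq_Ico, ← Finset.sum_Ico_consecutive _ (Nat.zero_le M) hMN',
          ← Finset.range_eq_Ico]
      have habel := abel_aux hB0.le hD M N hMN'
      have hBM1 : B / ((M:ℝ)+1) ≤ 1 := by
        rw [div_le_one (by positivity)]; linarith
      have htail : |∑ n ∈ Finset.Ico M N, Real.sin ((n+1) * x) / (n+1)| ≤ 3 := by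
        have e : ∑ n ∈ Finset.Ico M N, Real.sin ((n+1) * x) / (n+1)
            = (∑ n ∈ Finset.Ico M N, Real.sin ((n+1) * x) / (n+1)
                - (∑ n ∈ range N, Real.sin ((n+1) * x)) / (N+1)
                + (∑ n ∈ range M, Real.sin ((n+1) * x)) / (M+1))
              + (∑ n ∈ range N, Real.sin ((n+1) * x)) / (N+1)
              - (∑ n ∈ range M, Real.sin ((n+1) * x)) / (M+1) := by ring
        rw [e]
        have h1 : |(∑ n ∈ range N, Real.sin ((n+1) * x)) / ((N:ℝ)+1)| ≤ B / ((M:ℝ)+1) := by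
          rw [abs_div, abs_of_pos (by positivity : (0:ℝ) < (N:ℝ)+1)]
          apply div_le_div₀ (by positivity) (hD N) (by positivity)
          have : (M:ℝ) ≤ N := by exact_mod_cast hMN'
          linarith
        have h2 : |(∑ n ∈ range M, Real.sin ((n+1) * x)) / ((M:ℝ)+1)| ≤ B / ((M:ℝ)+1) := by
          rw [abs_div, abs_of_pos (by positivity : (0:ℝ) < (M:ℝ)+1)]
          exact div_le_div₀ (by positivity) (hD M) (by positivity) le_rfl
        have h3 : B * (1/((M:ℝ)+1) - 1/((N:ℝ)+1)) ≤ B / ((M:ℝ)+1) := by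
          rw [mul_sub]
          have : 0 ≤ B * (1/((N:ℝ)+1)) := by positivity
          have e2 : B * (1/((M:ℝ)+1)) = B / ((M:ℝ)+1) := by ring
          linarith
        calc |_ + (∑ n ∈ range N, Real.sin ((n+1) * x)) / ((N:ℝ)+1)
              - (∑ n ∈ range M, Real.sin ((n+1) * x)) / ((M:ℝ)+1)|
            ≤ |_ + (∑ n ∈ range N, Real.sin ((n+1) * x)) / ((N:ℝ)+1)|
              + |(∑ n ∈ range M, Real.sin ((n+1) * x)) / ((M:ℝ)+1)| := abs_sub _ _
          _ ≤ (|∑ n ∈ Finset.Ico M N, Real.sin ((n+1) * x) / (n+1)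
                - (∑ n ∈ range N, Real.sin ((n+1) * x)) / (N+1)
                + (∑ n ∈ range M, Real.sin ((n+1) * x)) / (M+1)|
              + |(∑ n ∈ range N, Real.sin ((n+1) * x)) / ((N:ℝ)+1)|)
              + |(∑ n ∈ range M, Real.sin ((n+1) * x)) / ((M:ℝ)+1)| := by
              gcongr; exact abs_add_le _ _
          _ ≤ (B * (1/((M:ℝ)+1) - 1/((N:ℝ)+1)) + B / ((M:ℝ)+1)) + B / ((M:ℝ)+1) :=
              add_le_add (add_le_add habel h1) h2
          _ ≤ 3 := by linarith [h3.trans hBM1]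
      calc |∑ n ∈ range N, Real.sin ((n+1) * x) / (n+1)|
          ≤ |∑ n ∈ range M, Real.sin ((n+1) * x) / (n+1)|
            + |∑ n ∈ Finset.Ico M N, Real.sin ((n+1) * x) / (n+1)| := by
            rw [hsplit]; exact abs_add_le _ _
        _ ≤ 2 + 3 := add_le_add (head M le_rfl) htail
        _ = 5 := by norm_num

/-- If `f ∈ L¹(𝕋)` (real-valued) has Fourier series
`∑_{n ∈ ℤ} i c_n e^{2πinx}` with `c_{-n} = -c_n` and `c_n ≥ 0` for `n > 0`
(a sine series with nonnegative coefficients), then `∑_{n>0} c_n / n < ∞`. -/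
theorem sine_series_nonneg_coeff_summable
    (f : AddCircle (1 : ℝ) → ℂ) (hf : Integrable f) (hreal : ∀ x, (f x).im = 0)
    (c : ℤ → ℝ)
    (hc : ∀ n : ℤ, fourierCoeff f n = Complex.I * (c n : ℂ))
    (hsym : ∀ n : ℤ, c (-n) = -c n)
    (hpos : ∀ n : ℤ, 0 < n → 0 ≤ c n) :
    Summable (fun n : ℕ => c (n + 1) / ((n : ℝ) + 1)) := by
  have hvol : (volume : Measure (AddCircle (1:ℝ))) = AddCircle.haarAddCircle := by
    rw [AddCircle.volume_eq_smul_haarAddCircle]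
    simp
  have hfμ : Integrable f (AddCircle.haarAddCircle) := by rwa [hvol] at hf
  set μ := (AddCircle.haarAddCircle : Measure (AddCircle (1:ℝ))) with hμdef
  -- Step 1: formula for the coefficients
  have key : ∀ m : ℤ, c m = ∫ t, -((fourier m t).im * (f t).re) ∂μ := by
    intro m
    have hint : Integrable (fun t => fourier (-m) t * f t) μ :=
      hfμ.bdd_mul (c := 1) (map_continuous (fourier (-m))).aestronglyMeasurable
        (Filter.Eventually.of_forall fun t => le_of_eq (Circle.norm_coe _))
    have h1 : fourierCoeff f m = ∫ t, fourier (-m) t * f t ∂μ := rfl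
    have h2 : c m = (fourierCoeff f m).im := by
      rw [hc m]; simp
    rw [h2, h1]
    have h3 := integral_im hint
    simp only [RCLike.im_to_complex] at h3
    rw [← h3]
    congr 1
    funext t
    have h4 : (fourier (-m) t).im = -(fourier m t).im := by
      rw [fourier_neg]; exact Complex.conj_im _
    rw [Complex.mul_im, hreal t, h4]
    ring
  -- Step 2: the kernel and its bound
  have hKbound : ∀ (N : ℕ) (t : AddCircle (1:ℝ)),
      |∑ n ∈ Finset.range N, -((fourier ((n:ℤ)+1) t).im) / ((n:ℝ)+1)| ≤ 5 := by
    intro N t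
    induction t using QuotientAddGroup.induction_on with
    | H x =>
      have him : ∀ n : ℕ, (fourier ((n:ℤ)+1) (x : AddCircle (1:ℝ))).im
          = Real.sin (((n:ℝ)+1) * (2 * π * x)) := by
        intro n
        rw [fourier_coe_apply]
        have harg : 2 * (π:ℂ) * Complex.I * (((n:ℤ)+1 : ℤ):ℂ) * (x:ℂ) / ((1:ℝ):ℂ)
            = ((((n:ℝ)+1) * (2 * π * x) : ℝ) : ℂ) * Complex.I := by
          push_cast
          ring
        rw [harg, Complex.exp_ofReal_mul_I_im]
      have : ∑ n ∈ Finset.range N, -((fourier ((n:ℤ)+1) (x : AddCircle (1:ℝ))).im) / ((n:ℝ)+1)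
          = -∑ n ∈ Finset.range N, Real.sin (((n:ℝ)+1) * (2 * π * x)) / ((n:ℝ)+1) := by
        rw [← Finset.sum_neg_distrib]
        exact Finset.sum_congr rfl fun n _ => by rw [him n]; ring
      rw [this, abs_neg]
      exact sin_partial_bound (2 * π * x) N
  -- integrability of the summands
  have hterm : ∀ k : ℕ, Integrable
      (fun t => (-((fourier ((k:ℤ)+1) t).im) / ((k:ℝ)+1)) * (f t).re) μ := by
    intro k
    apply (hfμ.re).bdd_mul (c := 1)
    · exact ((Complex.continuous_im.comp
        (map_continuous (fourier ((k:ℤ)+1)))).neg.div_const _).aestronglyMeasurable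
    · refine Filter.Eventually.of_forall fun t => ?_
      rw [Real.norm_eq_abs, abs_div, abs_neg, abs_of_pos (by positivity : (0:ℝ) < (k:ℝ)+1)]
      rw [div_le_one (by positivity)]
      calc |(fourier ((k:ℤ)+1) t).im| ≤ ‖(fourier ((k:ℤ)+1) t)‖ :=
            Complex.abs_im_le_norm _
        _ = 1 := Circle.norm_coe _
        _ ≤ (k:ℝ)+1 := by norm_num
  -- Step 3: partial sums as integrals
  have hsum : ∀ N : ℕ, ∑ n ∈ Finset.range N, c ((n:ℤ) + 1) / ((n:ℝ)+1)
      = ∫ t, (∑ n ∈ Finset.range N,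
          (-((fourier ((n:ℤ)+1) t).im) / ((n:ℝ)+1)) * (f t).re) ∂μ := by
    intro N
    rw [integral_finset_sum _ (fun n _ => hterm n)]
    refine Finset.sum_congr rfl fun n _ => ?_
    rw [key ((n:ℤ)+1)]
    rw [div_eq_mul_inv, ← integral_mul_const]
    congr 1
    funext t
    ring
  -- Step 4: bound and conclude
  set A := ∫ t, ‖(f t).re‖ ∂μ with hAdef
  have habs : ∀ N : ℕ, ∑ n ∈ Finset.range N, c ((n:ℤ) + 1) / ((n:ℝ)+1) ≤ 5 * A := by
    intro N
    rw [hsum N]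
    calc ∫ t, (∑ n ∈ Finset.range N,
            (-((fourier ((n:ℤ)+1) t).im) / ((n:ℝ)+1)) * (f t).re) ∂μ
        ≤ ∫ t, 5 * ‖(f t).re‖ ∂μ := by
          apply integral_mono (integrable_finset_sum _ (fun n _ => hterm n))
            ((hfμ.re.norm).const_mul 5)
          intro t
          have h1 : (∑ n ∈ Finset.range N,
              (-((fourier ((n:ℤ)+1) t).im) / ((n:ℝ)+1)) * (f t).re)
              = (∑ n ∈ Finset.range N,
                -((fourier ((n:ℤ)+1) t).im) / ((n:ℝ)+1)) * (f t).re := by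
            rw [Finset.sum_mul]
          simp only [RCLike.re_to_complex]

          rw [h1]
          calc (∑ n ∈ Finset.range N, -((fourier ((n:ℤ)+1) t).im) / ((n:ℝ)+1)) * (f t).re
              ≤ |(∑ n ∈ Finset.range N, -((fourier ((n:ℤ)+1) t).im) / ((n:ℝ)+1)) * (f t).re| :=
                le_abs_self _
            _ = |∑ n ∈ Finset.range N, -((fourier ((n:ℤ)+1) t).im) / ((n:ℝ)+1)| * |(f t).re| := 
                abs_mul _ _
            _ ≤ 5 * ‖(f t).re‖ := by
                rw [Real.norm_eq_abs]
                exact mul_le_mul_of_nonneg_right (hKbound N t) (abs_nonneg _)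
      _ = 5 * A := by rw [hAdef, integral_const_mul]
  apply summable_of_sum_range_le (c := 5 * A)
  · intro n
    apply div_nonneg (hpos ((n:ℤ)+1) (by positivity)) (by positivity)
  · exact habs
end
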